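/- arXiv:1511.04251 — 11 statements merged into one kernel-verified Lean document; each statement's English description precedes it below -/
import Mathlib

section
/- Let ε1, ε2 ∈ {−1,1} and let δ1, δ2 be arbitrary real constants (integrable or non-integrable case). Let a, b, c, d be real numbers with ad − bc = 1, and let (ψ̃, w̃) be a smooth solution of the DS system on ℝ³. Define, for all (t,x,y) with ct + d ≠ 0, ψ(t,x,y) = (ct+d)^{−1} exp[i c(x² + ε1 y²)/(4(ct+d))] ψ̃((at+b)/(ct+d), x/(ct+d), y/(ct+d)) and w(t,x,y) = (ct+d)^{−2} w̃((at+b)/(ct+d), x/(ct+d), y/(ct+d)). Then (ψ, w) satisfies the same DS system at every point (t,x,y) with ct + d ≠ 0. -/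
noncomputable section

/-- Partial derivative in the first (time) variable. -/
def dt3 (f : ℝ → ℝ → ℝ → ℂ) : ℝ → ℝ → ℝ → ℂ := fun t x y => deriv (fun s => f s x y) t

/-- Partial derivative in the second (x) variable. -/
def dx3 (f : ℝ → ℝ → ℝ → ℂ) : ℝ → ℝ → ℝ → ℂ := fun t x y => deriv (fun s => f t s y) x

/-- Partial derivative in the third (y) variable. -/
def dy3 (f : ℝ → ℝ → ℝ → ℂ) : ℝ → ℝ → ℝ → ℂ := fun t x y => deriv (fun s => f t x s) y

/-- Partial derivative in the second (x) variable, real-valued functions. -/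
def rx3 (f : ℝ → ℝ → ℝ → ℝ) : ℝ → ℝ → ℝ → ℝ := fun t x y => deriv (fun s => f t s y) x

/-- Partial derivative in the third (y) variable, real-valued functions. -/
def ry3 (f : ℝ → ℝ → ℝ → ℝ) : ℝ → ℝ → ℝ → ℝ := fun t x y => deriv (fun s => f t x s) y

/-- Smoothness of a complex-valued function of (t,x,y). -/
def Smooth3C (f : ℝ → ℝ → ℝ → ℂ) : Prop :=
  ContDiff ℝ (⊤ : ℕ∞) (fun p : ℝ × ℝ × ℝ => f p.1 p.2.1 p.2.2)

/-- Smoothness of a real-valued function of (t,x,y). -/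
def Smooth3R (f : ℝ → ℝ → ℝ → ℝ) : Prop :=
  ContDiff ℝ (⊤ : ℕ∞) (fun p : ℝ × ℝ × ℝ => f p.1 p.2.1 p.2.2)

/-- The Davey–Stewartson system with constants ε₁, ε₂, δ₁, δ₂ holds at the point (t,x,y):
`i ψ_t + ψ_xx + ε₁ ψ_yy = ε₂ |ψ|² ψ + ψ w`, `w_xx + δ₁ w_yy = δ₂ (|ψ|²)_yy`. -/
def DSAt (ε1 ε2 δ1 δ2 : ℝ) (ψ : ℝ → ℝ → ℝ → ℂ) (w : ℝ → ℝ → ℝ → ℝ)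
    (t x y : ℝ) : Prop :=
  Complex.I * dt3 ψ t x y + dx3 (dx3 ψ) t x y + (ε1 : ℂ) * dy3 (dy3 ψ) t x y
      = (ε2 : ℂ) * (‖ψ t x y‖)^2 * ψ t x y + ψ t x y * (w t x y : ℂ)
    ∧ rx3 (rx3 w) t x y + δ1 * ry3 (ry3 w) t x y
      = δ2 * ry3 (ry3 (fun t x y => (‖ψ t x y‖)^2)) t x y

/-- (ψ, w) is a solution of the Davey–Stewartson system everywhere. -/
def IsDSSolution (ε1 ε2 δ1 δ2 : ℝ) (ψ : ℝ → ℝ → ℝ → ℂ) (w : ℝ → ℝ → ℝ → ℝ) : Prop :=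
  ∀ t x y : ℝ, DSAt ε1 ε2 δ1 δ2 ψ w t x y

section helpers

variable {E : Type*} [NormedAddCommGroup E] [NormedSpace ℝ E]

lemma comp3_general (F : ℝ × ℝ × ℝ → E) (hF : ContDiff ℝ (⊤ : ℕ∞) F)
    {T X Y : ℝ → ℝ} {T' X' Y' s : ℝ}
    (hT : HasDerivAt T T' s) (hX : HasDerivAt X X' s) (hY : HasDerivAt Y Y' s) :
    HasDerivAt (fun r => F (T r, X r, Y r))
      (T' • (fderiv ℝ F (T s, X s, Y s) (1,0,0))
        + X' • (fderiv ℝ F (T s, X s, Y s) (0,1,0))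
        + Y' • (fderiv ℝ F (T s, X s, Y s) (0,0,1))) s := by
  have hd : Differentiable ℝ F := hF.differentiable (by simp)
  have hcurve : HasDerivAt (fun r => (T r, X r, Y r)) ((T', X', Y') : ℝ × ℝ × ℝ) s :=
    hT.prodMk (hX.prodMk hY)
  have h1 := (hd (T s, X s, Y s)).hasFDerivAt.comp_hasDerivAt s hcurve
  have hv : ((T', X', Y') : ℝ × ℝ × ℝ)
      = T' • ((1,0,0) : ℝ × ℝ × ℝ) + X' • (0,1,0) + Y' • (0,0,1) := by
    simp [Prod.ext_iff]
  rw [hv, map_add, map_add, map_smul, map_smul, map_smul] at h1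
  exact h1

lemma fderiv_e1 (f : ℝ → ℝ → ℝ → ℂ) (hf : Smooth3C f) (t x y : ℝ) :
    fderiv ℝ (fun p : ℝ × ℝ × ℝ => f p.1 p.2.1 p.2.2) (t, x, y) (1,0,0) = dt3 f t x y := by
  have h := comp3_general _ hf (hasDerivAt_id t) (hasDerivAt_const t x) (hasDerivAt_const t y)
  simp only [one_smul, zero_smul, add_zero] at h
  exact (h.deriv).symm

lemma fderiv_e2 (f : ℝ → ℝ → ℝ → ℂ) (hf : Smooth3C f) (t x y : ℝ) :
    fderiv ℝ (fun p : ℝ × ℝ × ℝ => f p.1 p.2.1 p.2.2) (t, x, y) (0,1,0) = dx3 f t x y := by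
  have h := comp3_general _ hf (hasDerivAt_const x t) (hasDerivAt_id x) (hasDerivAt_const x y)
  simp only [one_smul, zero_smul, add_zero, zero_add] at h
  exact (h.deriv).symm

lemma fderiv_e3 (f : ℝ → ℝ → ℝ → ℂ) (hf : Smooth3C f) (t x y : ℝ) :
    fderiv ℝ (fun p : ℝ × ℝ × ℝ => f p.1 p.2.1 p.2.2) (t, x, y) (0,0,1) = dy3 f t x y := by
  have h := comp3_general _ hf (hasDerivAt_const y t) (hasDerivAt_const y x) (hasDerivAt_id y)
  simp only [one_smul, zero_smul, add_zero, zero_add] at h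
  exact (h.deriv).symm

lemma comp3C (f : ℝ → ℝ → ℝ → ℂ) (hf : Smooth3C f)
    {T X Y : ℝ → ℝ} {T' X' Y' s : ℝ}
    (hT : HasDerivAt T T' s) (hX : HasDerivAt X X' s) (hY : HasDerivAt Y Y' s) :
    HasDerivAt (fun r => f (T r) (X r) (Y r))
      ((T' : ℂ) * dt3 f (T s) (X s) (Y s) + (X' : ℂ) * dx3 f (T s) (X s) (Y s)
        + (Y' : ℂ) * dy3 f (T s) (X s) (Y s)) s := by
  have h := comp3_general _ hf hT hX hY
  rw [fderiv_e1 f hf, fderiv_e2 f hf, fderiv_e3 f hf] at h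
  simpa only [Complex.real_smul] using h

lemma rfderiv_e2 (f : ℝ → ℝ → ℝ → ℝ) (hf : Smooth3R f) (t x y : ℝ) :
    fderiv ℝ (fun p : ℝ × ℝ × ℝ => f p.1 p.2.1 p.2.2) (t, x, y) (0,1,0) = rx3 f t x y := by
  have h := comp3_general _ hf (hasDerivAt_const x t) (hasDerivAt_id x) (hasDerivAt_const x y)
  simp only [one_smul, zero_smul, add_zero, zero_add] at h
  exact (h.deriv).symm

lemma rfderiv_e3 (f : ℝ → ℝ → ℝ → ℝ) (hf : Smooth3R f) (t x y : ℝ) :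
    fderiv ℝ (fun p : ℝ × ℝ × ℝ => f p.1 p.2.1 p.2.2) (t, x, y) (0,0,1) = ry3 f t x y := by
  have h := comp3_general _ hf (hasDerivAt_const y t) (hasDerivAt_const y x) (hasDerivAt_id y)
  simp only [one_smul, zero_smul, add_zero, zero_add] at h
  exact (h.deriv).symm

lemma comp3R (f : ℝ → ℝ → ℝ → ℝ) (hf : Smooth3R f) (T0 : ℝ)
    {X Y : ℝ → ℝ} {X' Y' s : ℝ}
    (hX : HasDerivAt X X' s) (hY : HasDerivAt Y Y' s) :
    HasDerivAt (fun r => f T0 (X r) (Y r))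
      (X' * rx3 f T0 (X s) (Y s) + Y' * ry3 f T0 (X s) (Y s)) s := by
  have h := comp3_general _ hf (hasDerivAt_const s T0) hX hY
  rw [rfderiv_e2 f hf, rfderiv_e3 f hf] at h
  simpa only [zero_smul, zero_add, smul_eq_mul, zero_mul] using h

lemma smooth_partial_gen (F : ℝ × ℝ × ℝ → E) (hF : ContDiff ℝ (⊤ : ℕ∞) F) (v : ℝ × ℝ × ℝ) :
    ContDiff ℝ (⊤ : ℕ∞) (fun p : ℝ × ℝ × ℝ => fderiv ℝ F p v) := by
  have h1 : ContDiff ℝ (⊤ : ℕ∞) (fun p => fderiv ℝ F p) :=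
    hF.fderiv_right (by simp)
  exact (ContinuousLinearMap.apply ℝ E v).contDiff.comp h1

lemma smooth_dx3 (f : ℝ → ℝ → ℝ → ℂ) (hf : Smooth3C f) : Smooth3C (dx3 f) := by
  have he : (fun p : ℝ × ℝ × ℝ => dx3 f p.1 p.2.1 p.2.2)
      = fun p : ℝ × ℝ × ℝ =>
        fderiv ℝ (fun p : ℝ × ℝ × ℝ => f p.1 p.2.1 p.2.2) p (0,1,0) := by
    funext p
    exact (fderiv_e2 f hf p.1 p.2.1 p.2.2).symm
  unfold Smooth3C
  rw [he]
  exact smooth_partial_gen _ hf _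

lemma smooth_dy3 (f : ℝ → ℝ → ℝ → ℂ) (hf : Smooth3C f) : Smooth3C (dy3 f) := by
  have he : (fun p : ℝ × ℝ × ℝ => dy3 f p.1 p.2.1 p.2.2)
      = fun p : ℝ × ℝ × ℝ =>
        fderiv ℝ (fun p : ℝ × ℝ × ℝ => f p.1 p.2.1 p.2.2) p (0,0,1) := by
    funext p
    exact (fderiv_e3 f hf p.1 p.2.1 p.2.2).symm
  unfold Smooth3C
  rw [he]
  exact smooth_partial_gen _ hf _

lemma smooth_rx3 (f : ℝ → ℝ → ℝ → ℝ) (hf : Smooth3R f) : Smooth3R (rx3 f) := by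
  have he : (fun p : ℝ × ℝ × ℝ => rx3 f p.1 p.2.1 p.2.2)
      = fun p : ℝ × ℝ × ℝ =>
        fderiv ℝ (fun p : ℝ × ℝ × ℝ => f p.1 p.2.1 p.2.2) p (0,1,0) := by
    funext p
    exact (rfderiv_e2 f hf p.1 p.2.1 p.2.2).symm
  unfold Smooth3R
  rw [he]
  exact smooth_partial_gen _ hf _

lemma smooth_ry3 (f : ℝ → ℝ → ℝ → ℝ) (hf : Smooth3R f) : Smooth3R (ry3 f) := by
  have he : (fun p : ℝ × ℝ × ℝ => ry3 f p.1 p.2.1 p.2.2)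
      = fun p : ℝ × ℝ × ℝ =>
        fderiv ℝ (fun p : ℝ × ℝ × ℝ => f p.1 p.2.1 p.2.2) p (0,0,1) := by
    funext p
    exact (rfderiv_e3 f hf p.1 p.2.1 p.2.2).symm
  unfold Smooth3R
  rw [he]
  exact smooth_partial_gen _ hf _

lemma smooth_absSq (f : ℝ → ℝ → ℝ → ℂ) (hf : Smooth3C f) :
    Smooth3R (fun t x y => (‖f t x y‖)^2) := by
  unfold Smooth3R
  have he : (fun p : ℝ × ℝ × ℝ => (‖f p.1 p.2.1 p.2.2‖)^2)
      = fun p : ℝ × ℝ × ℝ => (f p.1 p.2.1 p.2.2).re * (f p.1 p.2.1 p.2.2).re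
          + (f p.1 p.2.1 p.2.2).im * (f p.1 p.2.1 p.2.2).im := by
    funext p
    rw [Complex.sq_norm, Complex.normSq_apply]
  rw [he]
  exact ((Complex.reCLM.contDiff.comp hf).mul (Complex.reCLM.contDiff.comp hf)).add
    ((Complex.imCLM.contDiff.comp hf).mul (Complex.imCLM.contDiff.comp hf))

end helpers

/-- the transformed wave function -/
def PhiF (ε1 a b c d : ℝ) (ψt : ℝ → ℝ → ℝ → ℂ) : ℝ → ℝ → ℝ → ℂ :=
  fun t x y => ((c * t + d : ℝ) : ℂ)⁻¹
    * Complex.exp (Complex.I * ((c * (x^2 + ε1 * y^2) / (4 * (c * t + d)) : ℝ) : ℂ))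
    * ψt ((a * t + b) / (c * t + d)) (x / (c * t + d)) (y / (c * t + d))

/-- the transformed mean flow -/
def WFn (a b c d : ℝ) (wt : ℝ → ℝ → ℝ → ℝ) : ℝ → ℝ → ℝ → ℝ :=
  fun t x y => (c * t + d)⁻¹^2
    * wt ((a * t + b) / (c * t + d)) (x / (c * t + d)) (y / (c * t + d))

lemma ds_aux
    (ε1 ε2 δ1 δ2 : ℝ) (hε1 : ε1 = 1 ∨ ε1 = -1)
    (a b c d : ℝ) (habcd : a * d - b * c = 1)
    (ψt : ℝ → ℝ → ℝ → ℂ) (wt : ℝ → ℝ → ℝ → ℝ)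
    (hψt : Smooth3C ψt) (hwt : Smooth3R wt)
    (hsol : IsDSSolution ε1 ε2 δ1 δ2 ψt wt)
    (t x y : ℝ) (hl0 : c * t + d ≠ 0) :
    DSAt ε1 ε2 δ1 δ2 (PhiF ε1 a b c d ψt) (WFn a b c d wt) t x y := by
  have he1C : ((ε1 : ℂ))^2 = 1 := by rcases hε1 with h | h <;> rw [h] <;> norm_num
  have hl2 : (c*t+d)^2 ≠ 0 := pow_ne_zero _ hl0
  have hden : HasDerivAt (fun s : ℝ => c*s+d) c t := by
    simpa using ((hasDerivAt_id t).const_mul c).add_const d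
  -- curve derivative facts in the x (or y) coordinate, at a general point
  have hXc : ∀ s : ℝ, HasDerivAt (fun r : ℝ => r/(c*t+d)) (1/(c*t+d)) s := fun s =>
    (hasDerivAt_id s).div_const _
  ------------------------------------------------------------------
  -- t-direction
  ------------------------------------------------------------------
  have hT' : HasDerivAt (fun s => (a*s+b)/(c*s+d)) (((c*t+d)⁻¹)^2) t := by
    have hnum : HasDerivAt (fun s : ℝ => a*s+b) a t := by
      simpa using ((hasDerivAt_id t).const_mul a).add_const b
    have h := hnum.div hden hl0
    refine h.congr_deriv ?_
    have e : a*(c*t+d) - (a*t+b)*c = 1 := by linear_combination habcd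
    rw [e]
    field_simp
  have hX' : HasDerivAt (fun s => x/(c*s+d)) (-(c*x)*((c*t+d)⁻¹)^2) t := by
    have h := (hasDerivAt_const t x).div hden hl0
    refine h.congr_deriv ?_
    field_simp
    ring
  have hY' : HasDerivAt (fun s => y/(c*s+d)) (-(c*y)*((c*t+d)⁻¹)^2) t := by
    have h := (hasDerivAt_const t y).div hden hl0
    refine h.congr_deriv ?_
    field_simp
    ring
  have hgt : HasDerivAt (fun s => c*(x^2+ε1*y^2)/(4*(c*s+d)))
      (-(c^2*(x^2+ε1*y^2)/4)*((c*t+d)⁻¹)^2) t := by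
    have hden4 : HasDerivAt (fun s : ℝ => 4*(c*s+d)) (4*c) t := hden.const_mul 4
    have h := (hasDerivAt_const t (c*(x^2+ε1*y^2))).div hden4
      (mul_ne_zero (by norm_num) hl0)
    refine h.congr_deriv ?_
    field_simp
    ring
  have hrinv : HasDerivAt (fun s : ℝ => ((c*s+d : ℝ) : ℂ)⁻¹)
      ((-c*((c*t+d)⁻¹)^2 : ℝ) : ℂ) t := by
    have h0 : HasDerivAt (fun s : ℝ => (c*s+d)⁻¹) (-c*((c*t+d)⁻¹)^2) t := by
      have h := hden.inv hl0
      refine h.congr_deriv ?_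
      field_simp
    have h1 := h0.ofReal_comp
    have e2 : (fun s : ℝ => (((c*s+d)⁻¹ : ℝ) : ℂ)) = (fun s : ℝ => ((c*s+d : ℝ) : ℂ)⁻¹) := by
      funext s; push_cast; ring
    rw [e2] at h1; exact h1
  have hexpT := ((hgt.ofReal_comp).const_mul Complex.I).cexp
  have hpsiT := comp3C ψt hψt hT' hX' hY'
  have hPhiT := (hrinv.mul hexpT).mul hpsiT
  have hDt : dt3 (PhiF ε1 a b c d ψt) t x y = _ := hPhiT.deriv
  ------------------------------------------------------------------
  -- x-direction: first derivative at an arbitrary point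
  ------------------------------------------------------------------
  have hgx : ∀ s : ℝ, HasDerivAt (fun r => c*(r^2+ε1*y^2)/(4*(c*t+d)))
      (c*s/2*(c*t+d)⁻¹) s := by
    intro s
    have h := (((hasDerivAt_pow 2 s).add_const (ε1*y^2)).const_mul c).div_const (4*(c*t+d))
    refine h.congr_deriv ?_
    push_cast
    field_simp
    ring
  have hEx : ∀ s : ℝ, HasDerivAt
      (fun r => Complex.exp (Complex.I * ((c*(r^2+ε1*y^2)/(4*(c*t+d)) : ℝ) : ℂ)))
      (Complex.exp (Complex.I * ((c*(s^2+ε1*y^2)/(4*(c*t+d)) : ℝ) : ℂ))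
        * (Complex.I * ((c*s/2*(c*t+d)⁻¹ : ℝ) : ℂ))) s := fun s =>
    (((hgx s).ofReal_comp).const_mul Complex.I).cexp
  have hPcx : ∀ s : ℝ, HasDerivAt
      (fun r => ψt ((a*t+b)/(c*t+d)) (r/(c*t+d)) (y/(c*t+d))) _ s := fun s =>
    comp3C ψt hψt (hasDerivAt_const s ((a*t+b)/(c*t+d))) (hXc s)
      (hasDerivAt_const s (y/(c*t+d)))
  have hAx : ∀ s : ℝ, HasDerivAt
      (fun r => ((c*t+d : ℝ) : ℂ)⁻¹
        * Complex.exp (Complex.I * ((c*(r^2+ε1*y^2)/(4*(c*t+d)) : ℝ) : ℂ))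
        * ψt ((a*t+b)/(c*t+d)) (r/(c*t+d)) (y/(c*t+d)))
      (((c*t+d : ℝ) : ℂ)⁻¹
        * Complex.exp (Complex.I * ((c*(s^2+ε1*y^2)/(4*(c*t+d)) : ℝ) : ℂ))
        * (Complex.I * ((c*s/2*(c*t+d)⁻¹ : ℝ) : ℂ)
            * ψt ((a*t+b)/(c*t+d)) (s/(c*t+d)) (y/(c*t+d))
          + ((1/(c*t+d) : ℝ) : ℂ)
            * dx3 ψt ((a*t+b)/(c*t+d)) (s/(c*t+d)) (y/(c*t+d)))) s := by
    intro s
    have h := ((hEx s).const_mul (((c*t+d : ℝ) : ℂ)⁻¹)).mul (hPcx s)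
    refine h.congr_deriv ?_
    push_cast
    ring
  have hdxPhi : ∀ s : ℝ, dx3 (PhiF ε1 a b c d ψt) t s y
      = ((c*t+d : ℝ) : ℂ)⁻¹
        * Complex.exp (Complex.I * ((c*(s^2+ε1*y^2)/(4*(c*t+d)) : ℝ) : ℂ))
        * (Complex.I * ((c*s/2*(c*t+d)⁻¹ : ℝ) : ℂ)
            * ψt ((a*t+b)/(c*t+d)) (s/(c*t+d)) (y/(c*t+d))
          + ((1/(c*t+d) : ℝ) : ℂ)
            * dx3 ψt ((a*t+b)/(c*t+d)) (s/(c*t+d)) (y/(c*t+d))) := fun s => (hAx s).deriv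
  have hfunx : (fun s => dx3 (PhiF ε1 a b c d ψt) t s y)
      = fun s : ℝ => ((c*t+d : ℝ) : ℂ)⁻¹
        * Complex.exp (Complex.I * ((c*(s^2+ε1*y^2)/(4*(c*t+d)) : ℝ) : ℂ))
        * (Complex.I * ((c*s/2*(c*t+d)⁻¹ : ℝ) : ℂ)
            * ψt ((a*t+b)/(c*t+d)) (s/(c*t+d)) (y/(c*t+d))
          + ((1/(c*t+d) : ℝ) : ℂ)
            * dx3 ψt ((a*t+b)/(c*t+d)) (s/(c*t+d)) (y/(c*t+d))) := funext hdxPhi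
  -- second x-derivative
  have hlinx : HasDerivAt (fun s : ℝ => Complex.I * ((c*s/2*(c*t+d)⁻¹ : ℝ) : ℂ)) _ x :=
    (((((hasDerivAt_id x).const_mul c).div_const 2).mul_const
      ((c*t+d)⁻¹)).ofReal_comp).const_mul Complex.I
  have hPcx2 : HasDerivAt
      (fun r => dx3 ψt ((a*t+b)/(c*t+d)) (r/(c*t+d)) (y/(c*t+d))) _ x :=
    comp3C (dx3 ψt) (smooth_dx3 ψt hψt) (hasDerivAt_const x ((a*t+b)/(c*t+d))) (hXc x)
      (hasDerivAt_const x (y/(c*t+d)))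
  have hA2x : HasDerivAt (fun s : ℝ => ((c*t+d : ℝ) : ℂ)⁻¹
        * Complex.exp (Complex.I * ((c*(s^2+ε1*y^2)/(4*(c*t+d)) : ℝ) : ℂ))
        * (Complex.I * ((c*s/2*(c*t+d)⁻¹ : ℝ) : ℂ)
            * ψt ((a*t+b)/(c*t+d)) (s/(c*t+d)) (y/(c*t+d))
          + ((1/(c*t+d) : ℝ) : ℂ)
            * dx3 ψt ((a*t+b)/(c*t+d)) (s/(c*t+d)) (y/(c*t+d)))) _ x :=
    ((hEx x).const_mul (((c*t+d : ℝ) : ℂ)⁻¹)).mul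
      ((hlinx.mul (hPcx x)).add (hPcx2.const_mul ((1/(c*t+d) : ℝ) : ℂ)))
  have hDxx : dx3 (dx3 (PhiF ε1 a b c d ψt)) t x y = _ :=
    (congrArg (fun f : ℝ → ℂ => deriv f x) hfunx).trans hA2x.deriv
  ------------------------------------------------------------------
  -- y-direction
  ------------------------------------------------------------------
  have hgy : ∀ s : ℝ, HasDerivAt (fun r => c*(x^2+ε1*r^2)/(4*(c*t+d)))
      (c*ε1*s/2*(c*t+d)⁻¹) s := by
    intro s
    have h := ((((hasDerivAt_pow 2 s).const_mul ε1).const_add (x^2)).const_mul c).div_const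
      (4*(c*t+d))
    refine h.congr_deriv ?_
    push_cast
    field_simp
    ring
  have hEy : ∀ s : ℝ, HasDerivAt
      (fun r => Complex.exp (Complex.I * ((c*(x^2+ε1*r^2)/(4*(c*t+d)) : ℝ) : ℂ)))
      (Complex.exp (Complex.I * ((c*(x^2+ε1*s^2)/(4*(c*t+d)) : ℝ) : ℂ))
        * (Complex.I * ((c*ε1*s/2*(c*t+d)⁻¹ : ℝ) : ℂ))) s := fun s =>
    (((hgy s).ofReal_comp).const_mul Complex.I).cexp
  have hPcy : ∀ s : ℝ, HasDerivAt
      (fun r => ψt ((a*t+b)/(c*t+d)) (x/(c*t+d)) (r/(c*t+d))) _ s := fun s =>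
    comp3C ψt hψt (hasDerivAt_const s ((a*t+b)/(c*t+d))) (hasDerivAt_const s (x/(c*t+d)))
      (hXc s)
  have hAy : ∀ s : ℝ, HasDerivAt
      (fun r => ((c*t+d : ℝ) : ℂ)⁻¹
        * Complex.exp (Complex.I * ((c*(x^2+ε1*r^2)/(4*(c*t+d)) : ℝ) : ℂ))
        * ψt ((a*t+b)/(c*t+d)) (x/(c*t+d)) (r/(c*t+d)))
      (((c*t+d : ℝ) : ℂ)⁻¹
        * Complex.exp (Complex.I * ((c*(x^2+ε1*s^2)/(4*(c*t+d)) : ℝ) : ℂ))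
        * (Complex.I * ((c*ε1*s/2*(c*t+d)⁻¹ : ℝ) : ℂ)
            * ψt ((a*t+b)/(c*t+d)) (x/(c*t+d)) (s/(c*t+d))
          + ((1/(c*t+d) : ℝ) : ℂ)
            * dy3 ψt ((a*t+b)/(c*t+d)) (x/(c*t+d)) (s/(c*t+d)))) s := by
    intro s
    have h := ((hEy s).const_mul (((c*t+d : ℝ) : ℂ)⁻¹)).mul (hPcy s)
    refine h.congr_deriv ?_
    push_cast
    ring
  have hdyPhi : ∀ s : ℝ, dy3 (PhiF ε1 a b c d ψt) t x s
      = ((c*t+d : ℝ) : ℂ)⁻¹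
        * Complex.exp (Complex.I * ((c*(x^2+ε1*s^2)/(4*(c*t+d)) : ℝ) : ℂ))
        * (Complex.I * ((c*ε1*s/2*(c*t+d)⁻¹ : ℝ) : ℂ)
            * ψt ((a*t+b)/(c*t+d)) (x/(c*t+d)) (s/(c*t+d))
          + ((1/(c*t+d) : ℝ) : ℂ)
            * dy3 ψt ((a*t+b)/(c*t+d)) (x/(c*t+d)) (s/(c*t+d))) := fun s => (hAy s).deriv
  have hfuny : (fun s => dy3 (PhiF ε1 a b c d ψt) t x s)
      = fun s : ℝ => ((c*t+d : ℝ) : ℂ)⁻¹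
        * Complex.exp (Complex.I * ((c*(x^2+ε1*s^2)/(4*(c*t+d)) : ℝ) : ℂ))
        * (Complex.I * ((c*ε1*s/2*(c*t+d)⁻¹ : ℝ) : ℂ)
            * ψt ((a*t+b)/(c*t+d)) (x/(c*t+d)) (s/(c*t+d))
          + ((1/(c*t+d) : ℝ) : ℂ)
            * dy3 ψt ((a*t+b)/(c*t+d)) (x/(c*t+d)) (s/(c*t+d))) := funext hdyPhi
  have hliny : HasDerivAt (fun s : ℝ => Complex.I * ((c*ε1*s/2*(c*t+d)⁻¹ : ℝ) : ℂ)) _ y :=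
    (((((hasDerivAt_id y).const_mul (c*ε1)).div_const 2).mul_const
      ((c*t+d)⁻¹)).ofReal_comp).const_mul Complex.I
  have hPcy2 : HasDerivAt
      (fun r => dy3 ψt ((a*t+b)/(c*t+d)) (x/(c*t+d)) (r/(c*t+d))) _ y :=
    comp3C (dy3 ψt) (smooth_dy3 ψt hψt) (hasDerivAt_const y ((a*t+b)/(c*t+d)))
      (hasDerivAt_const y (x/(c*t+d))) (hXc y)
  have hA2y : HasDerivAt (fun s : ℝ => ((c*t+d : ℝ) : ℂ)⁻¹
        * Complex.exp (Complex.I * ((c*(x^2+ε1*s^2)/(4*(c*t+d)) : ℝ) : ℂ))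
        * (Complex.I * ((c*ε1*s/2*(c*t+d)⁻¹ : ℝ) : ℂ)
            * ψt ((a*t+b)/(c*t+d)) (x/(c*t+d)) (s/(c*t+d))
          + ((1/(c*t+d) : ℝ) : ℂ)
            * dy3 ψt ((a*t+b)/(c*t+d)) (x/(c*t+d)) (s/(c*t+d)))) _ y :=
    ((hEy y).const_mul (((c*t+d : ℝ) : ℂ)⁻¹)).mul
      ((hliny.mul (hPcy y)).add (hPcy2.const_mul ((1/(c*t+d) : ℝ) : ℂ)))
  have hDyy : dy3 (dy3 (PhiF ε1 a b c d ψt)) t x y = _ :=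
    (congrArg (fun f : ℝ → ℂ => deriv f y) hfuny).trans hA2y.deriv
  ------------------------------------------------------------------
  -- modulus of the transformed wave function
  ------------------------------------------------------------------
  have habsG : ∀ p q : ℝ, (‖PhiF ε1 a b c d ψt t p q‖)^2
      = (c*t+d)⁻¹^2
        * (‖ψt ((a*t+b)/(c*t+d)) (p/(c*t+d)) (q/(c*t+d))‖)^2 := by
    intro p q
    show (‖((c*t+d : ℝ) : ℂ)⁻¹
        * Complex.exp (Complex.I * ((c*(p^2+ε1*q^2)/(4*(c*t+d)) : ℝ) : ℂ))
        * ψt ((a*t+b)/(c*t+d)) (p/(c*t+d)) (q/(c*t+d))‖)^2 = _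
    rw [norm_mul, norm_mul, norm_inv, Complex.norm_real, Real.norm_eq_abs, Complex.norm_exp]
    have hre : (Complex.I * ((c*(p^2+ε1*q^2)/(4*(c*t+d)) : ℝ) : ℂ)).re = 0 := by
      rw [Complex.I_mul_re, Complex.ofReal_im, neg_zero]
    rw [hre, Real.exp_zero, mul_one, mul_pow, ← abs_inv, sq_abs]
  have habsC : (‖PhiF ε1 a b c d ψt t x y‖ : ℂ)^2
      = (((c*t+d : ℝ) : ℂ)⁻¹)^2
        * ((‖ψt ((a*t+b)/(c*t+d)) (x/(c*t+d)) (y/(c*t+d))‖ : ℝ) : ℂ)^2 := by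
    rw [← Complex.ofReal_pow, habsG x y]
    push_cast
    ring
  ------------------------------------------------------------------
  -- second equation pieces
  ------------------------------------------------------------------
  have hwx : ∀ s : ℝ, HasDerivAt
      (fun r => (c*t+d)⁻¹^2 * wt ((a*t+b)/(c*t+d)) (r/(c*t+d)) (y/(c*t+d)))
      ((c*t+d)⁻¹^2 * (1/(c*t+d)
        * rx3 wt ((a*t+b)/(c*t+d)) (s/(c*t+d)) (y/(c*t+d)))) s := by
    intro s
    have h := (comp3R wt hwt ((a*t+b)/(c*t+d)) (hXc s)
      (hasDerivAt_const s (y/(c*t+d)))).const_mul ((c*t+d)⁻¹^2)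
    refine h.congr_deriv ?_
    ring
  have hwxeq : (fun s => rx3 (WFn a b c d wt) t s y)
      = fun s : ℝ => (c*t+d)⁻¹^2 * (1/(c*t+d)
        * rx3 wt ((a*t+b)/(c*t+d)) (s/(c*t+d)) (y/(c*t+d))) :=
    funext fun s => (hwx s).deriv
  have hWxx : rx3 (rx3 (WFn a b c d wt)) t x y = _ :=
    (congrArg (fun f : ℝ → ℝ => deriv f x) hwxeq).trans
      (((comp3R (rx3 wt) (smooth_rx3 wt hwt) ((a*t+b)/(c*t+d)) (hXc x)
        (hasDerivAt_const x (y/(c*t+d)))).const_mul (1/(c*t+d))).const_mul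
          ((c*t+d)⁻¹^2)).deriv
  have hwy : ∀ s : ℝ, HasDerivAt
      (fun r => (c*t+d)⁻¹^2 * wt ((a*t+b)/(c*t+d)) (x/(c*t+d)) (r/(c*t+d)))
      ((c*t+d)⁻¹^2 * (1/(c*t+d)
        * ry3 wt ((a*t+b)/(c*t+d)) (x/(c*t+d)) (s/(c*t+d)))) s := by
    intro s
    have h := (comp3R wt hwt ((a*t+b)/(c*t+d)) (hasDerivAt_const s (x/(c*t+d)))
      (hXc s)).const_mul ((c*t+d)⁻¹^2)
    refine h.congr_deriv ?_
    ring
  have hwyeq : (fun s => ry3 (WFn a b c d wt) t x s)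
      = fun s : ℝ => (c*t+d)⁻¹^2 * (1/(c*t+d)
        * ry3 wt ((a*t+b)/(c*t+d)) (x/(c*t+d)) (s/(c*t+d))) :=
    funext fun s => (hwy s).deriv
  have hWyy : ry3 (ry3 (WFn a b c d wt)) t x y = _ :=
    (congrArg (fun f : ℝ → ℝ => deriv f y) hwyeq).trans
      (((comp3R (ry3 wt) (smooth_ry3 wt hwt) ((a*t+b)/(c*t+d))
        (hasDerivAt_const y (x/(c*t+d))) (hXc y)).const_mul (1/(c*t+d))).const_mul
          ((c*t+d)⁻¹^2)).deriv
  -- |Phi|^2, y-derivatives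
  have hQsm : Smooth3R (fun t x y => (‖ψt t x y‖)^2) := smooth_absSq ψt hψt
  have hqy : ∀ s : ℝ, HasDerivAt
      (fun r => (c*t+d)⁻¹^2
        * (‖ψt ((a*t+b)/(c*t+d)) (x/(c*t+d)) (r/(c*t+d))‖)^2)
      ((c*t+d)⁻¹^2 * (1/(c*t+d)
        * ry3 (fun t x y => (‖ψt t x y‖)^2)
            ((a*t+b)/(c*t+d)) (x/(c*t+d)) (s/(c*t+d)))) s := by
    intro s
    have h := (comp3R (fun t x y => (‖ψt t x y‖)^2) hQsm
      ((a*t+b)/(c*t+d)) (hasDerivAt_const s (x/(c*t+d))) (hXc s)).const_mul ((c*t+d)⁻¹^2)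
    refine h.congr_deriv ?_
    ring
  have hqfun1 : (fun r => (‖PhiF ε1 a b c d ψt t x r‖)^2)
      = fun r : ℝ => (c*t+d)⁻¹^2
        * (‖ψt ((a*t+b)/(c*t+d)) (x/(c*t+d)) (r/(c*t+d))‖)^2 :=
    funext fun r => habsG x r
  have hqeq : (fun s => ry3 (fun t x y => (‖PhiF ε1 a b c d ψt t x y‖)^2) t x s)
      = fun s : ℝ => (c*t+d)⁻¹^2 * (1/(c*t+d)
        * ry3 (fun t x y => (‖ψt t x y‖)^2)
            ((a*t+b)/(c*t+d)) (x/(c*t+d)) (s/(c*t+d))) := by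
    funext s
    exact (congrArg (fun f : ℝ → ℝ => deriv f s) hqfun1).trans (hqy s).deriv
  have hQyy : ry3 (ry3 (fun t x y => (‖PhiF ε1 a b c d ψt t x y‖)^2)) t x y
      = _ :=
    (congrArg (fun f : ℝ → ℝ => deriv f y) hqeq).trans
      (((comp3R (ry3 (fun t x y => (‖ψt t x y‖)^2))
        (smooth_ry3 _ hQsm) ((a*t+b)/(c*t+d)) (hasDerivAt_const y (x/(c*t+d)))
        (hXc y)).const_mul (1/(c*t+d))).const_mul ((c*t+d)⁻¹^2)).deriv
  ------------------------------------------------------------------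
  -- conclusion
  ------------------------------------------------------------------
  obtain ⟨hs1, hs2⟩ := hsol ((a*t+b)/(c*t+d)) (x/(c*t+d)) (y/(c*t+d))
  constructor
  · rw [hDt, Pi.mul_apply, hDxx, hDyy, habsC,
      show PhiF ε1 a b c d ψt t x y = ((c*t+d : ℝ) : ℂ)⁻¹
        * Complex.exp (Complex.I * ((c*(x^2+ε1*y^2)/(4*(c*t+d)) : ℝ) : ℂ))
        * ψt ((a*t+b)/(c*t+d)) (x/(c*t+d)) (y/(c*t+d)) from rfl,
      show WFn a b c d wt t x y = (c*t+d)⁻¹^2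
        * wt ((a*t+b)/(c*t+d)) (x/(c*t+d)) (y/(c*t+d)) from rfl]
    linear_combination (norm := (push_cast; ring_nf))
      ((((c*t+d : ℝ) : ℂ)⁻¹)^3
          * Complex.exp (Complex.I * ((c*(x^2+ε1*y^2)/(4*(c*t+d)) : ℝ) : ℂ))) * hs1
      + (Complex.I * c * (((c*t+d : ℝ) : ℂ)⁻¹)^2
          * Complex.exp (Complex.I * ((c*(x^2+ε1*y^2)/(4*(c*t+d)) : ℝ) : ℂ))
          * ψt ((a*t+b)/(c*t+d)) (x/(c*t+d)) (y/(c*t+d)) / 2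
        + Complex.I * c * y * (((c*t+d : ℝ) : ℂ)⁻¹)^3
          * Complex.exp (Complex.I * ((c*(x^2+ε1*y^2)/(4*(c*t+d)) : ℝ) : ℂ))
          * dy3 ψt ((a*t+b)/(c*t+d)) (x/(c*t+d)) (y/(c*t+d))
        + Complex.I^2 * ε1 * c^2 * y^2 * (((c*t+d : ℝ) : ℂ)⁻¹)^3
          * Complex.exp (Complex.I * ((c*(x^2+ε1*y^2)/(4*(c*t+d)) : ℝ) : ℂ))
          * ψt ((a*t+b)/(c*t+d)) (x/(c*t+d)) (y/(c*t+d)) / 4) * he1C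
  · rw [hWxx, hWyy, hQyy]
    linear_combination ((c*t+d)⁻¹^4) * hs2


/-- pseudo-conformal SL(2,ℝ) invariance of the DS system. -/
theorem ds_sl2_invariance
    (ε1 ε2 δ1 δ2 : ℝ) (hε1 : ε1 = 1 ∨ ε1 = -1) (hε2 : ε2 = 1 ∨ ε2 = -1)
    (a b c d : ℝ) (habcd : a * d - b * c = 1)
    (ψt : ℝ → ℝ → ℝ → ℂ) (wt : ℝ → ℝ → ℝ → ℝ)
    (hψt : Smooth3C ψt) (hwt : Smooth3R wt)
    (hsol : IsDSSolution ε1 ε2 δ1 δ2 ψt wt) :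
    ∀ t x y : ℝ, c * t + d ≠ 0 →
      DSAt ε1 ε2 δ1 δ2
        (fun t x y => ((c * t + d : ℝ) : ℂ)⁻¹
          * Complex.exp (Complex.I * ((c * (x^2 + ε1 * y^2) / (4 * (c * t + d)) : ℝ) : ℂ))
          * ψt ((a * t + b) / (c * t + d)) (x / (c * t + d)) (y / (c * t + d)))
        (fun t x y => (c * t + d)⁻¹^2
          * wt ((a * t + b) / (c * t + d)) (x / (c * t + d)) (y / (c * t + d)))
        t x y := by
  intro t x y hl0
  exact ds_aux ε1 ε2 δ1 δ2 hε1 a b c d habcd ψt wt hψt hwt hsol t x y hl0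
end
end

section
/- Let p1, r1 : I → ℝ be twice continuously differentiable and nonvanishing on an interval I, and suppose 2 r1 p1' r1' + 3 p1 (r1')² − 2 p1 r1 r1'' = 0 on I. Then the function t ↦ (r1'(t))²/(p1(t)² r1(t)³) is constant on I. -/
noncomputable section

/-- the constraint 2 r₁ p₁' r₁' + 3 p₁ (r₁')² − 2 p₁ r₁ r₁'' = 0 on an
interval I implies that (r₁')²/(p₁² r₁³) is constant on I. -/
theorem first_integral_of_constraint
    (I : Set ℝ) (hIopen : IsOpen I) (hIconn : I.OrdConnected)
    (p1 r1 : ℝ → ℝ)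
    (hp1 : ContDiffOn ℝ 2 p1 I) (hr1 : ContDiffOn ℝ 2 r1 I)
    (hp1ne : ∀ t ∈ I, p1 t ≠ 0) (hr1ne : ∀ t ∈ I, r1 t ≠ 0)
    (hconstr : ∀ t ∈ I, 2 * r1 t * deriv p1 t * deriv r1 t
        + 3 * p1 t * (deriv r1 t)^2 - 2 * p1 t * r1 t * deriv (deriv r1) t = 0) :
    ∀ s ∈ I, ∀ t ∈ I,
      (deriv r1 s)^2 / ((p1 s)^2 * (r1 s)^3)
        = (deriv r1 t)^2 / ((p1 t)^2 * (r1 t)^3) := by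
  set F : ℝ → ℝ := fun y => (deriv r1 y)^2 / ((p1 y)^2 * (r1 y)^3) with hF
  -- key pointwise fact: F has derivative 0 at every point of I
  have key : ∀ t ∈ I, HasDerivAt F 0 t := by
    intro t ht
    have ht' : I ∈ nhds t := hIopen.mem_nhds ht
    have cp := hp1.contDiffAt ht'
    have cr := hr1.contDiffAt ht'
    have hp : HasDerivAt p1 (deriv p1 t) t :=
      (cp.differentiableAt (by norm_num)).hasDerivAt
    have hr : HasDerivAt r1 (deriv r1 t) t :=
      (cr.differentiableAt (by norm_num)).hasDerivAt
    have hdr : DifferentiableAt ℝ (deriv r1) t := by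
      have h1 : ContDiffAt ℝ 1 (fderiv ℝ r1) t := cr.fderiv_right (by norm_num)
      have h2 : DifferentiableAt ℝ (fun y => fderiv ℝ r1 y 1) t :=
        (h1.differentiableAt one_ne_zero).clm_apply (differentiableAt_const 1)
      exact h2
    have hdr2 : HasDerivAt (deriv r1) (deriv (deriv r1) t) t := hdr.hasDerivAt
    have hpne := hp1ne t ht
    have hrne := hr1ne t ht
    have hden : (p1 t)^2 * (r1 t)^3 ≠ 0 := by positivity
    have hnum : HasDerivAt (fun y => (deriv r1 y)^2)
        (2 * deriv r1 t * deriv (deriv r1) t) t := by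
      simpa [mul_comm, mul_assoc, mul_left_comm] using hdr2.fun_pow 2
    have hdeno : HasDerivAt (fun y => (p1 y)^2 * (r1 y)^3)
        ((2 * p1 t * deriv p1 t) * (r1 t)^3 + (p1 t)^2 * (3 * (r1 t)^2 * deriv r1 t)) t := by
      have : HasDerivAt (fun y => (p1 y)^2 * (r1 y)^3) _ t := (hp.fun_pow 2).fun_mul (hr.fun_pow 3)
      convert this using 1
      push_cast
      ring
    have hdiv := hnum.div hdeno hden
    have hzero : (2 * deriv r1 t * deriv (deriv r1) t * ((p1 t)^2 * (r1 t)^3)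
        - (deriv r1 t)^2 * ((2 * p1 t * deriv p1 t) * (r1 t)^3
          + (p1 t)^2 * (3 * (r1 t)^2 * deriv r1 t))) / ((p1 t)^2 * (r1 t)^3)^2 = 0 := by
      have hc := hconstr t ht
      have : 2 * deriv r1 t * deriv (deriv r1) t * ((p1 t)^2 * (r1 t)^3)
          - (deriv r1 t)^2 * ((2 * p1 t * deriv p1 t) * (r1 t)^3
            + (p1 t)^2 * (3 * (r1 t)^2 * deriv r1 t)) = 0 := by
        linear_combination (-(deriv r1 t) * p1 t * (r1 t)^2) * hc
      rw [this, zero_div]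
    rw [← hzero]
    exact hdiv
  have hconv : Convex ℝ I := convex_iff_ordConnected.mpr hIconn
  intro s hs t ht
  have hdiff : DifferentiableOn ℝ F I := fun x hx => ((key x hx).differentiableAt).differentiableWithinAt
  refine hconv.is_const_of_fderivWithin_eq_zero hdiff (fun x hx => ?_) hs ht
  rw [fderivWithin_of_isOpen hIopen hx]
  have := ((key x hx).hasFDerivAt).fderiv
  rw [this]
  ext
  simp
end
end

section
/- Let p1, r1 : ℝ → ℝ be three times continuously differentiable and nonvanishing, and set p2 = −p1 r1. Define A0 = 2(p1')³/p1³ + 3 p2 (p1')³/(p1⁴ r1) + (p1')² p2'/(p1² p2) + p2'(r1')²/(p2 r1²) + 2(r1')³/r1³ − 3 p1' p1''/p1² − 4 p2 p1' p1''/(p1³ r1) − p1'' p2'/(p1 p2) − r1'' p2'/(r1 p2) − 3 r1' r1''/r1² + p1'''/p1 + p2 p1'''/(p1² r1) + r1'''/r1, and A1 = −2(p1')²/p1² − 3 p2 (p1')²/(p1³ r1) − p1' p2'/(p1 p2) − r1' p2'/(r1 p2) − 2(r1')²/r1² + 2 p1''/p1 + 2 p2 p1''/(p1² r1) + 2 r1''/r1.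 Then A0(t) = (1/2) A1'(t) for all t; in particular, if A1 vanishes identically then A0 vanishes identically. -/
noncomputable section

lemma aux_deriv (f : ℝ → ℝ) (hf : ContDiff ℝ 3 f) :
    Differentiable ℝ f ∧ Differentiable ℝ (deriv f) ∧ Differentiable ℝ (deriv (deriv f)) := by
  have h1 : ContDiff ℝ 2 (deriv f) := by
    rw [show (3 : WithTop ℕ∞) = 2 + 1 from rfl, contDiff_succ_iff_deriv] at hf
    exact hf.2.2
  have h2 : ContDiff ℝ 1 (deriv (deriv f)) := by
    rw [show (2 : WithTop ℕ∞) = 1 + 1 from rfl, contDiff_succ_iff_deriv] at h1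
    exact h1.2.2
  exact ⟨hf.differentiable (by norm_num), h1.differentiable (by norm_num),
    h2.differentiable (by norm_num)⟩

set_option maxHeartbeats 2000000 in
/-- when p₂ = −p₁r₁ (i.e. A₃ = 0), the determining-equation coefficient A₀
is a differential consequence of A₁, namely A₀ = (1/2) A₁'; in particular A₁ ≡ 0 implies
A₀ ≡ 0. -/
theorem A0_is_half_derivative_of_A1
    (p1 r1 : ℝ → ℝ)
    (hp1 : ContDiff ℝ 3 p1) (hr1 : ContDiff ℝ 3 r1)
    (hp1ne : ∀ t : ℝ, p1 t ≠ 0) (hr1ne : ∀ t : ℝ, r1 t ≠ 0)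
    (p2 : ℝ → ℝ) (hp2 : ∀ t : ℝ, p2 t = -(p1 t * r1 t))
    (A0 A1 : ℝ → ℝ)
    (hA0 : ∀ t : ℝ, A0 t =
      2 * (deriv p1 t)^3 / (p1 t)^3
      + 3 * p2 t * (deriv p1 t)^3 / ((p1 t)^4 * r1 t)
      + (deriv p1 t)^2 * deriv p2 t / ((p1 t)^2 * p2 t)
      + deriv p2 t * (deriv r1 t)^2 / (p2 t * (r1 t)^2)
      + 2 * (deriv r1 t)^3 / (r1 t)^3
      - 3 * deriv p1 t * deriv (deriv p1) t / (p1 t)^2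
      - 4 * p2 t * deriv p1 t * deriv (deriv p1) t / ((p1 t)^3 * r1 t)
      - deriv (deriv p1) t * deriv p2 t / (p1 t * p2 t)
      - deriv (deriv r1) t * deriv p2 t / (r1 t * p2 t)
      - 3 * deriv r1 t * deriv (deriv r1) t / (r1 t)^2
      + deriv (deriv (deriv p1)) t / p1 t
      + p2 t * deriv (deriv (deriv p1)) t / ((p1 t)^2 * r1 t)
      + deriv (deriv (deriv r1)) t / r1 t)
    (hA1 : ∀ t : ℝ, A1 t =
      -2 * (deriv p1 t)^2 / (p1 t)^2
      - 3 * p2 t * (deriv p1 t)^2 / ((p1 t)^3 * r1 t)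
      - deriv p1 t * deriv p2 t / (p1 t * p2 t)
      - deriv r1 t * deriv p2 t / (r1 t * p2 t)
      - 2 * (deriv r1 t)^2 / (r1 t)^2
      + 2 * deriv (deriv p1) t / p1 t
      + 2 * p2 t * deriv (deriv p1) t / ((p1 t)^2 * r1 t)
      + 2 * deriv (deriv r1) t / r1 t) :
    (∀ t : ℝ, A0 t = (1/2) * deriv A1 t)
    ∧ ((∀ t : ℝ, A1 t = 0) → ∀ t : ℝ, A0 t = 0) := by
  obtain ⟨hp1d, hdp1d, _⟩ := aux_deriv p1 hp1
  obtain ⟨hr1d, hdr1d, hd2r1d⟩ := aux_deriv r1 hr1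
  have hdp2 : ∀ t : ℝ, deriv p2 t = -(deriv p1 t * r1 t + p1 t * deriv r1 t) := by
    intro t
    rw [funext hp2]
    exact (((hp1d t).hasDerivAt.mul (hr1d t).hasDerivAt).neg).deriv
  have hA1B : A1 = fun s => 2 * deriv (deriv r1) s / r1 s - 3 * (deriv r1 s)^2 / (r1 s)^2
      - 2 * deriv p1 s * deriv r1 s / (p1 s * r1 s) := by
    funext s
    rw [hA1 s, hdp2 s, hp2 s]
    have h1 := hp1ne s; have h2 := hr1ne s
    field_simp
    ring
  have key : ∀ t : ℝ, A0 t = (1/2) * deriv A1 t := by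
    intro t
    have e1 : HasDerivAt (fun s => 2 * deriv (deriv r1) s)
        (2 * deriv (deriv (deriv r1)) t) t := ((hd2r1d t).hasDerivAt).const_mul 2
    have e2 : HasDerivAt r1 (deriv r1 t) t := (hr1d t).hasDerivAt
    have e3 : HasDerivAt (fun s => 3 * (deriv r1 s)^2)
        (3 * (2 * deriv r1 t ^ 1 * deriv (deriv r1) t)) t :=
      (((hdr1d t).hasDerivAt).pow 2).const_mul 3
    have e4 : HasDerivAt (fun s => (r1 s)^2) (2 * r1 t ^ 1 * deriv r1 t) t := e2.pow 2
    have e5 : HasDerivAt (fun s => 2 * deriv p1 s * deriv r1 s)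
        (2 * deriv (deriv p1) t * deriv r1 t + 2 * deriv p1 t * deriv (deriv r1) t) t :=
      (((hdp1d t).hasDerivAt).const_mul 2).mul (hdr1d t).hasDerivAt
    have e6 : HasDerivAt (fun s => p1 s * r1 s)
        (deriv p1 t * r1 t + p1 t * deriv r1 t) t := (hp1d t).hasDerivAt.mul e2
    have hB := ((e1.div e2 (hr1ne t)).sub
        (e3.div e4 (pow_ne_zero 2 (hr1ne t)))).sub
        (e5.div e6 (mul_ne_zero (hp1ne t) (hr1ne t)))
    have hdB : deriv (fun s => 2 * deriv (deriv r1) s / r1 s - 3 * (deriv r1 s)^2 / (r1 s)^2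
        - 2 * deriv p1 s * deriv r1 s / (p1 s * r1 s)) t =
        (2 * deriv (deriv (deriv r1)) t * r1 t - 2 * deriv (deriv r1) t * deriv r1 t) / (r1 t)^2
        - (3 * (2 * deriv r1 t ^ 1 * deriv (deriv r1) t) * (r1 t)^2
            - 3 * (deriv r1 t)^2 * (2 * r1 t ^ 1 * deriv r1 t)) / ((r1 t)^2)^2
        - ((2 * deriv (deriv p1) t * deriv r1 t + 2 * deriv p1 t * deriv (deriv r1) t)
              * (p1 t * r1 t)
            - 2 * deriv p1 t * deriv r1 t * (deriv p1 t * r1 t + p1 t * deriv r1 t))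
            / (p1 t * r1 t)^2 := hB.deriv
    rw [hA1B, hdB, hA0 t, hdp2 t, hp2 t]
    have h1 := hp1ne t; have h2 := hr1ne t
    clear hA0 hA1 hA1B hdB hB e1 e2 e3 e4 e5 e6 hdp2 hp2 hp1 hr1
    generalize p1 t = P at *
    generalize r1 t = R at *
    generalize deriv p1 t = dP
    generalize deriv r1 t = dR
    generalize deriv (deriv p1) t = d2P
    generalize deriv (deriv r1) t = d2R
    generalize deriv (deriv (deriv p1)) t = d3P
    generalize deriv (deriv (deriv r1)) t = d3R
    field_simp
    ring
  refine ⟨key, fun h t => ?_⟩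
  rw [key t, funext h, deriv_const]
  simp
end
end

section
/- Let q1, q2 : ℝ → ℝ be smooth and nonvanishing, let k0 be a real constant, let k1, r10, r20 be nonzero real constants, and set E(t) = exp(k0 ∫₀ᵗ q1(s) ds). Define p1 = k1 q1 E, p2 = −r10 k1 q1 E^{−1}, r1 = r10 E^{−2}, r2 = r20 (q1/q2) E^{−2} (the Table 1 coefficient family). Then these coefficients satisfy all the determining constraints of the Virasoro-invariant (integrable) case: (i) p2 + p1 r1 = 0; (ii) p1'/p1 − p2'/p2 + r1'/r1 = 0; (iii) q1'/q1 − q2'/q2 + r1'/r1 − r2'/r2 = 0; (iv) p1'/p1 − q1'/q1 + r1'/(2r1) = 0; and (v) 2 r1 p1' r1' + 3 p1 (r1')² − 2 p1 r1 r1'' = 0. -/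
noncomputable section

set_option maxHeartbeats 1600000 in
/-- the Table 1 coefficient family satisfies all determining constraints of
the Virasoro-invariant (integrable) case of the vcDS system. -/
theorem table1_family_satisfies_constraints
    (q1 q2 : ℝ → ℝ)
    (hq1 : ContDiff ℝ (⊤ : ℕ∞) q1) (hq2 : ContDiff ℝ (⊤ : ℕ∞) q2)
    (hq1ne : ∀ t : ℝ, q1 t ≠ 0) (hq2ne : ∀ t : ℝ, q2 t ≠ 0)
    (k0 : ℝ) (k1 r10 r20 : ℝ) (hk1 : k1 ≠ 0) (hr10 : r10 ≠ 0) (hr20 : r20 ≠ 0)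
    (E : ℝ → ℝ) (hE : ∀ t : ℝ, E t = Real.exp (k0 * ∫ s in (0:ℝ)..t, q1 s))
    (p1 p2 r1 r2 : ℝ → ℝ)
    (hp1 : ∀ t : ℝ, p1 t = k1 * q1 t * E t)
    (hp2 : ∀ t : ℝ, p2 t = -r10 * k1 * q1 t * (E t)⁻¹)
    (hr1 : ∀ t : ℝ, r1 t = r10 * (E t)⁻¹^2)
    (hr2 : ∀ t : ℝ, r2 t = r20 * (q1 t / q2 t) * (E t)⁻¹^2) :
    (∀ t : ℝ, p2 t + p1 t * r1 t = 0)
    ∧ (∀ t : ℝ, deriv p1 t / p1 t - deriv p2 t / p2 t + deriv r1 t / r1 t = 0)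
    ∧ (∀ t : ℝ, deriv q1 t / q1 t - deriv q2 t / q2 t
        + deriv r1 t / r1 t - deriv r2 t / r2 t = 0)
    ∧ (∀ t : ℝ, deriv p1 t / p1 t - deriv q1 t / q1 t + deriv r1 t / (2 * r1 t) = 0)
    ∧ (∀ t : ℝ, 2 * r1 t * deriv p1 t * deriv r1 t + 3 * p1 t * (deriv r1 t)^2
        - 2 * p1 t * r1 t * deriv (deriv r1) t = 0) := by
  have hq1d : Differentiable ℝ q1 := hq1.differentiable (by simp)
  have hq2d : Differentiable ℝ q2 := hq2.differentiable (by simp)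
  have hEeq : E = fun t => Real.exp (k0 * ∫ s in (0:ℝ)..t, q1 s) := funext hE
  have hEpos : ∀ t, 0 < E t := fun t => by rw [hE]; exact Real.exp_pos _
  have hEne : ∀ t, E t ≠ 0 := fun t => (hEpos t).ne'
  have hEder : ∀ t, HasDerivAt E (k0 * q1 t * E t) t := by
    intro t
    have hF : HasDerivAt (fun u => ∫ s in (0:ℝ)..u, q1 s) (q1 t) t :=
      (hq1.continuous.integral_hasStrictDerivAt 0 t).hasDerivAt
    have h : HasDerivAt E (Real.exp (k0 * ∫ s in (0:ℝ)..t, q1 s) * (k0 * q1 t)) t := by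
      rw [hEeq]; exact (hF.const_mul k0).exp
    convert h using 1
    rw [hE t]; ring
  have hEinv : ∀ t, HasDerivAt (fun u => (E u)⁻¹) (-(k0 * q1 t) * (E t)⁻¹) t := by
    intro t
    have h : HasDerivAt (fun u => (E u)⁻¹) _ t := (hEder t).inv (hEne t)
    convert h using 1
    rw [pow_two, eq_div_iff (mul_ne_zero (hEne t) (hEne t))]
    field_simp
  have hp1der : ∀ t, HasDerivAt p1 (k1 * (deriv q1 t * E t + q1 t * (k0 * q1 t * E t))) t := by
    intro t
    have hfun : p1 = fun t => k1 * (q1 t * E t) := by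
      funext u; rw [hp1 u]; ring
    rw [hfun]
    exact ((hq1d t).hasDerivAt.mul (hEder t)).const_mul k1
  have hp2der : ∀ t, HasDerivAt p2
      (-r10 * k1 * (deriv q1 t * (E t)⁻¹ + q1 t * (-(k0 * q1 t) * (E t)⁻¹))) t := by
    intro t
    have hfun : p2 = fun t => -r10 * k1 * (q1 t * (E t)⁻¹) := by
      funext u; rw [hp2 u]; ring
    rw [hfun]
    exact ((hq1d t).hasDerivAt.mul (hEinv t)).const_mul (-r10 * k1)
  have hr1der : ∀ t, HasDerivAt r1
      (r10 * (-(k0 * q1 t) * (E t)⁻¹ * (E t)⁻¹ + (E t)⁻¹ * (-(k0 * q1 t) * (E t)⁻¹))) t := by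
    intro t
    have hfun : r1 = fun t => r10 * ((E t)⁻¹ * (E t)⁻¹) := by
      funext u; rw [hr1 u]; ring
    rw [hfun]
    exact ((hEinv t).mul (hEinv t)).const_mul r10
  have hr1d : deriv r1 = fun t =>
      r10 * (-(k0 * q1 t) * (E t)⁻¹ * (E t)⁻¹ + (E t)⁻¹ * (-(k0 * q1 t) * (E t)⁻¹)) :=
    funext fun t => (hr1der t).deriv
  have hr2der : ∀ t, HasDerivAt r2
      (r20 * ((deriv q1 t * q2 t - q1 t * deriv q2 t) / (q2 t)^2 * ((E t)⁻¹ * (E t)⁻¹)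
        + q1 t / q2 t * (-(k0 * q1 t) * (E t)⁻¹ * (E t)⁻¹ + (E t)⁻¹ * (-(k0 * q1 t) * (E t)⁻¹)))) t := by
    intro t
    have hfun : r2 = fun t => r20 * (q1 t / q2 t * ((E t)⁻¹ * (E t)⁻¹)) := by
      funext u; rw [hr2 u]; ring
    rw [hfun]
    exact (((hq1d t).hasDerivAt.div (hq2d t).hasDerivAt (hq2ne t)).mul
      ((hEinv t).mul (hEinv t))).const_mul r20
  have hr1dd : ∀ t, HasDerivAt (deriv r1)
      (-2 * r10 * k0 * (deriv q1 t * ((E t)⁻¹ * (E t)⁻¹)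
        + q1 t * (-(k0 * q1 t) * (E t)⁻¹ * (E t)⁻¹ + (E t)⁻¹ * (-(k0 * q1 t) * (E t)⁻¹)))) t := by
    intro t
    have hfun : deriv r1 = fun t => -2 * r10 * k0 * (q1 t * ((E t)⁻¹ * (E t)⁻¹)) := by
      rw [hr1d]; funext u; ring
    rw [hfun]
    exact ((hq1d t).hasDerivAt.mul ((hEinv t).mul (hEinv t))).const_mul (-2 * r10 * k0)
  refine ⟨?_, ?_, ?_, ?_, ?_⟩
  · intro t; rw [hp1, hp2, hr1]; field_simp [hEne t]; ring
  · intro t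
    rw [(hp1der t).deriv, (hp2der t).deriv, (hr1der t).deriv, hp1, hp2, hr1]
    have h1 := hq1ne t; have hE1 := hEne t
    field_simp
    ring
  · intro t
    rw [(hr1der t).deriv, (hr2der t).deriv, hr1, hr2]
    have h1 := hq1ne t; have h2 := hq2ne t; have hE1 := hEne t
    field_simp
    ring
  · intro t
    rw [(hp1der t).deriv, (hr1der t).deriv, hp1, hr1]
    have h1 := hq1ne t; have hE1 := hEne t
    field_simp
    ring
  · intro t
    rw [(hp1der t).deriv, (hr1der t).deriv, (hr1dd t).deriv, hp1, hr1]
    have h1 := hq1ne t; have hE1 := hEne t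
    field_simp
    ring
end
end

section
/- Let p1, q2 : ℝ → ℝ be smooth and nonvanishing, let k0 be a real constant, let k1, r10, r20 be nonzero real constants, and suppose F(t) = k0 ∫₀ᵗ p1(s) ds + k1 is nonvanishing. Define q1 = p1/F, r1 = r10/F², p2 = −r10 p1/F², r2 = (r20/F³)(p1/q2) (the Table 2 coefficient family). Then these coefficients satisfy all the determining constraints of the Virasoro-invariant (integrable) case: (i) p2 + p1 r1 = 0; (ii) p1'/p1 − p2'/p2 + r1'/r1 = 0; (iii) q1'/q1 − q2'/q2 + r1'/r1 − r2'/r2 = 0; (iv) p1'/p1 − q1'/q1 + r1'/(2r1) = 0; and (v) 2 r1 p1' r1' + 3 p1 (r1')² − 2 p1 r1 r1'' = 0. -/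
noncomputable section

set_option maxHeartbeats 1000000

/-- the Table 2 coefficient family satisfies all determining constraints of
the Virasoro-invariant (integrable) case of the vcDS system. -/
theorem table2_family_satisfies_constraints
    (p1 q2 : ℝ → ℝ)
    (hp1 : ContDiff ℝ (⊤ : ℕ∞) p1) (hq2 : ContDiff ℝ (⊤ : ℕ∞) q2)
    (hp1ne : ∀ t : ℝ, p1 t ≠ 0) (hq2ne : ∀ t : ℝ, q2 t ≠ 0)
    (k0 : ℝ) (k1 r10 r20 : ℝ) (hk1 : k1 ≠ 0) (hr10 : r10 ≠ 0) (hr20 : r20 ≠ 0)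
    (F : ℝ → ℝ) (hF : ∀ t : ℝ, F t = k0 * (∫ s in (0:ℝ)..t, p1 s) + k1)
    (hFne : ∀ t : ℝ, F t ≠ 0)
    (q1 r1 p2 r2 : ℝ → ℝ)
    (hq1 : ∀ t : ℝ, q1 t = p1 t / F t)
    (hr1 : ∀ t : ℝ, r1 t = r10 / (F t)^2)
    (hp2 : ∀ t : ℝ, p2 t = -r10 * p1 t / (F t)^2)
    (hr2 : ∀ t : ℝ, r2 t = (r20 / (F t)^3) * (p1 t / q2 t)) :
    (∀ t : ℝ, p2 t + p1 t * r1 t = 0)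
    ∧ (∀ t : ℝ, deriv p1 t / p1 t - deriv p2 t / p2 t + deriv r1 t / r1 t = 0)
    ∧ (∀ t : ℝ, deriv q1 t / q1 t - deriv q2 t / q2 t
        + deriv r1 t / r1 t - deriv r2 t / r2 t = 0)
    ∧ (∀ t : ℝ, deriv p1 t / p1 t - deriv q1 t / q1 t + deriv r1 t / (2 * r1 t) = 0)
    ∧ (∀ t : ℝ, 2 * r1 t * deriv p1 t * deriv r1 t + 3 * p1 t * (deriv r1 t)^2
        - 2 * p1 t * r1 t * deriv (deriv r1) t = 0) := by
  have hp1d : Differentiable ℝ p1 := hp1.differentiable (by simp)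
  have hq2d : Differentiable ℝ q2 := hq2.differentiable (by simp)
  have hq1f : q1 = fun t => p1 t / F t := funext hq1
  have hr1f : r1 = fun t => r10 / (F t)^2 := funext hr1
  have hp2f : p2 = fun t => -r10 * p1 t / (F t)^2 := funext hp2
  have hr2f : r2 = fun t => (r20 / (F t)^3) * (p1 t / q2 t) := funext hr2
  have hFf : F = fun t => k0 * (∫ s in (0:ℝ)..t, p1 s) + k1 := funext hF
  have hFder : ∀ t, HasDerivAt F (k0 * p1 t) t := by
    intro t
    rw [hFf]
    have h1 : HasDerivAt (fun u => ∫ s in (0:ℝ)..u, p1 s) (p1 t) t :=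
      intervalIntegral.integral_hasDerivAt_right
        (hp1.continuous.intervalIntegrable 0 t)
        (hp1.continuous.stronglyMeasurableAtFilter _ _)
        hp1.continuous.continuousAt
    simpa using (h1.const_mul k0).add_const k1
  have hq1' : ∀ t, deriv q1 t
      = (deriv p1 t * F t - p1 t * (k0 * p1 t)) / (F t)^2 := by
    intro t
    rw [hq1f]
    exact ((hp1d t).hasDerivAt.div (hFder t) (hFne t)).deriv
  have hr1' : ∀ t, deriv r1 t = -2*r10*(k0*p1 t) / (F t)^3 := by
    intro t
    rw [hr1f]
    rw [HasDerivAt.deriv (f := fun t => r10 / (F t)^2)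
      ((hasDerivAt_const t r10).div ((hFder t).fun_pow 2) (pow_ne_zero 2 (hFne t)))]
    field_simp [hFne t]
    ring
  have hp2' : ∀ t, deriv p2 t
      = (-r10 * deriv p1 t * F t + 2*r10*p1 t*(k0*p1 t)) / (F t)^3 := by
    intro t
    rw [hp2f]
    rw [HasDerivAt.deriv (f := fun t => -r10 * p1 t / (F t)^2)
      (((hp1d t).hasDerivAt.const_mul (-r10)).div ((hFder t).fun_pow 2) (pow_ne_zero 2 (hFne t)))]
    field_simp [hFne t]
    ring
  have hr2' : ∀ t, deriv r2 t
      = r20 * (deriv p1 t * F t * q2 t - p1 t * (3*(k0*p1 t)*q2 t + F t * deriv q2 t))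
        / ((F t)^4 * (q2 t)^2) := by
    intro t
    rw [hr2f]
    have h1 : HasDerivAt (fun t => r20 / (F t)^3)
        ((0 * (F t)^3 - r20 * (3 * F t ^ 2 * (k0 * p1 t))) / ((F t)^3)^2) t :=
      (hasDerivAt_const t r20).div ((hFder t).pow 3) (pow_ne_zero 3 (hFne t))
    have h2 : HasDerivAt (fun t => p1 t / q2 t)
        ((deriv p1 t * q2 t - p1 t * deriv q2 t) / (q2 t)^2) t :=
      (hp1d t).hasDerivAt.div (hq2d t).hasDerivAt (hq2ne t)
    rw [HasDerivAt.deriv (f := fun t => (r20 / (F t)^3) * (p1 t / q2 t)) (h1.mul h2)]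
    field_simp [hFne t, hq2ne t]
    ring
  have hGf : deriv r1 = fun t => -2*r10*(k0*p1 t) / (F t)^3 := funext hr1'
  have hr1'' : ∀ t, deriv (deriv r1) t
      = (-2*r10*(k0*deriv p1 t) * F t + 6*r10*(k0*p1 t)*(k0*p1 t)) / (F t)^4 := by
    intro t
    rw [hGf]
    rw [HasDerivAt.deriv (f := fun t => -2*r10*(k0*p1 t) / (F t)^3)
      ((((hp1d t).hasDerivAt.const_mul k0).const_mul (-2*r10)).div
      ((hFder t).fun_pow 3) (pow_ne_zero 3 (hFne t)))]
    field_simp [hFne t]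
    ring
  refine ⟨?_, ?_, ?_, ?_, ?_⟩
  · intro t
    rw [hp2 t, hr1 t]
    ring
  · intro t
    rw [hp2 t, hr1 t, hp2' t, hr1' t]
    field_simp [hFne t, hp1ne t, hr10]
    ring
  · intro t
    rw [hq1 t, hr1 t, hr2 t, hq1' t, hr1' t, hr2' t]
    field_simp [hFne t, hp1ne t, hq2ne t, hr10, hr20]
    ring
  · intro t
    rw [hq1 t, hr1 t, hq1' t, hr1' t]
    field_simp [hFne t, hp1ne t, hr10]
    ring
  · intro t
    rw [hr1 t, hr1' t, hr1'' t]
    field_simp [hFne t, hp1ne t, hr10]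
    ring
end
end

section
/- Let q1, q2 : ℝ → ℝ be smooth and nonvanishing, let k0 be a real constant, let k1, r10, r20 be nonzero real constants, set E(t) = exp(k0 ∫₀ᵗ q1(s) ds), and define p1 = k1 q1 E, p2 = −r10 k1 q1 E^{−1}, r1 = r10 E^{−2}, r2 = r20 (q1/q2) E^{−2}. Then the following four quantities are constant in t, with the indicated values: p1 p2/q1² = −r10 k1², p1 q2² r2²/p2³ = −r20²/(r10³ k1²), r1'/(q1 r1) = −2k0, and q1 q2 r2/p2² = r20/(r10² k1²). -/
noncomputable section

/-- for the Table 1 coefficient family the four quantities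
p₁p₂/q₁², p₁q₂²r₂²/p₂³, r₁'/(q₁r₁) and q₁q₂r₂/p₂² are constant, with the indicated
values. -/
theorem table1_family_constants
    (q1 q2 : ℝ → ℝ)
    (hq1 : ContDiff ℝ (⊤ : ℕ∞) q1) (hq2 : ContDiff ℝ (⊤ : ℕ∞) q2)
    (hq1ne : ∀ t : ℝ, q1 t ≠ 0) (hq2ne : ∀ t : ℝ, q2 t ≠ 0)
    (k0 : ℝ) (k1 r10 r20 : ℝ) (hk1 : k1 ≠ 0) (hr10 : r10 ≠ 0) (hr20 : r20 ≠ 0)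
    (E : ℝ → ℝ) (hE : ∀ t : ℝ, E t = Real.exp (k0 * ∫ s in (0:ℝ)..t, q1 s))
    (p1 p2 r1 r2 : ℝ → ℝ)
    (hp1 : ∀ t : ℝ, p1 t = k1 * q1 t * E t)
    (hp2 : ∀ t : ℝ, p2 t = -r10 * k1 * q1 t * (E t)⁻¹)
    (hr1 : ∀ t : ℝ, r1 t = r10 * (E t)⁻¹^2)
    (hr2 : ∀ t : ℝ, r2 t = r20 * (q1 t / q2 t) * (E t)⁻¹^2) :
    (∀ t : ℝ, p1 t * p2 t / (q1 t)^2 = -r10 * k1^2)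
    ∧ (∀ t : ℝ, p1 t * (q2 t)^2 * (r2 t)^2 / (p2 t)^3 = -r20^2 / (r10^3 * k1^2))
    ∧ (∀ t : ℝ, deriv r1 t / (q1 t * r1 t) = -2 * k0)
    ∧ (∀ t : ℝ, q1 t * q2 t * r2 t / (p2 t)^2 = r20 / (r10^2 * k1^2)) := by
  have hEpos : ∀ t, 0 < E t := fun t => (hE t) ▸ Real.exp_pos _
  have hEne : ∀ t, E t ≠ 0 := fun t => (hEpos t).ne'
  refine ⟨?_, ?_, ?_, ?_⟩
  · intro t
    rw [hp1, hp2]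
    field_simp [hq1ne t, hEne t]
  · intro t
    rw [hp1, hp2, hr2]
    field_simp [hq1ne t, hq2ne t, hEne t, hr10, hk1]
  · intro t
    have hr1' : r1 = fun t => r10 * Real.exp ((-2 * k0) * ∫ s in (0:ℝ)..t, q1 s) := by
      funext u
      rw [hr1, hE]
      rw [← Real.exp_neg, ← Real.exp_nat_mul]
      push_cast
      ring_nf
    have hint : HasDerivAt (fun u => ∫ s in (0:ℝ)..u, q1 s) (q1 t) t := by
      exact intervalIntegral.integral_hasDerivAt_right
        (hq1.continuous.intervalIntegrable 0 t)
        (hq1.continuous.stronglyMeasurableAtFilter _ _)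
        hq1.continuous.continuousAt
    have hd : HasDerivAt r1 (r10 * Real.exp ((-2 * k0) * ∫ s in (0:ℝ)..t, q1 s)
        * ((-2 * k0) * q1 t)) t := by
      rw [hr1']
      have := (((hint.const_mul (-2 * k0)).exp).const_mul r10)
      simpa [mul_assoc] using this
    rw [hd.deriv, hr1, hE, ← Real.exp_neg, ← Real.exp_nat_mul]
    have h2 : ((2:ℕ):ℝ) * -(k0 * ∫ s in (0:ℝ)..t, q1 s)
        = (-2 * k0) * ∫ s in (0:ℝ)..t, q1 s := by push_cast; ring
    rw [h2]
    field_simp [hq1ne t, (Real.exp_pos _).ne']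
  · intro t
    rw [hp2, hr2]
    field_simp [hq1ne t, hq2ne t, hEne t]
end
end

section
/- Let p1, p2, q1, q2, r1, r2 : I → ℝ be smooth and nonvanishing on an interval I with r1' also nonvanishing, and suppose that on I: p2 = −p1 r1, 2 r1''/r1' − 3 r1'/r1 − 2 p1'/p1 = 0, p1'/p1 + p2'/p2 − 2 q1'/q1 = 0, and q1'/q1 + q2'/q2 + r2'/r2 − 2 p2'/p2 = 0. Then the functions t ↦ r1'(t)/(q1(t) r1(t)) and t ↦ q1(t) q2(t) r2(t)/p2(t)² are constant on I. -/
noncomputable section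

private lemma const_of_deriv_zero {I : Set ℝ} (hIopen : IsOpen I) (hconv : Convex ℝ I)
    {f : ℝ → ℝ} (h : ∀ t ∈ I, HasDerivAt f 0 t) :
    ∀ s ∈ I, ∀ t ∈ I, f s = f t := by
  intro s hs t ht
  refine hconv.is_const_of_fderivWithin_eq_zero
    (fun x hx => ((h x hx).differentiableAt).differentiableWithinAt)
    (fun x hx => ?_) hs ht
  rw [fderivWithin_of_isOpen hIopen hx, (h x hx).hasFDerivAt.fderiv]
  ext
  simp

/-- the differential constraints of the integrable case imply that
r₁'/(q₁r₁) and q₁q₂r₂/p₂² are constant on the interval I. -/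
theorem integrable_case_first_integrals
    (I : Set ℝ) (hIopen : IsOpen I) (hIconn : I.OrdConnected)
    (p1 p2 q1 q2 r1 r2 : ℝ → ℝ)
    (hp1 : ContDiffOn ℝ (⊤ : ℕ∞) p1 I) (hp2 : ContDiffOn ℝ (⊤ : ℕ∞) p2 I)
    (hq1 : ContDiffOn ℝ (⊤ : ℕ∞) q1 I) (hq2 : ContDiffOn ℝ (⊤ : ℕ∞) q2 I)
    (hr1 : ContDiffOn ℝ (⊤ : ℕ∞) r1 I) (hr2 : ContDiffOn ℝ (⊤ : ℕ∞) r2 I)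
    (hp1ne : ∀ t ∈ I, p1 t ≠ 0) (hp2ne : ∀ t ∈ I, p2 t ≠ 0)
    (hq1ne : ∀ t ∈ I, q1 t ≠ 0) (hq2ne : ∀ t ∈ I, q2 t ≠ 0)
    (hr1ne : ∀ t ∈ I, r1 t ≠ 0) (hr2ne : ∀ t ∈ I, r2 t ≠ 0)
    (hr1'ne : ∀ t ∈ I, deriv r1 t ≠ 0)
    (hA3 : ∀ t ∈ I, p2 t = -(p1 t * r1 t))
    (hconstrA : ∀ t ∈ I, 2 * deriv (deriv r1) t / deriv r1 t
        - 3 * deriv r1 t / r1 t - 2 * deriv p1 t / p1 t = 0)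
    (hconstrB : ∀ t ∈ I, deriv p1 t / p1 t + deriv p2 t / p2 t
        - 2 * deriv q1 t / q1 t = 0)
    (hconstrC : ∀ t ∈ I, deriv q1 t / q1 t + deriv q2 t / q2 t
        + deriv r2 t / r2 t - 2 * deriv p2 t / p2 t = 0) :
    (∀ s ∈ I, ∀ t ∈ I, deriv r1 s / (q1 s * r1 s) = deriv r1 t / (q1 t * r1 t))
    ∧ (∀ s ∈ I, ∀ t ∈ I,
        q1 s * q2 s * r2 s / (p2 s)^2 = q1 t * q2 t * r2 t / (p2 t)^2) := by
  have hconv : Convex ℝ I := hIconn.convex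
  have hr1d : ContDiffOn ℝ (⊤ : ℕ∞) (deriv r1) I :=
    ((contDiffOn_infty_iff_deriv_of_isOpen hIopen).1 hr1).2
  -- differentiability facts
  have key : ∀ (f : ℝ → ℝ), ContDiffOn ℝ (⊤ : ℕ∞) f I →
      ∀ t ∈ I, DifferentiableAt ℝ f t := by
    intro f hf t ht
    exact (hf.contDiffAt (hIopen.mem_nhds ht)).differentiableAt (by simp)
  constructor
  · -- first integral
    refine const_of_deriv_zero hIopen hconv (fun t ht => ?_) 
    have dp1 := key p1 hp1 t ht
    have dq1 := key q1 hq1 t ht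
    have dr1 := key r1 hr1 t ht
    have dr1' := key (deriv r1) hr1d t ht
    -- compute deriv p2 from hA3
    have hp2' : deriv p2 t = -(deriv p1 t * r1 t + p1 t * deriv r1 t) := by
      have heq : p2 =ᶠ[nhds t] fun s => -(p1 s * r1 s) :=
        Filter.eventually_of_mem (hIopen.mem_nhds ht) (fun s hs => hA3 s hs)
      rw [heq.deriv_eq]
      exact ((dp1.hasDerivAt.mul dr1.hasDerivAt).neg).deriv
    set a := p1 t with ha; set a' := deriv p1 t
    set b := p2 t; set b' := deriv p2 t
    set c := q1 t; set c' := deriv q1 t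
    set r := r1 t; set r' := deriv r1 t; set r'' := deriv (deriv r1) t
    have hane := hp1ne t ht
    have hcne := hq1ne t ht
    have hrne := hr1ne t ht
    have hr'ne := hr1'ne t ht
    have hbne := hp2ne t ht
    have hA := hconstrA t ht
    have hB := hconstrB t ht
    have hb : b = -(a * r) := hA3 t ht
    -- polynomial forms
    have eA : 2 * r'' * r * a = 3 * r' ^ 2 * a + 2 * a' * r' * r := by
      field_simp at hA; linarith [hA]
    have eB : a' * b * c + b' * a * c = 2 * c' * a * b := by
      field_simp at hB; linarith [hB]
    have eC' : 2 * a * r * c' = 2 * a' * r * c + a * r' * c := by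
      have := eB
      rw [hb, hp2'] at this
      have h2 : a * (2 * a * r * c' - (2 * a' * r * c + a * r' * c)) = 0 := by ring_nf; ring_nf at this; linarith
      have := mul_eq_zero.1 h2
      rcases this with h | h
      · exact absurd h hane
      · linarith
    -- key identity
    have hkey : r'' * (c * r) = r' * (c' * r + c * r') := by
      have h2 : (2 * a * r) * (r'' * (c * r) - r' * (c' * r + c * r')) = 0 := by
        have : (2 * a * r) * (r'' * (c * r) - r' * (c' * r + c * r'))
            = (c * r) * (2 * r'' * r * a - (3 * r' ^ 2 * a + 2 * a' * r' * r))
              - (r' * r) * (2 * a * r * c' - (2 * a' * r * c + a * r' * c)) := by ring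
        rw [this]
        rw [eA, eC']; ring
      have h3 : (2 * a * r) ≠ 0 := by positivity
      have := mul_eq_zero.1 h2
      rcases this with h | h
      · exact absurd h h3
      · linarith
    -- now compute the derivative of F
    have hF : HasDerivAt (fun s => deriv r1 s / (q1 s * r1 s))
        ((r'' * (c * r) - r' * (c' * r + c * r')) / (c * r) ^ 2) t := by
      exact (dr1'.hasDerivAt).div ((dq1.hasDerivAt).mul (dr1.hasDerivAt))
        (mul_ne_zero hcne hrne)
    have : (r'' * (c * r) - r' * (c' * r + c * r')) / (c * r) ^ 2 = 0 := by
      rw [hkey]; simp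
    rwa [this] at hF
  · -- second integral
    refine const_of_deriv_zero hIopen hconv (fun t ht => ?_)
    have dq1 := key q1 hq1 t ht
    have dq2 := key q2 hq2 t ht
    have dr2 := key r2 hr2 t ht
    have dp2 := key p2 hp2 t ht
    set b := p2 t; set b' := deriv p2 t
    set c := q1 t; set c' := deriv q1 t
    set d := q2 t; set d' := deriv q2 t
    set e := r2 t; set e' := deriv r2 t
    have hbne := hp2ne t ht
    have hcne := hq1ne t ht
    have hdne := hq2ne t ht
    have hene := hr2ne t ht
    have hC := hconstrC t ht
    have eC : c' * d * e * b + c * d' * e * b + c * d * e' * b = 2 * b' * c * d * e := by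
      field_simp at hC; linarith [hC]
    have hG : HasDerivAt (fun s => q1 s * q2 s * r2 s / (p2 s) ^ 2)
        ((((c' * d + c * d') * e + c * d * e') * b ^ 2
          - c * d * e * (2 * b ^ 1 * b')) / (b ^ 2) ^ 2) t := by
      exact (((dq1.hasDerivAt).mul (dq2.hasDerivAt)).mul (dr2.hasDerivAt)).div
        ((dp2.hasDerivAt).pow 2) (pow_ne_zero 2 hbne)
    have hz : (((c' * d + c * d') * e + c * d * e') * b ^ 2
          - c * d * e * (2 * b ^ 1 * b')) / (b ^ 2) ^ 2 = 0 := by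
      have : ((c' * d + c * d') * e + c * d * e') * b ^ 2
          - c * d * e * (2 * b ^ 1 * b') = b * (c' * d * e * b + c * d' * e * b + c * d * e' * b - 2 * b' * c * d * e) := by ring
      rw [this, eC]; simp
    rwa [hz] at hG
end
end

section
/- Let (ψ̃, w̃) be a smooth solution of the constant-coefficient DS system i ψ̃_t + ψ̃_xx + ψ̃_yy = |ψ̃|²ψ̃ + ψ̃ w̃, w̃_xx − w̃_yy = (|ψ̃|²)_yy (coefficients (1,1,1,1,−1,1)). Define ψ(t,x,y) = exp[(i/8)(e^{−t}x² − e^{t}y²)] ψ̃(t, e^{−t/2}x, e^{t/2}y) and w(t,x,y) = e^{4t} w̃(t, e^{−t/2}x, e^{t/2}y) + (e^{4t}/16)(e^{−t}x² + e^{t}y²). Then (ψ, w) is a solution of the variable coefficient Davey–Stewartson system i ψ_t + e^{t}ψ_xx + e^{−t}ψ_yy = |ψ|²ψ + e^{−4t}ψw, w_xx − e^{−2t}w_yy = e^{2t}(|ψ|²)_yy. -/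
noncomputable section

/-- The variable coefficient Davey–Stewartson system with coefficient functions
p₁,p₂,q₁,q₂,r₁,r₂ of t holds at the point (t,x,y):
`i ψ_t + p₁ψ_xx + p₂ψ_yy = q₁|ψ|²ψ + q₂ψw`, `w_xx + r₁w_yy = r₂(|ψ|²)_yy`. -/
def vcDSAt (p1 p2 q1 q2 r1 r2 : ℝ → ℝ) (ψ : ℝ → ℝ → ℝ → ℂ) (w : ℝ → ℝ → ℝ → ℝ)
    (t x y : ℝ) : Prop :=
  Complex.I * dt3 ψ t x y + (p1 t : ℂ) * dx3 (dx3 ψ) t x y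
      + (p2 t : ℂ) * dy3 (dy3 ψ) t x y
      = (q1 t : ℂ) * (‖ψ t x y‖)^2 * ψ t x y
        + (q2 t : ℂ) * ψ t x y * (w t x y : ℂ)
    ∧ rx3 (rx3 w) t x y + r1 t * ry3 (ry3 w) t x y
      = r2 t * ry3 (ry3 (fun t x y => (‖ψ t x y‖)^2)) t x y

/-- (ψ, w) is a solution of the vcDS system everywhere. -/
def IsVcDSSolution (p1 p2 q1 q2 r1 r2 : ℝ → ℝ)
    (ψ : ℝ → ℝ → ℝ → ℂ) (w : ℝ → ℝ → ℝ → ℝ) : Prop :=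
  ∀ t x y : ℝ, vcDSAt p1 p2 q1 q2 r1 r2 ψ w t x y

section vcdsAux

open Real Complex

variable {E' : Type*} [NormedAddCommGroup E'] [NormedSpace ℝ E']

lemma vcds_comp3 {G : ℝ × ℝ × ℝ → E'} (hG : ContDiff ℝ (⊤:ℕ∞) G)
    {c1 c2 c3 : ℝ → ℝ} {d1 d2 d3 : ℝ} {s : ℝ}
    (h1 : HasDerivAt c1 d1 s) (h2 : HasDerivAt c2 d2 s) (h3 : HasDerivAt c3 d3 s) :
    HasDerivAt (fun u => G (c1 u, c2 u, c3 u))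
      (d1 • fderiv ℝ G (c1 s, c2 s, c3 s) (1,0,0)
        + d2 • fderiv ℝ G (c1 s, c2 s, c3 s) (0,1,0)
        + d3 • fderiv ℝ G (c1 s, c2 s, c3 s) (0,0,1)) s := by
  have hγ : HasDerivAt (fun u => (c1 u, c2 u, c3 u)) (d1, d2, d3) s := h1.prodMk (h2.prodMk h3)
  have hG' := (hG.differentiable (by simp) (c1 s, c2 s, c3 s)).hasFDerivAt
  have h := hG'.comp_hasDerivAt s hγ
  convert h using 1
  · rfl
  have hv : (d1, d2, d3) = d1 • ((1:ℝ),(0:ℝ),(0:ℝ)) + d2 • ((0:ℝ),(1:ℝ),(0:ℝ))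
      + d3 • ((0:ℝ),(0:ℝ),(1:ℝ)) := by simp [Prod.ext_iff]
  rw [hv, map_add, map_add, map_smul, map_smul, map_smul]

lemma vcds_pd {G : ℝ × ℝ × ℝ → E'} (hG : ContDiff ℝ (⊤:ℕ∞) G) (v : ℝ × ℝ × ℝ) :
    ContDiff ℝ (⊤:ℕ∞) (fun p => fderiv ℝ G p v) :=
  (hG.fderiv_right (by exact_mod_cast le_top)).clm_apply contDiff_const

lemma vcds_deriv1 {G : ℝ × ℝ × ℝ → E'} (hG : ContDiff ℝ (⊤:ℕ∞) G) (t x y : ℝ) :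
    deriv (fun s => G (s, x, y)) t = fderiv ℝ G (t,x,y) (1,0,0) := by
  simpa using (vcds_comp3 hG (hasDerivAt_id t) (hasDerivAt_const t x)
    (hasDerivAt_const t y)).deriv

lemma vcds_deriv2 {G : ℝ × ℝ × ℝ → E'} (hG : ContDiff ℝ (⊤:ℕ∞) G) (t x y : ℝ) :
    deriv (fun s => G (t, s, y)) x = fderiv ℝ G (t,x,y) (0,1,0) := by
  simpa using (vcds_comp3 hG (hasDerivAt_const x t) (hasDerivAt_id x)
    (hasDerivAt_const x y)).deriv

lemma vcds_deriv3 {G : ℝ × ℝ × ℝ → E'} (hG : ContDiff ℝ (⊤:ℕ∞) G) (t x y : ℝ) :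
    deriv (fun s => G (t, x, s)) y = fderiv ℝ G (t,x,y) (0,0,1) := by
  simpa using (vcds_comp3 hG (hasDerivAt_const y t) (hasDerivAt_const y x)
    (hasDerivAt_id y)).deriv

lemma vcds_d22 {G : ℝ × ℝ × ℝ → E'} (hG : ContDiff ℝ (⊤:ℕ∞) G) (t x y : ℝ) :
    deriv (fun s => deriv (fun s' => G (t, s', y)) s) x
      = fderiv ℝ (fun p => fderiv ℝ G p (0,1,0)) (t,x,y) (0,1,0) := by
  have h : (fun s => deriv (fun s' => G (t, s', y)) s)
      = fun s => fderiv ℝ G (t,s,y) (0,1,0) := funext fun s => vcds_deriv2 hG t s y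
  rw [h]; exact vcds_deriv2 (vcds_pd hG _) t x y

lemma vcds_d33 {G : ℝ × ℝ × ℝ → E'} (hG : ContDiff ℝ (⊤:ℕ∞) G) (t x y : ℝ) :
    deriv (fun s => deriv (fun s' => G (t, x, s')) s) y
      = fderiv ℝ (fun p => fderiv ℝ G p (0,0,1)) (t,x,y) (0,0,1) := by
  have h : (fun s => deriv (fun s' => G (t, x, s')) s)
      = fun s => fderiv ℝ G (t,x,s) (0,0,1) := funext fun s => vcds_deriv3 hG t x s
  rw [h]; exact vcds_deriv3 (vcds_pd hG _) t x y

lemma vcds_abs_mul (c : ℝ) (z : ℂ) :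
    ‖Complex.exp (Complex.I * (c : ℂ)) * z‖ = ‖z‖ := by
  rw [norm_mul, Complex.norm_exp]
  simp [Complex.mul_re]

end vcdsAux
set_option maxHeartbeats 1600000 in
lemma vcds_alg (c : ℂ) (hc : c ≠ 0) (X Y E F F1 F2 F3 F33 NA W : ℂ) :
    Complex.I * (E * (Complex.I * ((-(c⁻¹^2 * X^2) - c^2*Y^2)/8) * F + F1
        + (-(c⁻¹*X)/2)*F2 + (c*Y/2)*F3))
      + c^2 * (E * (Complex.I*Complex.I*(c⁻¹^2*X/4)*(c⁻¹^2*X/4)*F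
        + Complex.I*(c⁻¹^2/4)*F + 2*Complex.I*(c⁻¹^2*X/4)*c⁻¹*F2
        + c⁻¹*c⁻¹*(NA^2*F + F*W - Complex.I*F1 - F33)))
      + c⁻¹^2 * (E * (Complex.I*Complex.I*(-(c^2*Y/4))*(-(c^2*Y/4))*F
        + Complex.I*(-(c^2/4))*F + 2*Complex.I*(-(c^2*Y/4))*c*F3 + c*c*F33))
    = NA^2*(E*F) + c⁻¹^8 * (E*F) * (c^8*W + c^8/16*(c⁻¹^2*X^2 + c^2*Y^2)) := by
  have hcd : c * c⁻¹ = 1 := mul_inv_cancel₀ hc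
  have hI : Complex.I^2 = -1 := Complex.I_sq
  linear_combination (1*E*F*NA^2 - 1*Complex.I*E*F1 + (1/2)*c⁻¹*Complex.I*X*E*F2 - (1/16)*c⁻¹^2*X^2*E*F + (1/16)*c⁻¹^2*Complex.I^2*X^2*E*F - (1/2)*c*Complex.I*Y*E*F3 + 1*c*c⁻¹*E*F*NA^2 - 1*c*c⁻¹*Complex.I*E*F1 + (1/2)*c*c⁻¹^2*Complex.I*X*E*F2 - (1/16)*c*c⁻¹^3*X^2*E*F + (1/16)*c*c⁻¹^3*Complex.I^2*X^2*E*F - (1/16)*c^2*Y^2*E*F + (1/16)*c^2*Complex.I^2*Y^2*E*F - (1/2)*c^2*c⁻¹*Complex.I*Y*E*F3 - 1*c^2*c⁻¹^2*E*F*W - (1/16)*c^2*c⁻¹^4*X^2*E*F - (1/16)*c^3*c⁻¹*Y^2*E*F + (1/16)*c^3*c⁻¹*Complex.I^2*Y^2*E*F - 1*c^3*c⁻¹^3*E*F*W - (1/16)*c^3*c⁻¹^5*X^2*E*F - (1/16)*c^4*c⁻¹^2*Y^2*E*F - 1*c^4*c⁻¹^4*E*F*W - (1/16)*c^4*c⁻¹^6*X^2*E*F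 - (1/16)*c^5*c⁻¹^3*Y^2*E*F - 1*c^5*c⁻¹^5*E*F*W - (1/16)*c^5*c⁻¹^7*X^2*E*F - (1/16)*c^6*c⁻¹^4*Y^2*E*F - 1*c^6*c⁻¹^6*E*F*W - (1/16)*c^6*c⁻¹^8*X^2*E*F - (1/16)*c^7*c⁻¹^5*Y^2*E*F - 1*c^7*c⁻¹^7*E*F*W - (1/16)*c^7*c⁻¹^9*X^2*E*F - (1/16)*c^8*c⁻¹^6*Y^2*E*F - (1/16)*c^9*c⁻¹^7*Y^2*E*F) * hcd + (-(1/16)*c⁻¹^2*X^2*E*F - (1/16)*c^2*Y^2*E*F) * hI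

lemma vcds_alg2 (u : ℝ) (hu : u ≠ 0) (W33 N33 : ℝ) :
    u^8 * (u⁻¹ * (u⁻¹ * (N33 + W33))) + u^8/16 * (u⁻¹^2 * 2)
      + -(u⁻¹^4) * (u^8 * (u * (u * W33)) + u^8/16 * (u^2 * 2))
    = u^4 * (u * (u * N33)) := by
  field_simp
  ring
set_option maxHeartbeats 3200000 in
/-- an explicit point transformation maps solutions of the
constant-coefficient DS system with coefficients (1,1,1,1,−1,1) to solutions of the
integrable vcDS system with coefficients (eᵗ, e⁻ᵗ, 1, e⁻⁴ᵗ, −e⁻²ᵗ, e²ᵗ). -/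
theorem vcds_example_equivalent_to_constant_DS
    (ψt : ℝ → ℝ → ℝ → ℂ) (wt : ℝ → ℝ → ℝ → ℝ)
    (hψt : Smooth3C ψt) (hwt : Smooth3R wt)
    (hsol : IsVcDSSolution (fun _ => 1) (fun _ => 1) (fun _ => 1) (fun _ => 1)
        (fun _ => -1) (fun _ => 1) ψt wt) :
    IsVcDSSolution
        (fun t => Real.exp t) (fun t => Real.exp (-t)) (fun _ => 1)
        (fun t => Real.exp (-4*t)) (fun t => -Real.exp (-2*t)) (fun t => Real.exp (2*t))
      (fun t x y => Complex.exp (Complex.I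
          * (((1/8) * (Real.exp (-t) * x^2 - Real.exp t * y^2) : ℝ) : ℂ))
        * ψt t (Real.exp (-t/2) * x) (Real.exp (t/2) * y))
      (fun t x y => Real.exp (4*t) * wt t (Real.exp (-t/2) * x) (Real.exp (t/2) * y)
        + (Real.exp (4*t) / 16) * (Real.exp (-t) * x^2 + Real.exp t * y^2)) := by
  intro t x y
  have hF : ContDiff ℝ (⊤:ℕ∞) (fun p : ℝ × ℝ × ℝ => ψt p.1 p.2.1 p.2.2) := hψt
  have hW : ContDiff ℝ (⊤:ℕ∞) (fun p : ℝ × ℝ × ℝ => wt p.1 p.2.1 p.2.2) := hwt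
  have hN : ContDiff ℝ (⊤:ℕ∞) (fun p : ℝ × ℝ × ℝ => ‖ψt p.1 p.2.1 p.2.2‖ ^ 2) := by
    have hrw : (fun p : ℝ × ℝ × ℝ => ‖ψt p.1 p.2.1 p.2.2‖ ^ 2)
        = fun p : ℝ × ℝ × ℝ => (ψt p.1 p.2.1 p.2.2).re ^ 2 + (ψt p.1 p.2.1 p.2.2).im ^ 2 := by
      funext p
      rw [Complex.sq_norm, Complex.normSq_apply]; ring
    rw [hrw]
    exact ((Complex.reCLM.contDiff.comp hF).pow 2).add ((Complex.imCLM.contDiff.comp hF).pow 2)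
  have hF2 : ContDiff ℝ (⊤:ℕ∞) (fun p : ℝ × ℝ × ℝ => fderiv ℝ (fun p : ℝ × ℝ × ℝ => ψt p.1 p.2.1 p.2.2) p (0,1,0)) :=
    vcds_pd hF _
  have hF3 : ContDiff ℝ (⊤:ℕ∞) (fun p : ℝ × ℝ × ℝ => fderiv ℝ (fun p : ℝ × ℝ × ℝ => ψt p.1 p.2.1 p.2.2) p (0,0,1)) :=
    vcds_pd hF _
  have hW2 : ContDiff ℝ (⊤:ℕ∞) (fun p : ℝ × ℝ × ℝ => fderiv ℝ (fun p : ℝ × ℝ × ℝ => wt p.1 p.2.1 p.2.2) p (0,1,0)) :=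
    vcds_pd hW _
  have hW3 : ContDiff ℝ (⊤:ℕ∞) (fun p : ℝ × ℝ × ℝ => fderiv ℝ (fun p : ℝ × ℝ × ℝ => wt p.1 p.2.1 p.2.2) p (0,0,1)) :=
    vcds_pd hW _
  have hN3 : ContDiff ℝ (⊤:ℕ∞) (fun p : ℝ × ℝ × ℝ => fderiv ℝ (fun p : ℝ × ℝ × ℝ => ‖ψt p.1 p.2.1 p.2.2‖ ^ 2) p (0,0,1)) :=
    vcds_pd hN _
  -- exponential identities
  have hA : Real.exp (-t/2) = (Real.exp (t/2))⁻¹ := by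
    rw [← Real.exp_neg]; congr 1; ring
  have hpt : Real.exp t = (Real.exp (t/2))^2 := by
    rw [← Real.exp_nat_mul]; congr 1; push_cast; ring
  have hmt : Real.exp (-t) = ((Real.exp (t/2))⁻¹)^2 := by
    rw [← Real.exp_neg, ← Real.exp_nat_mul]; congr 1; push_cast; ring
  have h4 : Real.exp (4*t) = (Real.exp (t/2))^8 := by
    rw [← Real.exp_nat_mul]; congr 1; push_cast; ring
  have hm4 : Real.exp (-4*t) = ((Real.exp (t/2))⁻¹)^8 := by
    rw [← Real.exp_neg, ← Real.exp_nat_mul]; congr 1; push_cast; ring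
  have h2t : Real.exp (2*t) = (Real.exp (t/2))^4 := by
    rw [← Real.exp_nat_mul]; congr 1; push_cast; ring
  have hm2t : Real.exp (-2*t) = ((Real.exp (t/2))⁻¹)^4 := by
    rw [← Real.exp_neg, ← Real.exp_nat_mul]; congr 1; push_cast; ring
  have hlinA : ∀ x' : ℝ, HasDerivAt (fun s => Real.exp (-t/2) * s) (Real.exp (-t/2)) x' :=
    fun x' => by simpa using (hasDerivAt_id x').const_mul (Real.exp (-t/2))
  have hlinB : ∀ y' : ℝ, HasDerivAt (fun s => Real.exp (t/2) * s) (Real.exp (t/2)) y' :=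
    fun y' => by simpa using (hasDerivAt_id y').const_mul (Real.exp (t/2))
  refine ⟨?_, ?_⟩
  · -- first equation
    have HX : ∀ x' : ℝ, dx3 (fun t x y => Complex.exp (Complex.I * (((1/8) * (Real.exp (-t) * x^2 - Real.exp t * y^2) : ℝ) : ℂ)) * ψt t (Real.exp (-t/2) * x) (Real.exp (t/2) * y)) t x' y =
        Complex.exp (Complex.I * (((1/8) * (Real.exp (-t) * x'^2 - Real.exp t * y^2) : ℝ) : ℂ)) *
          (Complex.I * ((Real.exp (-t) * x' / 4 : ℝ) : ℂ)
              * ψt t (Real.exp (-t/2) * x') (Real.exp (t/2) * y)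
            + ((Real.exp (-t/2) : ℝ) : ℂ) * fderiv ℝ (fun p : ℝ × ℝ × ℝ => ψt p.1 p.2.1 p.2.2) (t, Real.exp (-t/2) * x', Real.exp (t/2) * y) (0,1,0)) := by
      intro x'
      have hφ := (((hasDerivAt_pow 2 x').const_mul (Real.exp (-t))).sub_const
        (Real.exp t * y^2)).const_mul ((1:ℝ)/8)
      have hE : HasDerivAt (fun s : ℝ => Complex.exp (Complex.I *
          (((1/8) * (Real.exp (-t) * s^2 - Real.exp t * y^2) : ℝ) : ℂ))) _ x' :=
        ((hφ.ofReal_comp).const_mul Complex.I).cexp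
      have hψc : HasDerivAt
          (fun s : ℝ => ψt t (Real.exp (-t/2) * s) (Real.exp (t/2) * y)) _ x' :=
        vcds_comp3 hF (hasDerivAt_const x' t) (hlinA x') (hasDerivAt_const x' (Real.exp (t/2) * y))
      have hder : HasDerivAt (fun s : ℝ => Complex.exp (Complex.I *
          (((1/8) * (Real.exp (-t) * s^2 - Real.exp t * y^2) : ℝ) : ℂ)) *
          ψt t (Real.exp (-t/2) * s) (Real.exp (t/2) * y)) _ x' := hE.mul hψc
      show deriv (fun s : ℝ => Complex.exp (Complex.I *
          (((1/8) * (Real.exp (-t) * s^2 - Real.exp t * y^2) : ℝ) : ℂ)) *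
          ψt t (Real.exp (-t/2) * s) (Real.exp (t/2) * y)) x' = _
      rw [hder.deriv]
      simp only [Complex.real_smul]
      push_cast
      ring
    have HXX : dx3 (dx3 (fun t x y => Complex.exp (Complex.I * (((1/8) * (Real.exp (-t) * x^2 - Real.exp t * y^2) : ℝ) : ℂ)) * ψt t (Real.exp (-t/2) * x) (Real.exp (t/2) * y))) t x y = Complex.exp (Complex.I * (((1/8) * (Real.exp (-t) * x^2 - Real.exp t * y^2) : ℝ) : ℂ)) *
        (Complex.I * Complex.I * ((Real.exp (-t) * x / 4 : ℝ) : ℂ) * ((Real.exp (-t) * x / 4 : ℝ) : ℂ) * ψt t (Real.exp (-t/2) * x) (Real.exp (t/2) * y)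
          + Complex.I * ((Real.exp (-t) / 4 : ℝ) : ℂ) * ψt t (Real.exp (-t/2) * x) (Real.exp (t/2) * y)
          + 2 * Complex.I * ((Real.exp (-t) * x / 4 : ℝ) : ℂ) * ((Real.exp (-t/2) : ℝ) : ℂ) * fderiv ℝ (fun p : ℝ × ℝ × ℝ => ψt p.1 p.2.1 p.2.2) (t, Real.exp (-t/2) * x, Real.exp (t/2) * y) (0,1,0)
          + ((Real.exp (-t/2) : ℝ) : ℂ) * ((Real.exp (-t/2) : ℝ) : ℂ) * fderiv ℝ (fun p : ℝ × ℝ × ℝ => fderiv ℝ (fun p : ℝ × ℝ × ℝ => ψt p.1 p.2.1 p.2.2) p (0,1,0)) (t, Real.exp (-t/2) * x, Real.exp (t/2) * y) (0,1,0)) := by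
      show deriv (fun s => dx3 (fun t x y => Complex.exp (Complex.I * (((1/8) * (Real.exp (-t) * x^2 - Real.exp t * y^2) : ℝ) : ℂ)) * ψt t (Real.exp (-t/2) * x) (Real.exp (t/2) * y)) t s y) x = _
      rw [show (fun s => dx3 (fun t x y => Complex.exp (Complex.I * (((1/8) * (Real.exp (-t) * x^2 - Real.exp t * y^2) : ℝ) : ℂ)) * ψt t (Real.exp (-t/2) * x) (Real.exp (t/2) * y)) t s y)
          = (fun s : ℝ => Complex.exp (Complex.I *
              (((1/8) * (Real.exp (-t) * s^2 - Real.exp t * y^2) : ℝ) : ℂ)) *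
            (Complex.I * ((Real.exp (-t) * s / 4 : ℝ) : ℂ)
                * ψt t (Real.exp (-t/2) * s) (Real.exp (t/2) * y)
              + ((Real.exp (-t/2) : ℝ) : ℂ) * fderiv ℝ (fun p : ℝ × ℝ × ℝ => ψt p.1 p.2.1 p.2.2) (t, Real.exp (-t/2) * s, Real.exp (t/2) * y) (0,1,0)))
          from funext HX]
      have hφ := (((hasDerivAt_pow 2 x).const_mul (Real.exp (-t))).sub_const
        (Real.exp t * y^2)).const_mul ((1:ℝ)/8)
      have hE : HasDerivAt (fun s : ℝ => Complex.exp (Complex.I *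
          (((1/8) * (Real.exp (-t) * s^2 - Real.exp t * y^2) : ℝ) : ℂ))) _ x :=
        ((hφ.ofReal_comp).const_mul Complex.I).cexp
      have hψc : HasDerivAt
          (fun s : ℝ => ψt t (Real.exp (-t/2) * s) (Real.exp (t/2) * y)) _ x :=
        vcds_comp3 hF (hasDerivAt_const x t) (hlinA x) (hasDerivAt_const x (Real.exp (t/2) * y))
      have hc : HasDerivAt (fun s : ℝ => Complex.I * ((Real.exp (-t) * s / 4 : ℝ) : ℂ)) _ x :=
        ((((hasDerivAt_id x).const_mul (Real.exp (-t))).div_const 4).ofReal_comp).const_mul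
          Complex.I
      have hb2 : HasDerivAt (fun s : ℝ =>
          ((Real.exp (-t/2) : ℝ) : ℂ) * fderiv ℝ (fun p : ℝ × ℝ × ℝ => ψt p.1 p.2.1 p.2.2) (t, Real.exp (-t/2) * s, Real.exp (t/2) * y) (0,1,0)) _ x :=
        (vcds_comp3 hF2 (hasDerivAt_const x t) (hlinA x)
          (hasDerivAt_const x (Real.exp (t/2) * y))).const_mul ((Real.exp (-t/2) : ℝ) : ℂ)
      have hder : HasDerivAt (fun s : ℝ => Complex.exp (Complex.I *
          (((1/8) * (Real.exp (-t) * s^2 - Real.exp t * y^2) : ℝ) : ℂ)) *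
          (Complex.I * ((Real.exp (-t) * s / 4 : ℝ) : ℂ)
              * ψt t (Real.exp (-t/2) * s) (Real.exp (t/2) * y)
            + ((Real.exp (-t/2) : ℝ) : ℂ) * fderiv ℝ (fun p : ℝ × ℝ × ℝ => ψt p.1 p.2.1 p.2.2) (t, Real.exp (-t/2) * s, Real.exp (t/2) * y) (0,1,0))) _ x :=
        hE.mul ((hc.mul hψc).add hb2)
      rw [hder.deriv]
      simp only [Complex.real_smul]
      push_cast
      ring
    have HY : ∀ y' : ℝ, dy3 (fun t x y => Complex.exp (Complex.I * (((1/8) * (Real.exp (-t) * x^2 - Real.exp t * y^2) : ℝ) : ℂ)) * ψt t (Real.exp (-t/2) * x) (Real.exp (t/2) * y)) t x y' =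
        Complex.exp (Complex.I * (((1/8) * (Real.exp (-t) * x^2 - Real.exp t * y'^2) : ℝ) : ℂ)) *
          (Complex.I * ((-(Real.exp t * y' / 4) : ℝ) : ℂ)
              * ψt t (Real.exp (-t/2) * x) (Real.exp (t/2) * y')
            + ((Real.exp (t/2) : ℝ) : ℂ) * fderiv ℝ (fun p : ℝ × ℝ × ℝ => ψt p.1 p.2.1 p.2.2) (t, Real.exp (-t/2) * x, Real.exp (t/2) * y') (0,0,1)) := by
      intro y'
      have hφ := (((hasDerivAt_pow 2 y').const_mul (Real.exp t)).const_sub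
        (Real.exp (-t) * x^2)).const_mul ((1:ℝ)/8)
      have hE : HasDerivAt (fun s : ℝ => Complex.exp (Complex.I *
          (((1/8) * (Real.exp (-t) * x^2 - Real.exp t * s^2) : ℝ) : ℂ))) _ y' :=
        ((hφ.ofReal_comp).const_mul Complex.I).cexp
      have hψc : HasDerivAt
          (fun s : ℝ => ψt t (Real.exp (-t/2) * x) (Real.exp (t/2) * s)) _ y' :=
        vcds_comp3 hF (hasDerivAt_const y' t) (hasDerivAt_const y' (Real.exp (-t/2) * x))
          (hlinB y')
      have hder : HasDerivAt (fun s : ℝ => Complex.exp (Complex.I *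
          (((1/8) * (Real.exp (-t) * x^2 - Real.exp t * s^2) : ℝ) : ℂ)) *
          ψt t (Real.exp (-t/2) * x) (Real.exp (t/2) * s)) _ y' := hE.mul hψc
      show deriv (fun s : ℝ => Complex.exp (Complex.I *
          (((1/8) * (Real.exp (-t) * x^2 - Real.exp t * s^2) : ℝ) : ℂ)) *
          ψt t (Real.exp (-t/2) * x) (Real.exp (t/2) * s)) y' = _
      rw [hder.deriv]
      simp only [Complex.real_smul]
      push_cast
      ring
    have HYY : dy3 (dy3 (fun t x y => Complex.exp (Complex.I * (((1/8) * (Real.exp (-t) * x^2 - Real.exp t * y^2) : ℝ) : ℂ)) * ψt t (Real.exp (-t/2) * x) (Real.exp (t/2) * y))) t x y = Complex.exp (Complex.I * (((1/8) * (Real.exp (-t) * x^2 - Real.exp t * y^2) : ℝ) : ℂ)) *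
        (Complex.I * Complex.I * ((-(Real.exp t * y / 4) : ℝ) : ℂ) * ((-(Real.exp t * y / 4) : ℝ) : ℂ) * ψt t (Real.exp (-t/2) * x) (Real.exp (t/2) * y)
          + Complex.I * ((-(Real.exp t / 4) : ℝ) : ℂ) * ψt t (Real.exp (-t/2) * x) (Real.exp (t/2) * y)
          + 2 * Complex.I * ((-(Real.exp t * y / 4) : ℝ) : ℂ) * ((Real.exp (t/2) : ℝ) : ℂ) * fderiv ℝ (fun p : ℝ × ℝ × ℝ => ψt p.1 p.2.1 p.2.2) (t, Real.exp (-t/2) * x, Real.exp (t/2) * y) (0,0,1)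
          + ((Real.exp (t/2) : ℝ) : ℂ) * ((Real.exp (t/2) : ℝ) : ℂ) * fderiv ℝ (fun p : ℝ × ℝ × ℝ => fderiv ℝ (fun p : ℝ × ℝ × ℝ => ψt p.1 p.2.1 p.2.2) p (0,0,1)) (t, Real.exp (-t/2) * x, Real.exp (t/2) * y) (0,0,1)) := by
      show deriv (fun s => dy3 (fun t x y => Complex.exp (Complex.I * (((1/8) * (Real.exp (-t) * x^2 - Real.exp t * y^2) : ℝ) : ℂ)) * ψt t (Real.exp (-t/2) * x) (Real.exp (t/2) * y)) t x s) y = _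
      rw [show (fun s => dy3 (fun t x y => Complex.exp (Complex.I * (((1/8) * (Real.exp (-t) * x^2 - Real.exp t * y^2) : ℝ) : ℂ)) * ψt t (Real.exp (-t/2) * x) (Real.exp (t/2) * y)) t x s)
          = (fun s : ℝ => Complex.exp (Complex.I *
              (((1/8) * (Real.exp (-t) * x^2 - Real.exp t * s^2) : ℝ) : ℂ)) *
            (Complex.I * ((-(Real.exp t * s / 4) : ℝ) : ℂ)
                * ψt t (Real.exp (-t/2) * x) (Real.exp (t/2) * s)
              + ((Real.exp (t/2) : ℝ) : ℂ) * fderiv ℝ (fun p : ℝ × ℝ × ℝ => ψt p.1 p.2.1 p.2.2) (t, Real.exp (-t/2) * x, Real.exp (t/2) * s) (0,0,1)))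
          from funext HY]
      have hφ := (((hasDerivAt_pow 2 y).const_mul (Real.exp t)).const_sub
        (Real.exp (-t) * x^2)).const_mul ((1:ℝ)/8)
      have hE : HasDerivAt (fun s : ℝ => Complex.exp (Complex.I *
          (((1/8) * (Real.exp (-t) * x^2 - Real.exp t * s^2) : ℝ) : ℂ))) _ y :=
        ((hφ.ofReal_comp).const_mul Complex.I).cexp
      have hψc : HasDerivAt
          (fun s : ℝ => ψt t (Real.exp (-t/2) * x) (Real.exp (t/2) * s)) _ y :=
        vcds_comp3 hF (hasDerivAt_const y t) (hasDerivAt_const y (Real.exp (-t/2) * x))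
          (hlinB y)
      have hc : HasDerivAt (fun s : ℝ => Complex.I * ((-(Real.exp t * s / 4) : ℝ) : ℂ)) _ y :=
        (((((hasDerivAt_id y).const_mul (Real.exp t)).div_const 4).neg).ofReal_comp).const_mul
          Complex.I
      have hb2 : HasDerivAt (fun s : ℝ =>
          ((Real.exp (t/2) : ℝ) : ℂ) * fderiv ℝ (fun p : ℝ × ℝ × ℝ => ψt p.1 p.2.1 p.2.2) (t, Real.exp (-t/2) * x, Real.exp (t/2) * s) (0,0,1)) _ y :=
        (vcds_comp3 hF3 (hasDerivAt_const y t) (hasDerivAt_const y (Real.exp (-t/2) * x))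
          (hlinB y)).const_mul ((Real.exp (t/2) : ℝ) : ℂ)
      have hder : HasDerivAt (fun s : ℝ => Complex.exp (Complex.I *
          (((1/8) * (Real.exp (-t) * x^2 - Real.exp t * s^2) : ℝ) : ℂ)) *
          (Complex.I * ((-(Real.exp t * s / 4) : ℝ) : ℂ)
              * ψt t (Real.exp (-t/2) * x) (Real.exp (t/2) * s)
            + ((Real.exp (t/2) : ℝ) : ℂ) * fderiv ℝ (fun p : ℝ × ℝ × ℝ => ψt p.1 p.2.1 p.2.2) (t, Real.exp (-t/2) * x, Real.exp (t/2) * s) (0,0,1))) _ y :=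
        hE.mul ((hc.mul hψc).add hb2)
      rw [hder.deriv]
      simp only [Complex.real_smul]
      push_cast
      ring
    have HT : dt3 (fun t x y => Complex.exp (Complex.I * (((1/8) * (Real.exp (-t) * x^2 - Real.exp t * y^2) : ℝ) : ℂ)) * ψt t (Real.exp (-t/2) * x) (Real.exp (t/2) * y)) t x y = Complex.exp (Complex.I * (((1/8) * (Real.exp (-t) * x^2 - Real.exp t * y^2) : ℝ) : ℂ)) *
        (Complex.I * (((-(Real.exp (-t) * x^2) - Real.exp t * y^2) / 8 : ℝ) : ℂ) * ψt t (Real.exp (-t/2) * x) (Real.exp (t/2) * y)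
          + fderiv ℝ (fun p : ℝ × ℝ × ℝ => ψt p.1 p.2.1 p.2.2) (t, Real.exp (-t/2) * x, Real.exp (t/2) * y) (1,0,0)
          + ((-(Real.exp (-t/2) * x) / 2 : ℝ) : ℂ) * fderiv ℝ (fun p : ℝ × ℝ × ℝ => ψt p.1 p.2.1 p.2.2) (t, Real.exp (-t/2) * x, Real.exp (t/2) * y) (0,1,0)
          + ((Real.exp (t/2) * y / 2 : ℝ) : ℂ) * fderiv ℝ (fun p : ℝ × ℝ × ℝ => ψt p.1 p.2.1 p.2.2) (t, Real.exp (-t/2) * x, Real.exp (t/2) * y) (0,0,1)) := by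
      have hexpneg : HasDerivAt (fun s : ℝ => Real.exp (-s)) (-Real.exp (-t)) t := by
        simpa [Function.comp_def] using (Real.hasDerivAt_exp (-t)).comp t (hasDerivAt_neg' t)
      have hφ := ((hexpneg.mul_const (x^2)).sub
        ((Real.hasDerivAt_exp t).mul_const (y^2))).const_mul ((1:ℝ)/8)
      have hE : HasDerivAt (fun s : ℝ => Complex.exp (Complex.I *
          (((1/8) * (Real.exp (-s) * x^2 - Real.exp s * y^2) : ℝ) : ℂ))) _ t :=
        ((hφ.ofReal_comp).const_mul Complex.I).cexp
      have hsA : HasDerivAt (fun s : ℝ => -s/2) ((-1:ℝ)/2) t := (hasDerivAt_neg' t).div_const 2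
      have hsB : HasDerivAt (fun s : ℝ => s/2) ((1:ℝ)/2) t := (hasDerivAt_id t).div_const 2
      have hexpA : HasDerivAt (fun s : ℝ => Real.exp (-s/2) * x)
          (Real.exp (-t/2) * ((-1:ℝ)/2) * x) t :=
        by have := ((Real.hasDerivAt_exp (-t/2)).comp t hsA).mul_const x; exact this
      have hexpB : HasDerivAt (fun s : ℝ => Real.exp (s/2) * y)
          (Real.exp (t/2) * ((1:ℝ)/2) * y) t :=
        by have := ((Real.hasDerivAt_exp (t/2)).comp t hsB).mul_const y; exact this
      have hψc : HasDerivAt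
          (fun s : ℝ => ψt s (Real.exp (-s/2) * x) (Real.exp (s/2) * y)) _ t :=
        vcds_comp3 hF (hasDerivAt_id t) hexpA hexpB
      have hder : HasDerivAt (fun s : ℝ => Complex.exp (Complex.I *
          (((1/8) * (Real.exp (-s) * x^2 - Real.exp s * y^2) : ℝ) : ℂ)) *
          ψt s (Real.exp (-s/2) * x) (Real.exp (s/2) * y)) _ t := hE.mul hψc
      show deriv (fun s : ℝ => Complex.exp (Complex.I *
          (((1/8) * (Real.exp (-s) * x^2 - Real.exp s * y^2) : ℝ) : ℂ)) *
          ψt s (Real.exp (-s/2) * x) (Real.exp (s/2) * y)) t = _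
      rw [hder.deriv]
      simp only [Complex.real_smul, Pi.sub_apply]
      push_cast
      ring
    have e1 : dt3 ψt t (Real.exp (-t/2) * x) (Real.exp (t/2) * y) = fderiv ℝ (fun p : ℝ × ℝ × ℝ => ψt p.1 p.2.1 p.2.2) (t, Real.exp (-t/2) * x, Real.exp (t/2) * y) (1,0,0) :=
      vcds_deriv1 (G := (fun p : ℝ × ℝ × ℝ => ψt p.1 p.2.1 p.2.2)) hψt t (Real.exp (-t/2) * x) (Real.exp (t/2) * y)
    have e2 : dx3 (dx3 ψt) t (Real.exp (-t/2) * x) (Real.exp (t/2) * y) = fderiv ℝ (fun p : ℝ × ℝ × ℝ => fderiv ℝ (fun p : ℝ × ℝ × ℝ => ψt p.1 p.2.1 p.2.2) p (0,1,0)) (t, Real.exp (-t/2) * x, Real.exp (t/2) * y) (0,1,0) :=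
      vcds_d22 (G := (fun p : ℝ × ℝ × ℝ => ψt p.1 p.2.1 p.2.2)) hψt t (Real.exp (-t/2) * x) (Real.exp (t/2) * y)
    have e3 : dy3 (dy3 ψt) t (Real.exp (-t/2) * x) (Real.exp (t/2) * y) = fderiv ℝ (fun p : ℝ × ℝ × ℝ => fderiv ℝ (fun p : ℝ × ℝ × ℝ => ψt p.1 p.2.1 p.2.2) p (0,0,1)) (t, Real.exp (-t/2) * x, Real.exp (t/2) * y) (0,0,1) :=
      vcds_d33 (G := (fun p : ℝ × ℝ × ℝ => ψt p.1 p.2.1 p.2.2)) hψt t (Real.exp (-t/2) * x) (Real.exp (t/2) * y)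
    have h1 := (hsol t (Real.exp (-t/2) * x) (Real.exp (t/2) * y)).1
    rw [e1, e2, e3] at h1
    beta_reduce at h1
    push_cast at h1
    have hsub : fderiv ℝ (fun p : ℝ × ℝ × ℝ => fderiv ℝ (fun p : ℝ × ℝ × ℝ => ψt p.1 p.2.1 p.2.2) p (0,1,0)) (t, Real.exp (-t/2) * x, Real.exp (t/2) * y) (0,1,0) =
        ((‖ψt t (Real.exp (-t/2) * x) (Real.exp (t/2) * y)‖ : ℝ) : ℂ)^2 * ψt t (Real.exp (-t/2) * x) (Real.exp (t/2) * y) + ψt t (Real.exp (-t/2) * x) (Real.exp (t/2) * y) * ((wt t (Real.exp (-t/2) * x) (Real.exp (t/2) * y) : ℝ) : ℂ)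
          - Complex.I * fderiv ℝ (fun p : ℝ × ℝ × ℝ => ψt p.1 p.2.1 p.2.2) (t, Real.exp (-t/2) * x, Real.exp (t/2) * y) (1,0,0) - fderiv ℝ (fun p : ℝ × ℝ × ℝ => fderiv ℝ (fun p : ℝ × ℝ × ℝ => ψt p.1 p.2.1 p.2.2) p (0,0,1)) (t, Real.exp (-t/2) * x, Real.exp (t/2) * y) (0,0,1) := by linear_combination h1
    beta_reduce
    rw [HT, HXX, HYY, vcds_abs_mul, hsub]
    generalize hEG : Complex.exp (Complex.I
        * (((1/8) * (Real.exp (-t) * x^2 - Real.exp t * y^2) : ℝ) : ℂ)) = E0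
    rw [h4, hm4, hpt, hmt, hA]
    have hune : Real.exp (t/2) ≠ 0 := Real.exp_ne_zero _
    generalize hgen : Real.exp (t/2) = u at hune ⊢
    have huC : ((u : ℝ) : ℂ) ≠ 0 := Complex.ofReal_ne_zero.mpr hune
    push_cast
    linear_combination vcds_alg ((u : ℝ) : ℂ) huC ((x : ℝ) : ℂ) ((y : ℝ) : ℂ) E0
      (ψt t (u⁻¹ * x) (u * y))
      (fderiv ℝ (fun p : ℝ × ℝ × ℝ => ψt p.1 p.2.1 p.2.2) (t, u⁻¹ * x, u * y) (1,0,0))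
      (fderiv ℝ (fun p : ℝ × ℝ × ℝ => ψt p.1 p.2.1 p.2.2) (t, u⁻¹ * x, u * y) (0,1,0))
      (fderiv ℝ (fun p : ℝ × ℝ × ℝ => ψt p.1 p.2.1 p.2.2) (t, u⁻¹ * x, u * y) (0,0,1))
      (fderiv ℝ (fun p : ℝ × ℝ × ℝ => fderiv ℝ (fun p : ℝ × ℝ × ℝ => ψt p.1 p.2.1 p.2.2) p (0,0,1)) (t, u⁻¹ * x, u * y) (0,0,1))
      ((‖ψt t (u⁻¹ * x) (u * y)‖ : ℝ) : ℂ)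
      ((wt t (u⁻¹ * x) (u * y) : ℝ) : ℂ)
  · -- second equation
    have HWX : ∀ x' : ℝ, rx3 (fun t x y => Real.exp (4*t) * wt t (Real.exp (-t/2) * x) (Real.exp (t/2) * y) + (Real.exp (4*t) / 16) * (Real.exp (-t) * x^2 + Real.exp t * y^2)) t x' y =
        Real.exp (4*t) * (Real.exp (-t/2) *
          fderiv ℝ (fun p : ℝ × ℝ × ℝ => wt p.1 p.2.1 p.2.2) (t, Real.exp (-t/2) * x', Real.exp (t/2) * y) (0,1,0))
          + Real.exp (4*t) / 16 * (Real.exp (-t) * (2 * x')) := by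
      intro x'
      have hwc : HasDerivAt
          (fun s : ℝ => wt t (Real.exp (-t/2) * s) (Real.exp (t/2) * y)) _ x' :=
        vcds_comp3 hW (hasDerivAt_const x' t) (hlinA x') (hasDerivAt_const x' (Real.exp (t/2) * y))
      have hder : HasDerivAt (fun s : ℝ =>
          Real.exp (4*t) * wt t (Real.exp (-t/2) * s) (Real.exp (t/2) * y)
            + Real.exp (4*t) / 16 * (Real.exp (-t) * s^2 + Real.exp t * y^2)) _ x' :=
        (hwc.const_mul (Real.exp (4*t))).add
          ((((hasDerivAt_pow 2 x').const_mul (Real.exp (-t))).add_const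
            (Real.exp t * y^2)).const_mul (Real.exp (4*t) / 16))
      show deriv (fun s : ℝ =>
          Real.exp (4*t) * wt t (Real.exp (-t/2) * s) (Real.exp (t/2) * y)
            + Real.exp (4*t) / 16 * (Real.exp (-t) * s^2 + Real.exp t * y^2)) x' = _
      rw [hder.deriv]
      simp only [smul_eq_mul]
      push_cast
      ring
    have HWXX : rx3 (rx3 (fun t x y => Real.exp (4*t) * wt t (Real.exp (-t/2) * x) (Real.exp (t/2) * y) + (Real.exp (4*t) / 16) * (Real.exp (-t) * x^2 + Real.exp t * y^2))) t x y =
        Real.exp (4*t) * (Real.exp (-t/2) * (Real.exp (-t/2) * fderiv ℝ (fun p : ℝ × ℝ × ℝ => fderiv ℝ (fun p : ℝ × ℝ × ℝ => wt p.1 p.2.1 p.2.2) p (0,1,0)) (t, Real.exp (-t/2) * x, Real.exp (t/2) * y) (0,1,0)))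
          + Real.exp (4*t) / 16 * (Real.exp (-t) * 2) := by
      show deriv (fun s => rx3 (fun t x y => Real.exp (4*t) * wt t (Real.exp (-t/2) * x) (Real.exp (t/2) * y) + (Real.exp (4*t) / 16) * (Real.exp (-t) * x^2 + Real.exp t * y^2)) t s y) x = _
      rw [show (fun s => rx3 (fun t x y => Real.exp (4*t) * wt t (Real.exp (-t/2) * x) (Real.exp (t/2) * y) + (Real.exp (4*t) / 16) * (Real.exp (-t) * x^2 + Real.exp t * y^2)) t s y)
          = (fun s : ℝ => Real.exp (4*t) * (Real.exp (-t/2) *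
              fderiv ℝ (fun p : ℝ × ℝ × ℝ => wt p.1 p.2.1 p.2.2) (t, Real.exp (-t/2) * s, Real.exp (t/2) * y) (0,1,0))
            + Real.exp (4*t) / 16 * (Real.exp (-t) * (2 * s))) from funext HWX]
      have hwc : HasDerivAt (fun s : ℝ =>
          fderiv ℝ (fun p : ℝ × ℝ × ℝ => wt p.1 p.2.1 p.2.2) (t, Real.exp (-t/2) * s, Real.exp (t/2) * y) (0,1,0)) _ x :=
        vcds_comp3 hW2 (hasDerivAt_const x t) (hlinA x) (hasDerivAt_const x (Real.exp (t/2) * y))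
      have hder : HasDerivAt (fun s : ℝ => Real.exp (4*t) * (Real.exp (-t/2) *
              fderiv ℝ (fun p : ℝ × ℝ × ℝ => wt p.1 p.2.1 p.2.2) (t, Real.exp (-t/2) * s, Real.exp (t/2) * y) (0,1,0))
            + Real.exp (4*t) / 16 * (Real.exp (-t) * (2 * s))) _ x :=
        ((hwc.const_mul (Real.exp (-t/2))).const_mul (Real.exp (4*t))).add
          ((((hasDerivAt_id x).const_mul 2).const_mul (Real.exp (-t))).const_mul
            (Real.exp (4*t) / 16))
      rw [hder.deriv]
      simp only [smul_eq_mul]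
      ring
    have HWY : ∀ y' : ℝ, ry3 (fun t x y => Real.exp (4*t) * wt t (Real.exp (-t/2) * x) (Real.exp (t/2) * y) + (Real.exp (4*t) / 16) * (Real.exp (-t) * x^2 + Real.exp t * y^2)) t x y' =
        Real.exp (4*t) * (Real.exp (t/2) *
          fderiv ℝ (fun p : ℝ × ℝ × ℝ => wt p.1 p.2.1 p.2.2) (t, Real.exp (-t/2) * x, Real.exp (t/2) * y') (0,0,1))
          + Real.exp (4*t) / 16 * (Real.exp t * (2 * y')) := by
      intro y'
      have hwc : HasDerivAt
          (fun s : ℝ => wt t (Real.exp (-t/2) * x) (Real.exp (t/2) * s)) _ y' :=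
        vcds_comp3 hW (hasDerivAt_const y' t) (hasDerivAt_const y' (Real.exp (-t/2) * x))
          (hlinB y')
      have hder : HasDerivAt (fun s : ℝ =>
          Real.exp (4*t) * wt t (Real.exp (-t/2) * x) (Real.exp (t/2) * s)
            + Real.exp (4*t) / 16 * (Real.exp (-t) * x^2 + Real.exp t * s^2)) _ y' :=
        (hwc.const_mul (Real.exp (4*t))).add
          ((((hasDerivAt_pow 2 y').const_mul (Real.exp t)).const_add
            (Real.exp (-t) * x^2)).const_mul (Real.exp (4*t) / 16))
      show deriv (fun s : ℝ =>
          Real.exp (4*t) * wt t (Real.exp (-t/2) * x) (Real.exp (t/2) * s)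
            + Real.exp (4*t) / 16 * (Real.exp (-t) * x^2 + Real.exp t * s^2)) y' = _
      rw [hder.deriv]
      simp only [smul_eq_mul]
      push_cast
      ring
    have HWYY : ry3 (ry3 (fun t x y => Real.exp (4*t) * wt t (Real.exp (-t/2) * x) (Real.exp (t/2) * y) + (Real.exp (4*t) / 16) * (Real.exp (-t) * x^2 + Real.exp t * y^2))) t x y =
        Real.exp (4*t) * (Real.exp (t/2) * (Real.exp (t/2) * fderiv ℝ (fun p : ℝ × ℝ × ℝ => fderiv ℝ (fun p : ℝ × ℝ × ℝ => wt p.1 p.2.1 p.2.2) p (0,0,1)) (t, Real.exp (-t/2) * x, Real.exp (t/2) * y) (0,0,1)))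
          + Real.exp (4*t) / 16 * (Real.exp t * 2) := by
      show deriv (fun s => ry3 (fun t x y => Real.exp (4*t) * wt t (Real.exp (-t/2) * x) (Real.exp (t/2) * y) + (Real.exp (4*t) / 16) * (Real.exp (-t) * x^2 + Real.exp t * y^2)) t x s) y = _
      rw [show (fun s => ry3 (fun t x y => Real.exp (4*t) * wt t (Real.exp (-t/2) * x) (Real.exp (t/2) * y) + (Real.exp (4*t) / 16) * (Real.exp (-t) * x^2 + Real.exp t * y^2)) t x s)
          = (fun s : ℝ => Real.exp (4*t) * (Real.exp (t/2) *
              fderiv ℝ (fun p : ℝ × ℝ × ℝ => wt p.1 p.2.1 p.2.2) (t, Real.exp (-t/2) * x, Real.exp (t/2) * s) (0,0,1))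
            + Real.exp (4*t) / 16 * (Real.exp t * (2 * s))) from funext HWY]
      have hwc : HasDerivAt (fun s : ℝ =>
          fderiv ℝ (fun p : ℝ × ℝ × ℝ => wt p.1 p.2.1 p.2.2) (t, Real.exp (-t/2) * x, Real.exp (t/2) * s) (0,0,1)) _ y :=
        vcds_comp3 hW3 (hasDerivAt_const y t) (hasDerivAt_const y (Real.exp (-t/2) * x))
          (hlinB y)
      have hder : HasDerivAt (fun s : ℝ => Real.exp (4*t) * (Real.exp (t/2) *
              fderiv ℝ (fun p : ℝ × ℝ × ℝ => wt p.1 p.2.1 p.2.2) (t, Real.exp (-t/2) * x, Real.exp (t/2) * s) (0,0,1))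
            + Real.exp (4*t) / 16 * (Real.exp t * (2 * s))) _ y :=
        ((hwc.const_mul (Real.exp (t/2))).const_mul (Real.exp (4*t))).add
          ((((hasDerivAt_id y).const_mul 2).const_mul (Real.exp t)).const_mul
            (Real.exp (4*t) / 16))
      rw [hder.deriv]
      simp only [smul_eq_mul]
      ring
    have HNy : ∀ y' : ℝ, ry3 (fun t x y => (‖(fun t x y => Complex.exp (Complex.I * (((1/8) * (Real.exp (-t) * x^2 - Real.exp t * y^2) : ℝ) : ℂ)) * ψt t (Real.exp (-t/2) * x) (Real.exp (t/2) * y)) t x y‖)^2) t x y' =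
        Real.exp (t/2) * fderiv ℝ (fun p : ℝ × ℝ × ℝ => ‖ψt p.1 p.2.1 p.2.2‖ ^ 2) (t, Real.exp (-t/2) * x, Real.exp (t/2) * y') (0,0,1) := by
      intro y'
      show deriv (fun s : ℝ => (‖Complex.exp (Complex.I *
          (((1/8) * (Real.exp (-t) * x^2 - Real.exp t * s^2) : ℝ) : ℂ)) *
          ψt t (Real.exp (-t/2) * x) (Real.exp (t/2) * s)‖)^2) y' = _
      rw [show (fun s : ℝ => (‖Complex.exp (Complex.I *
          (((1/8) * (Real.exp (-t) * x^2 - Real.exp t * s^2) : ℝ) : ℂ)) *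
          ψt t (Real.exp (-t/2) * x) (Real.exp (t/2) * s)‖)^2)
          = (fun s : ℝ => (‖ψt t (Real.exp (-t/2) * x) (Real.exp (t/2) * s)‖)^2)
          from funext fun s => by rw [vcds_abs_mul]]
      have hder : HasDerivAt (fun s : ℝ =>
          (‖ψt t (Real.exp (-t/2) * x) (Real.exp (t/2) * s)‖)^2) _ y' :=
        vcds_comp3 hN (hasDerivAt_const y' t) (hasDerivAt_const y' (Real.exp (-t/2) * x))
          (hlinB y')
      rw [hder.deriv]
      simp only [smul_eq_mul]
      ring
    have HNYY : ry3 (ry3 (fun t x y => (‖(fun t x y => Complex.exp (Complex.I * (((1/8) * (Real.exp (-t) * x^2 - Real.exp t * y^2) : ℝ) : ℂ)) * ψt t (Real.exp (-t/2) * x) (Real.exp (t/2) * y)) t x y‖)^2)) t x y =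
        Real.exp (t/2) * (Real.exp (t/2) * fderiv ℝ (fun p : ℝ × ℝ × ℝ => fderiv ℝ (fun p : ℝ × ℝ × ℝ => ‖ψt p.1 p.2.1 p.2.2‖ ^ 2) p (0,0,1)) (t, Real.exp (-t/2) * x, Real.exp (t/2) * y) (0,0,1)) := by
      show deriv (fun s => ry3 (fun t x y => (‖(fun t x y => Complex.exp (Complex.I * (((1/8) * (Real.exp (-t) * x^2 - Real.exp t * y^2) : ℝ) : ℂ)) * ψt t (Real.exp (-t/2) * x) (Real.exp (t/2) * y)) t x y‖)^2) t x s) y = _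
      rw [show (fun s => ry3 (fun t x y => (‖(fun t x y => Complex.exp (Complex.I * (((1/8) * (Real.exp (-t) * x^2 - Real.exp t * y^2) : ℝ) : ℂ)) * ψt t (Real.exp (-t/2) * x) (Real.exp (t/2) * y)) t x y‖)^2) t x s)
          = (fun s : ℝ => Real.exp (t/2) *
              fderiv ℝ (fun p : ℝ × ℝ × ℝ => ‖ψt p.1 p.2.1 p.2.2‖ ^ 2) (t, Real.exp (-t/2) * x, Real.exp (t/2) * s) (0,0,1))
          from funext HNy]
      have hder : HasDerivAt (fun s : ℝ =>
          fderiv ℝ (fun p : ℝ × ℝ × ℝ => ‖ψt p.1 p.2.1 p.2.2‖ ^ 2) (t, Real.exp (-t/2) * x, Real.exp (t/2) * s) (0,0,1)) _ y :=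
        vcds_comp3 hN3 (hasDerivAt_const y t) (hasDerivAt_const y (Real.exp (-t/2) * x))
          (hlinB y)
      rw [(hder.const_mul (Real.exp (t/2))).deriv]
      simp only [smul_eq_mul]
      ring
    have e4 : rx3 (rx3 wt) t (Real.exp (-t/2) * x) (Real.exp (t/2) * y) = fderiv ℝ (fun p : ℝ × ℝ × ℝ => fderiv ℝ (fun p : ℝ × ℝ × ℝ => wt p.1 p.2.1 p.2.2) p (0,1,0)) (t, Real.exp (-t/2) * x, Real.exp (t/2) * y) (0,1,0) :=
      vcds_d22 (G := (fun p : ℝ × ℝ × ℝ => wt p.1 p.2.1 p.2.2)) hwt t (Real.exp (-t/2) * x) (Real.exp (t/2) * y)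
    have e5 : ry3 (ry3 wt) t (Real.exp (-t/2) * x) (Real.exp (t/2) * y) = fderiv ℝ (fun p : ℝ × ℝ × ℝ => fderiv ℝ (fun p : ℝ × ℝ × ℝ => wt p.1 p.2.1 p.2.2) p (0,0,1)) (t, Real.exp (-t/2) * x, Real.exp (t/2) * y) (0,0,1) :=
      vcds_d33 (G := (fun p : ℝ × ℝ × ℝ => wt p.1 p.2.1 p.2.2)) hwt t (Real.exp (-t/2) * x) (Real.exp (t/2) * y)
    have e6 : ry3 (ry3 (fun t x y => (‖ψt t x y‖)^2)) t
        (Real.exp (-t/2) * x) (Real.exp (t/2) * y) = fderiv ℝ (fun p : ℝ × ℝ × ℝ => fderiv ℝ (fun p : ℝ × ℝ × ℝ => ‖ψt p.1 p.2.1 p.2.2‖ ^ 2) p (0,0,1)) (t, Real.exp (-t/2) * x, Real.exp (t/2) * y) (0,0,1) :=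
      vcds_d33 (G := (fun p : ℝ × ℝ × ℝ => ‖ψt p.1 p.2.1 p.2.2‖ ^ 2)) hN t (Real.exp (-t/2) * x) (Real.exp (t/2) * y)
    have h2 := (hsol t (Real.exp (-t/2) * x) (Real.exp (t/2) * y)).2
    rw [e4, e5, e6] at h2
    beta_reduce at h2
    have hsub2 : fderiv ℝ (fun p : ℝ × ℝ × ℝ => fderiv ℝ (fun p : ℝ × ℝ × ℝ => wt p.1 p.2.1 p.2.2) p (0,1,0)) (t, Real.exp (-t/2) * x, Real.exp (t/2) * y) (0,1,0) = fderiv ℝ (fun p : ℝ × ℝ × ℝ => fderiv ℝ (fun p : ℝ × ℝ × ℝ => ‖ψt p.1 p.2.1 p.2.2‖ ^ 2) p (0,0,1)) (t, Real.exp (-t/2) * x, Real.exp (t/2) * y) (0,0,1) + fderiv ℝ (fun p : ℝ × ℝ × ℝ => fderiv ℝ (fun p : ℝ × ℝ × ℝ => wt p.1 p.2.1 p.2.2) p (0,0,1)) (t, Real.exp (-t/2) * x, Real.exp (t/2) * y) (0,0,1) := by linear_combination h2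
    beta_reduce
    rw [HWXX, HWYY, HNYY, hsub2]
    rw [h4, h2t, hm2t, hpt, hmt, hA]
    have hur : Real.exp (t/2) ≠ 0 := Real.exp_ne_zero _
    generalize hgen : Real.exp (t/2) = u at hur ⊢
    linear_combination vcds_alg2 u hur
      (fderiv ℝ (fun p : ℝ × ℝ × ℝ => fderiv ℝ (fun p : ℝ × ℝ × ℝ => wt p.1 p.2.1 p.2.2) p (0,0,1)) (t, u⁻¹ * x, u * y) (0,0,1))
      (fderiv ℝ (fun p : ℝ × ℝ × ℝ => fderiv ℝ (fun p : ℝ × ℝ × ℝ => ‖ψt p.1 p.2.1 p.2.2‖ ^ 2) p (0,0,1)) (t, u⁻¹ * x, u * y) (0,0,1))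
end
end

section
/- Let p1, p2, q1, q2, r1, r2 : ℝ → ℝ be smooth nonvanishing coefficient functions and let g, h, m : ℝ → ℝ be smooth with g, h nonvanishing. Set ξ(t,x,y) = h(t)x − g(t)y and ν(t) = g''/(2p1q2g) + r1h''/(2p2q2h) − r1h'p2'/(2p2²q2h) − p1'g'/(2p1²q2g). Suppose Ψ(ξ,t) (complex-valued) and Ŵ(ξ,t) (real-valued) are smooth and satisfy the reduced system: i Ψ_t + (p1h² + p2g²)Ψ_ξξ + i[((g'/g) + (h'/h))ξ − 2p1hm/g]Ψ_ξ + [−p1m²/g² + (i/2)((g'/g) + (h'/h))]Ψ = q1|Ψ|²Ψ + q2ΨŴ and (r1g² + h²)Ŵ_ξξ = r2g²(|Ψ|²)_ξξ + ν(t). Define ψ(t,x,y) = exp{i[(g'/(4p1g))x² + (h'/(4p2h))y² − (m/g)x]} Ψ(ξ(t,x,y), t) and w(t,x,y) = −(1/(4q2g))(g'/p1)'(t) x² − (1/(4q2h))(h'/p2)'(t) y² + (m'/(q2g))x + Ŵ(ξ(t,x,y), t). Then (ψ, w) is a solution of the vcDS system i ψ_t + p1ψ_xx + p2ψ_yy =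 q1|ψ|²ψ + q2ψw, w_xx + r1w_yy = r2(|ψ|²)_yy. -/
noncomputable section

/-- ξ-derivative of a complex function of (ξ,t). -/
def dXiC (F : ℝ → ℝ → ℂ) : ℝ → ℝ → ℂ := fun ξ t => deriv (fun s => F s t) ξ

/-- t-derivative of a complex function of (ξ,t). -/
def dTC (F : ℝ → ℝ → ℂ) : ℝ → ℝ → ℂ := fun ξ t => deriv (fun s => F ξ s) t

/-- ξ-derivative of a real function of (ξ,t). -/
def dXiR (F : ℝ → ℝ → ℝ) : ℝ → ℝ → ℝ := fun ξ t => deriv (fun s => F s t) ξ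


section AuxDeriv

variable {E : Type*} [NormedAddCommGroup E] [NormedSpace ℝ E]

lemma hd1 {u : ℝ × ℝ → E} (hu : ContDiff ℝ (⊤:ℕ∞) u) (a b : ℝ) :
    HasDerivAt (fun s => u (s, b)) (fderiv ℝ u (a,b) (1,0)) a := by
  have hf := (hu.differentiable (by simp) (a,b)).hasFDerivAt
  have hc : HasDerivAt (fun s : ℝ => ((s, b) : ℝ × ℝ)) ((1:ℝ),(0:ℝ)) a :=
    (hasDerivAt_id a).prodMk (hasDerivAt_const a b)
  exact hf.comp_hasDerivAt a hc

lemma hd2 {u : ℝ × ℝ → E} (hu : ContDiff ℝ (⊤:ℕ∞) u) (a b : ℝ) :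
    HasDerivAt (fun s => u (a, s)) (fderiv ℝ u (a,b) (0,1)) b := by
  have hf := (hu.differentiable (by simp) (a,b)).hasFDerivAt
  have hc : HasDerivAt (fun s : ℝ => ((a, s) : ℝ × ℝ)) ((0:ℝ),(1:ℝ)) b :=
    (hasDerivAt_const b a).prodMk (hasDerivAt_id b)
  exact hf.comp_hasDerivAt b hc

lemma hdcurve {u : ℝ × ℝ → E} (hu : ContDiff ℝ (⊤:ℕ∞) u) {c1 c2 : ℝ → ℝ} {c1' c2' s : ℝ}
    (h1 : HasDerivAt c1 c1' s) (h2 : HasDerivAt c2 c2' s) :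
    HasDerivAt (fun r => u (c1 r, c2 r))
      (c1' • fderiv ℝ u (c1 s, c2 s) (1,0) + c2' • fderiv ℝ u (c1 s, c2 s) (0,1)) s := by
  have hf := (hu.differentiable (by simp) (c1 s, c2 s)).hasFDerivAt
  have hc : HasDerivAt (fun r : ℝ => ((c1 r, c2 r) : ℝ × ℝ)) (c1', c2') s := h1.prodMk h2
  have h0 := hf.comp_hasDerivAt s hc
  have e : (c1', c2') = c1' • ((1:ℝ),(0:ℝ)) + c2' • ((0:ℝ),(1:ℝ)) := by simp
  rw [e, map_add, map_smul, map_smul] at h0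
  exact h0

lemma contDiff_partial1 {u : ℝ × ℝ → E} (hu : ContDiff ℝ (⊤:ℕ∞) u) :
    ContDiff ℝ (⊤:ℕ∞) (fun p => fderiv ℝ u p (1,0)) :=
  (ContinuousLinearMap.apply ℝ E ((1:ℝ),(0:ℝ))).contDiff.comp
    (hu.fderiv_right (by exact_mod_cast le_top))

end AuxDeriv
set_option maxHeartbeats 2000000 in
/-- the symmetry reduction of the vcDS system by the generic nilpotent
symmetry generator Y(g)+Z(h)+W(m): any solution (Ψ,Ŵ) of the reduced system yields,
through the reduction formulas, a solution (ψ,w) of the vcDS system. -/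
theorem vcds_generic_symmetry_reduction
    (p1 p2 q1 q2 r1 r2 : ℝ → ℝ)
    (hp1 : ContDiff ℝ (⊤ : ℕ∞) p1) (hp2 : ContDiff ℝ (⊤ : ℕ∞) p2)
    (hq1 : ContDiff ℝ (⊤ : ℕ∞) q1) (hq2 : ContDiff ℝ (⊤ : ℕ∞) q2)
    (hr1 : ContDiff ℝ (⊤ : ℕ∞) r1) (hr2 : ContDiff ℝ (⊤ : ℕ∞) r2)
    (hp1ne : ∀ t : ℝ, p1 t ≠ 0) (hp2ne : ∀ t : ℝ, p2 t ≠ 0)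
    (hq1ne : ∀ t : ℝ, q1 t ≠ 0) (hq2ne : ∀ t : ℝ, q2 t ≠ 0)
    (hr1ne : ∀ t : ℝ, r1 t ≠ 0) (hr2ne : ∀ t : ℝ, r2 t ≠ 0)
    (g h m : ℝ → ℝ)
    (hg : ContDiff ℝ (⊤ : ℕ∞) g) (hh : ContDiff ℝ (⊤ : ℕ∞) h)
    (hm : ContDiff ℝ (⊤ : ℕ∞) m)
    (hgne : ∀ t : ℝ, g t ≠ 0) (hhne : ∀ t : ℝ, h t ≠ 0)
    (ν : ℝ → ℝ)
    (hν : ∀ t : ℝ, ν t =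
      deriv (deriv g) t / (2 * p1 t * q2 t * g t)
      + r1 t * deriv (deriv h) t / (2 * p2 t * q2 t * h t)
      - r1 t * deriv h t * deriv p2 t / (2 * (p2 t)^2 * q2 t * h t)
      - deriv p1 t * deriv g t / (2 * (p1 t)^2 * q2 t * g t))
    (Ψ : ℝ → ℝ → ℂ) (What : ℝ → ℝ → ℝ)
    (hΨ : ContDiff ℝ (⊤ : ℕ∞) (fun p : ℝ × ℝ => Ψ p.1 p.2))
    (hWhat : ContDiff ℝ (⊤ : ℕ∞) (fun p : ℝ × ℝ => What p.1 p.2))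
    (hred1 : ∀ ξ t : ℝ,
      Complex.I * dTC Ψ ξ t
        + ((p1 t * (h t)^2 + p2 t * (g t)^2 : ℝ) : ℂ) * dXiC (dXiC Ψ) ξ t
        + Complex.I * (((deriv g t / g t + deriv h t / h t) * ξ
              - 2 * p1 t * h t * m t / g t : ℝ) : ℂ) * dXiC Ψ ξ t
        + (((-(p1 t) * (m t)^2 / (g t)^2 : ℝ) : ℂ)
            + Complex.I * (((1/2) * (deriv g t / g t + deriv h t / h t) : ℝ) : ℂ)) * Ψ ξ t
      = (q1 t : ℂ) * (‖Ψ ξ t‖)^2 * Ψ ξ t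
        + (q2 t : ℂ) * Ψ ξ t * ((What ξ t : ℝ) : ℂ))
    (hred2 : ∀ ξ t : ℝ,
      (r1 t * (g t)^2 + (h t)^2) * dXiR (dXiR What) ξ t
        = r2 t * (g t)^2 * dXiR (dXiR (fun s t => (‖Ψ s t‖)^2)) ξ t + ν t) :
    IsVcDSSolution p1 p2 q1 q2 r1 r2
      (fun t x y => Complex.exp (Complex.I
          * (((deriv g t / (4 * p1 t * g t)) * x^2 + (deriv h t / (4 * p2 t * h t)) * y^2
              - (m t / g t) * x : ℝ) : ℂ))
        * Ψ (h t * x - g t * y) t)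
      (fun t x y =>
        -(1 / (4 * q2 t * g t)) * deriv (fun s => deriv g s / p1 s) t * x^2
        - (1 / (4 * q2 t * h t)) * deriv (fun s => deriv h s / p2 s) t * y^2
        + (deriv m t / (q2 t * g t)) * x
        + What (h t * x - g t * y) t) := by
  intro t x y
  have hg' : ContDiff ℝ (⊤ : ℕ∞) (deriv g) := (contDiff_infty_iff_deriv.mp hg).2
  have hh' : ContDiff ℝ (⊤ : ℕ∞) (deriv h) := (contDiff_infty_iff_deriv.mp hh).2
  have hdg : HasDerivAt g (deriv g t) t :=
    ((hg.differentiable (by simp)) t).hasDerivAt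
  have hdh : HasDerivAt h (deriv h t) t :=
    ((hh.differentiable (by simp)) t).hasDerivAt
  have hdm : HasDerivAt m (deriv m t) t :=
    ((hm.differentiable (by simp)) t).hasDerivAt
  have hdp1 : HasDerivAt p1 (deriv p1 t) t :=
    ((hp1.differentiable (by simp)) t).hasDerivAt
  have hdp2 : HasDerivAt p2 (deriv p2 t) t :=
    ((hp2.differentiable (by simp)) t).hasDerivAt
  have hddg : HasDerivAt (deriv g) (deriv (deriv g) t) t :=
    ((hg'.differentiable (by simp)) t).hasDerivAt
  have hddh : HasDerivAt (deriv h) (deriv (deriv h) t) t :=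
    ((hh'.differentiable (by simp)) t).hasDerivAt
  -- derivative layer for Ψ
  have hΨ1 : ∀ a b : ℝ, HasDerivAt (fun s => Ψ s b) (dXiC Ψ a b) a :=
    fun a b => (hd1 hΨ a b).differentiableAt.hasDerivAt
  have hΨsm : ContDiff ℝ (⊤:ℕ∞) (fun p : ℝ × ℝ => dXiC Ψ p.1 p.2) := by
    have e : (fun p : ℝ × ℝ => dXiC Ψ p.1 p.2)
        = fun p : ℝ × ℝ => fderiv ℝ (fun q : ℝ × ℝ => Ψ q.1 q.2) p (1,0) := by
      funext p; exact (hd1 hΨ p.1 p.2).deriv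
    rw [e]; exact contDiff_partial1 hΨ
  have hΨ2 : ∀ a b : ℝ, HasDerivAt (fun s => dXiC Ψ s b) (dXiC (dXiC Ψ) a b) a :=
    fun a b => (hd1 hΨsm a b).differentiableAt.hasDerivAt
  -- derivative layer for What
  have hW1 : ∀ a b : ℝ, HasDerivAt (fun s => What s b) (dXiR What a b) a :=
    fun a b => (hd1 hWhat a b).differentiableAt.hasDerivAt
  have hWsm : ContDiff ℝ (⊤:ℕ∞) (fun p : ℝ × ℝ => dXiR What p.1 p.2) := by
    have e : (fun p : ℝ × ℝ => dXiR What p.1 p.2)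
        = fun p : ℝ × ℝ => fderiv ℝ (fun q : ℝ × ℝ => What q.1 q.2) p (1,0) := by
      funext p; exact (hd1 hWhat p.1 p.2).deriv
    rw [e]; exact contDiff_partial1 hWhat
  have hW2 : ∀ a b : ℝ, HasDerivAt (fun s => dXiR What s b) (dXiR (dXiR What) a b) a :=
    fun a b => (hd1 hWsm a b).differentiableAt.hasDerivAt
  -- derivative layer for the squared modulus
  have hNsm0 : ContDiff ℝ (⊤:ℕ∞) (fun p : ℝ × ℝ => (‖Ψ p.1 p.2‖)^2) := by
    have e : (fun p : ℝ × ℝ => (‖Ψ p.1 p.2‖)^2)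
        = fun p : ℝ × ℝ => (Complex.reCLM (Ψ p.1 p.2)) * (Complex.reCLM (Ψ p.1 p.2))
            + (Complex.imCLM (Ψ p.1 p.2)) * (Complex.imCLM (Ψ p.1 p.2)) := by
      funext p
      rw [Complex.sq_norm, Complex.normSq_apply]; simp
    rw [e]
    exact ((Complex.reCLM.contDiff.comp hΨ).mul (Complex.reCLM.contDiff.comp hΨ)).add
      ((Complex.imCLM.contDiff.comp hΨ).mul (Complex.imCLM.contDiff.comp hΨ))
  have hN1 : ∀ a b : ℝ, HasDerivAt (fun s => (‖Ψ s b‖)^2)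
      (dXiR (fun s t => (‖Ψ s t‖)^2) a b) a :=
    fun a b => (hd1 hNsm0 a b).differentiableAt.hasDerivAt
  have hNsm : ContDiff ℝ (⊤:ℕ∞)
      (fun p : ℝ × ℝ => dXiR (fun s t => (‖Ψ s t‖)^2) p.1 p.2) := by
    have e : (fun p : ℝ × ℝ => dXiR (fun s t => (‖Ψ s t‖)^2) p.1 p.2)
        = fun p : ℝ × ℝ => fderiv ℝ (fun q : ℝ × ℝ => (‖Ψ q.1 q.2‖)^2) p (1,0) := by
      funext p; exact (hd1 hNsm0 p.1 p.2).deriv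
    rw [e]; exact contDiff_partial1 hNsm0
  have hN2 : ∀ a b : ℝ, HasDerivAt (fun s => dXiR (fun s t => (‖Ψ s t‖)^2) s b)
      (dXiR (dXiR (fun s t => (‖Ψ s t‖)^2)) a b) a :=
    fun a b => (hd1 hNsm a b).differentiableAt.hasDerivAt
  have habsE : ∀ r : ℝ, ‖Complex.exp (Complex.I * (r:ℂ))‖ = 1 := by
    intro r; rw [Complex.norm_exp]; simp
  -- instances of hypotheses at the point, before introducing abbreviations
  have hG0 := hgne t
  have hH0 := hhne t
  have hP10 := hp1ne t
  have hP20 := hp2ne t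
  have hQ20 := hq2ne t
  have hνt := hν t
  have H1 := hred1 (h t * x - g t * y) t
  have H2 := hred2 (h t * x - g t * y) t
  set PSI : ℝ → ℝ → ℝ → ℂ := fun t x y => Complex.exp (Complex.I
          * (((deriv g t / (4 * p1 t * g t)) * x^2 + (deriv h t / (4 * p2 t * h t)) * y^2
              - (m t / g t) * x : ℝ) : ℂ))
        * Ψ (h t * x - g t * y) t with hPSI
  set WF : ℝ → ℝ → ℝ → ℝ := fun t x y =>
        -(1 / (4 * q2 t * g t)) * deriv (fun s => deriv g s / p1 s) t * x^2
        - (1 / (4 * q2 t * h t)) * deriv (fun s => deriv h s / p2 s) t * y^2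
        + (deriv m t / (q2 t * g t)) * x
        + What (h t * x - g t * y) t with hWF
  set G := g t with hGs
  set H := h t with hHs
  set M := m t with hMs
  set P1 := p1 t with hP1s
  set P2 := p2 t with hP2s
  set Q2 := q2 t with hQ2s
  set dG := deriv g t with hdGs
  set dH := deriv h t with hdHs
  set dM := deriv m t with hdMs
  set dP1 := deriv p1 t with hdP1s
  set dP2 := deriv p2 t with hdP2s
  set ddG := deriv (deriv g) t with hddGs
  set ddH := deriv (deriv h) t with hddHs
  set XI := H * x - G * y with hXI
  set A := dG / (4 * P1 * G) with hA
  set B := dH / (4 * P2 * H) with hB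
  set C := M / G with hC
  set EX := Complex.exp (Complex.I * ((A * x^2 + B * y^2 - C * x : ℝ) : ℂ)) with hEXs
  set Ad := (ddG * (4 * P1 * G) - dG * (4 * dP1 * G + 4 * P1 * dG)) / (4 * P1 * G)^2 with hAd
  set Bd := (ddH * (4 * P2 * H) - dH * (4 * dP2 * H + 4 * P2 * dH)) / (4 * P2 * H)^2 with hBd
  set Cd := (dM * G - M * dG) / G^2 with hCd
  have h4PG : (4:ℝ) * P1 * G ≠ 0 :=
    mul_ne_zero (mul_ne_zero (by norm_num) hP10) hG0
  have h4PH : (4:ℝ) * P2 * H ≠ 0 :=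
    mul_ne_zero (mul_ne_zero (by norm_num) hP20) hH0
  have haval : deriv (fun s => deriv g s / p1 s) t = (ddG * P1 - dG * dP1) / P1^2 :=
    (hddg.div hdp1 hP10).deriv
  have hbval : deriv (fun s => deriv h s / p2 s) t = (ddH * P2 - dH * dP2) / P2^2 :=
    (hddh.div hdp2 hP20).deriv
  have haffx : ∀ x' : ℝ, HasDerivAt (fun s : ℝ => H * s - G * y) H x' := by
    intro x'; simpa using ((hasDerivAt_id x').const_mul H).sub_const (G * y)
  have haffy : ∀ y' : ℝ, HasDerivAt (fun s : ℝ => H * x - G * s) (-G) y' := by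
    intro y'; exact ((hasDerivAt_const y' (H * x)).sub ((hasDerivAt_id y').const_mul G)).congr_deriv (by ring)
  constructor
  · -- the Schrödinger-type equation
    -- x-derivatives
    have hphx : ∀ x' : ℝ, HasDerivAt (fun s : ℝ => A * s^2 + B * y^2 - C * s)
        (2*A*x' - C) x' := by
      intro x'
      have h0 := (((hasDerivAt_pow 2 x').const_mul A).add_const (B * y^2)).sub
        ((hasDerivAt_id x').const_mul C)
      refine h0.congr_deriv (Eq.symm ?_)
      push_cast; ring
    have hEXd : ∀ x' : ℝ, HasDerivAt
        (fun s : ℝ => Complex.exp (Complex.I * ((A * s^2 + B * y^2 - C * s : ℝ) : ℂ)))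
        (Complex.exp (Complex.I * ((A * x'^2 + B * y^2 - C * x' : ℝ) : ℂ))
          * (Complex.I * ((2*A*x' - C : ℝ) : ℂ))) x' :=
      fun x' => (((hphx x').ofReal_comp).const_mul Complex.I).cexp
    have hPsix : ∀ x' : ℝ, HasDerivAt (fun s : ℝ => Ψ (H * s - G * y) t)
        ((H : ℂ) * dXiC Ψ (H * x' - G * y) t) x' := by
      intro x'
      have h0 := (hΨ1 (H * x' - G * y) t).scomp x' (haffx x')
      simp only [Complex.real_smul] at h0; exact h0
    have hZ1x : ∀ x' : ℝ, HasDerivAt (fun s : ℝ => dXiC Ψ (H * s - G * y) t)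
        ((H : ℂ) * dXiC (dXiC Ψ) (H * x' - G * y) t) x' := by
      intro x'
      have h0 := (hΨ2 (H * x' - G * y) t).scomp x' (haffx x')
      simp only [Complex.real_smul] at h0; exact h0
    have hdx1 : ∀ x' : ℝ, HasDerivAt (fun s => PSI t s y)
        (Complex.exp (Complex.I * ((A * x'^2 + B * y^2 - C * x' : ℝ) : ℂ))
            * (Complex.I * ((2*A*x' - C : ℝ) : ℂ)) * Ψ (H * x' - G * y) t
          + Complex.exp (Complex.I * ((A * x'^2 + B * y^2 - C * x' : ℝ) : ℂ))
            * ((H : ℂ) * dXiC Ψ (H * x' - G * y) t)) x' :=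
      fun x' => (hEXd x').mul (hPsix x')
    set F1 : ℝ → ℂ := fun s =>
        Complex.exp (Complex.I * ((A * s^2 + B * y^2 - C * s : ℝ) : ℂ))
            * (Complex.I * ((2*A*s - C : ℝ) : ℂ)) * Ψ (H * s - G * y) t
          + Complex.exp (Complex.I * ((A * s^2 + B * y^2 - C * s : ℝ) : ℂ))
            * ((H : ℂ) * dXiC Ψ (H * s - G * y) t) with hF1
    have he1 : (fun s => dx3 PSI t s y) = F1 := funext fun x' => (hdx1 x').deriv
    have hf1 : HasDerivAt (fun s : ℝ => Complex.I * ((2*A*s - C : ℝ) : ℂ))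
        (Complex.I * ((2*A : ℝ) : ℂ)) x := by
      have hr : HasDerivAt (fun s : ℝ => 2*A*s - C) (2*A) x := by
        simpa [mul_assoc] using ((hasDerivAt_id x).const_mul (2*A)).sub_const C
      exact (hr.ofReal_comp).const_mul Complex.I
    have hF1d : HasDerivAt F1
        (EX * ((H:ℂ)^2 * dXiC (dXiC Ψ) XI t
          + Complex.I * ((2*(2*A*x - C)*H : ℝ) : ℂ) * dXiC Ψ XI t
          + (Complex.I * ((2*A : ℝ) : ℂ) - (((2*A*x - C)^2 : ℝ) : ℂ)) * Ψ XI t)) x := by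
      have hraw := (((hEXd x).mul hf1).mul (hPsix x)).add
        ((hEXd x).mul ((hZ1x x).const_mul ((H : ℂ))))
      refine hraw.congr_deriv (Eq.symm ?_)
      simp only [Pi.mul_apply, Pi.neg_apply]
      rw [← hEXs]
      push_cast
      linear_combination (-(EX * (2*(A:ℂ)*x - C)^2 * Ψ XI t)) * Complex.I_sq
    have hdxx : dx3 (dx3 PSI) t x y
        = EX * ((H:ℂ)^2 * dXiC (dXiC Ψ) XI t
          + Complex.I * ((2*(2*A*x - C)*H : ℝ) : ℂ) * dXiC Ψ XI t
          + (Complex.I * ((2*A : ℝ) : ℂ) - (((2*A*x - C)^2 : ℝ) : ℂ)) * Ψ XI t) := by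
      show deriv (fun s => dx3 PSI t s y) x = _
      rw [he1]; exact hF1d.deriv
    -- y-derivatives
    have hphy : ∀ y' : ℝ, HasDerivAt (fun s : ℝ => A * x^2 + B * s^2 - C * x)
        (2*B*y') y' := by
      intro y'
      have h0 := (((hasDerivAt_pow 2 y').const_mul B).const_add (A * x^2)).sub_const (C * x)
      refine h0.congr_deriv (Eq.symm ?_)
      push_cast; ring
    have hEYd : ∀ y' : ℝ, HasDerivAt
        (fun s : ℝ => Complex.exp (Complex.I * ((A * x^2 + B * s^2 - C * x : ℝ) : ℂ)))
        (Complex.exp (Complex.I * ((A * x^2 + B * y'^2 - C * x : ℝ) : ℂ))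
          * (Complex.I * ((2*B*y' : ℝ) : ℂ))) y' :=
      fun y' => (((hphy y').ofReal_comp).const_mul Complex.I).cexp
    have hPsiy : ∀ y' : ℝ, HasDerivAt (fun s : ℝ => Ψ (H * x - G * s) t)
        (-((G : ℂ) * dXiC Ψ (H * x - G * y') t)) y' := by
      intro y'
      have h0 := (hΨ1 (H * x - G * y') t).scomp y' (haffy y')
      simp only [Complex.real_smul, Complex.ofReal_neg, neg_mul] at h0; exact h0
    have hZ1y : ∀ y' : ℝ, HasDerivAt (fun s : ℝ => dXiC Ψ (H * x - G * s) t)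
        (-((G : ℂ) * dXiC (dXiC Ψ) (H * x - G * y') t)) y' := by
      intro y'
      have h0 := (hΨ2 (H * x - G * y') t).scomp y' (haffy y')
      simp only [Complex.real_smul, Complex.ofReal_neg, neg_mul] at h0; exact h0
    have hdy1 : ∀ y' : ℝ, HasDerivAt (fun s => PSI t x s)
        (Complex.exp (Complex.I * ((A * x^2 + B * y'^2 - C * x : ℝ) : ℂ))
            * (Complex.I * ((2*B*y' : ℝ) : ℂ)) * Ψ (H * x - G * y') t
          + Complex.exp (Complex.I * ((A * x^2 + B * y'^2 - C * x : ℝ) : ℂ))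
            * -((G : ℂ) * dXiC Ψ (H * x - G * y') t)) y' :=
      fun y' => (hEYd y').mul (hPsiy y')
    set F2 : ℝ → ℂ := fun s =>
        Complex.exp (Complex.I * ((A * x^2 + B * s^2 - C * x : ℝ) : ℂ))
            * (Complex.I * ((2*B*s : ℝ) : ℂ)) * Ψ (H * x - G * s) t
          + Complex.exp (Complex.I * ((A * x^2 + B * s^2 - C * x : ℝ) : ℂ))
            * -((G : ℂ) * dXiC Ψ (H * x - G * s) t) with hF2
    have he2 : (fun s => dy3 PSI t x s) = F2 := funext fun y' => (hdy1 y').deriv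
    have hf2 : HasDerivAt (fun s : ℝ => Complex.I * ((2*B*s : ℝ) : ℂ))
        (Complex.I * ((2*B : ℝ) : ℂ)) y := by
      have hr : HasDerivAt (fun s : ℝ => 2*B*s) (2*B) y := by
        simpa [mul_assoc] using (hasDerivAt_id y).const_mul (2*B)
      exact (hr.ofReal_comp).const_mul Complex.I
    have hF2d : HasDerivAt F2
        (EX * ((G:ℂ)^2 * dXiC (dXiC Ψ) XI t
          - Complex.I * ((2*(2*B*y)*G : ℝ) : ℂ) * dXiC Ψ XI t
          + (Complex.I * ((2*B : ℝ) : ℂ) - (((2*B*y)^2 : ℝ) : ℂ)) * Ψ XI t)) y := by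
      have hraw := (((hEYd y).mul hf2).mul (hPsiy y)).add
        ((hEYd y).mul (((hZ1y y).const_mul ((G : ℂ))).neg))
      refine hraw.congr_deriv (Eq.symm ?_)
      simp only [Pi.mul_apply, Pi.neg_apply]
      rw [← hEXs]
      push_cast
      linear_combination (-(EX * (2*(B:ℂ)*y)^2 * Ψ XI t)) * Complex.I_sq
    have hdyy : dy3 (dy3 PSI) t x y
        = EX * ((G:ℂ)^2 * dXiC (dXiC Ψ) XI t
          - Complex.I * ((2*(2*B*y)*G : ℝ) : ℂ) * dXiC Ψ XI t
          + (Complex.I * ((2*B : ℝ) : ℂ) - (((2*B*y)^2 : ℝ) : ℂ)) * Ψ XI t) := by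
      show deriv (fun s => dy3 PSI t x s) y = _
      rw [he2]; exact hF2d.deriv
    -- t-derivative
    have hA' : HasDerivAt (fun s => deriv g s / (4 * p1 s * g s)) Ad t :=
      hddg.div ((hdp1.const_mul 4).mul hdg) h4PG
    have hB' : HasDerivAt (fun s => deriv h s / (4 * p2 s * h s)) Bd t :=
      hddh.div ((hdp2.const_mul 4).mul hdh) h4PH
    have hC' : HasDerivAt (fun s => m s / g s) Cd t := hdm.div hdg hG0
    have hphT : HasDerivAt (fun s => deriv g s / (4 * p1 s * g s) * x^2
        + deriv h s / (4 * p2 s * h s) * y^2 - m s / g s * x)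
        (Ad * x^2 + Bd * y^2 - Cd * x) t :=
      ((hA'.mul_const (x^2)).add (hB'.mul_const (y^2))).sub (hC'.mul_const x)
    have hEXt : HasDerivAt (fun s => Complex.exp (Complex.I
        * ((deriv g s / (4 * p1 s * g s) * x^2 + deriv h s / (4 * p2 s * h s) * y^2
            - m s / g s * x : ℝ) : ℂ)))
        (EX * (Complex.I * ((Ad * x^2 + Bd * y^2 - Cd * x : ℝ) : ℂ))) t :=
      ((hphT.ofReal_comp).const_mul Complex.I).cexp
    have hc1 : HasDerivAt (fun s => h s * x - g s * y) (dH * x - dG * y) t :=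
      (hdh.mul_const x).sub (hdg.mul_const y)
    have e1 : fderiv ℝ (fun p : ℝ × ℝ => Ψ p.1 p.2) (h t * x - g t * y, t) ((1:ℝ),(0:ℝ))
        = dXiC Ψ XI t := ((hd1 hΨ (h t * x - g t * y) t).deriv).symm
    have e2 : fderiv ℝ (fun p : ℝ × ℝ => Ψ p.1 p.2) (h t * x - g t * y, t) ((0:ℝ),(1:ℝ))
        = dTC Ψ XI t := ((hd2 hΨ (h t * x - g t * y) t).deriv).symm
    have hcurve : HasDerivAt (fun s => Ψ (h s * x - g s * y) s)
        ((dH * x - dG * y) • dXiC Ψ XI t + (1:ℝ) • dTC Ψ XI t) t := by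
      have h0 := hdcurve hΨ hc1 (hasDerivAt_id t)
      simp only [id_eq] at h0
      rw [e1, e2] at h0
      exact h0
    have hdtv : dt3 PSI t x y
        = EX * (Complex.I * ((Ad * x^2 + Bd * y^2 - Cd * x : ℝ) : ℂ)) * Ψ XI t
          + EX * ((dH * x - dG * y) • dXiC Ψ XI t + (1:ℝ) • dTC Ψ XI t) :=
      (hEXt.mul hcurve).deriv
    simp only [Complex.real_smul, one_smul] at hdtv
    have hIdt : Complex.I * dt3 PSI t x y
        = EX * (Complex.I * (((dH * x - dG * y : ℝ) : ℂ) * dXiC Ψ XI t + dTC Ψ XI t))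
          - EX * ((Ad * x^2 + Bd * y^2 - Cd * x : ℝ) : ℂ) * Ψ XI t := by
      rw [hdtv]
      linear_combination (EX * ((Ad * x^2 + Bd * y^2 - Cd * x : ℝ) : ℂ) * Ψ XI t)
        * Complex.I_sq
    -- modulus and the w-value
    have habs1 : ‖PSI t x y‖ = ‖Ψ XI t‖ := by
      rw [show PSI t x y = EX * Ψ XI t from rfl, norm_mul, hEXs, habsE, one_mul]
    have hwv : WF t x y = -(1/(4*Q2*G)) * ((ddG*P1 - dG*dP1)/P1^2) * x^2
        - (1/(4*Q2*H)) * ((ddH*P2 - dH*dP2)/P2^2) * y^2 + dM/(Q2*G)*x + What XI t := by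
      rw [show WF t x y = -(1/(4*Q2*G)) * deriv (fun s => deriv g s / p1 s) t * x^2
        - (1/(4*Q2*H)) * deriv (fun s => deriv h s / p2 s) t * y^2
        + dM/(Q2*G)*x + What XI t from rfl, haval, hbval]
    -- coefficient identities
    have C1 : dH*x - dG*y + P1*(2*(2*A*x - C)*H) - P2*(2*(2*B*y)*G)
        = (dG/G + dH/H) * XI - 2*P1*H*M/G := by
      rw [hA, hB, hC, hXI]; field_simp; ring
    have C3 : P1*(2*A) + P2*(2*B) = 1/2*(dG/G + dH/H) := by
      rw [hA, hB]; field_simp; ring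
    have C2 : -(Ad*x^2 + Bd*y^2 - Cd*x) - P1*(2*A*x - C)^2 - P2*(2*B*y)^2
        = -P1*M^2/G^2 + Q2*(-(1/(4*Q2*G)) * ((ddG*P1 - dG*dP1)/P1^2) * x^2
            - (1/(4*Q2*H)) * ((ddH*P2 - dH*dP2)/P2^2) * y^2 + dM/(Q2*G)*x) := by
      rw [hAd, hBd, hCd, hA, hB, hC]; field_simp; ring
    have C1c := congrArg (Complex.ofReal) C1
    have C2c := congrArg (Complex.ofReal) C2
    have C3c := congrArg (Complex.ofReal) C3
    rw [hIdt, hdxx, hdyy, habs1, hwv, show PSI t x y = EX * Ψ XI t from rfl]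
    push_cast at C1c C2c C3c H1 ⊢
    linear_combination EX * H1 + (Complex.I * EX * dXiC Ψ XI t) * C1c
      + (EX * Ψ XI t) * C2c + (Complex.I * EX * Ψ XI t) * C3c
  · -- the constraint equation
    set DA := deriv (fun s => deriv g s / p1 s) t with hDA
    set DB := deriv (fun s => deriv h s / p2 s) t with hDB
    have hwx : ∀ x' : ℝ, HasDerivAt (fun s => WF t s y)
        (-(1/(4*Q2*G)) * DA * (2*x') + dM/(Q2*G) + dXiR What (H*x' - G*y) t * H) x' := by
      intro x'
      have t1 : HasDerivAt (fun s : ℝ => -(1/(4*Q2*G)) * DA * s^2)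
          (-(1/(4*Q2*G)) * DA * (2*x')) x' := by
        refine ((hasDerivAt_pow 2 x').const_mul (-(1/(4*Q2*G)) * DA)).congr_deriv (Eq.symm ?_)
        push_cast; ring
      have t3 : HasDerivAt (fun s : ℝ => dM/(Q2*G) * s) (dM/(Q2*G)) x' := by
        simpa using (hasDerivAt_id x').const_mul (dM/(Q2*G))
      have t4 : HasDerivAt (fun s : ℝ => What (H*s - G*y) t)
          (dXiR What (H*x' - G*y) t * H) x' :=
        ((hW1 (H*x' - G*y) t).comp x' (haffx x') :)
      exact ((t1.sub_const ((1/(4*Q2*H)) * DB * y^2)).add t3).add t4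
    have he3 : (fun s => rx3 WF t s y)
        = fun s => -(1/(4*Q2*G)) * DA * (2*s) + dM/(Q2*G) + dXiR What (H*s - G*y) t * H :=
      funext fun x' => (hwx x').deriv
    have h3 : HasDerivAt (fun s => -(1/(4*Q2*G)) * DA * (2*s) + dM/(Q2*G)
        + dXiR What (H*s - G*y) t * H)
        (-(1/(4*Q2*G)) * DA * 2 + dXiR (dXiR What) XI t * H * H) x := by
      have t1 : HasDerivAt (fun s : ℝ => -(1/(4*Q2*G)) * DA * (2*s))
          (-(1/(4*Q2*G)) * DA * 2) x := by
        refine (((hasDerivAt_id x).const_mul 2).const_mul (-(1/(4*Q2*G)) * DA)).congr_deriv (Eq.symm ?_)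
        ring
      have t4 : HasDerivAt (fun s : ℝ => dXiR What (H*s - G*y) t * H)
          (dXiR (dXiR What) XI t * H * H) x :=
        ((hW2 (H*x - G*y) t).comp x (haffx x)).mul_const H
      exact (t1.add_const (dM/(Q2*G))).add t4
    have hwxx : rx3 (rx3 WF) t x y
        = -(1/(4*Q2*G)) * DA * 2 + dXiR (dXiR What) XI t * H * H := by
      show deriv (fun s => rx3 WF t s y) x = _
      rw [he3]; exact h3.deriv
    have hwy : ∀ y' : ℝ, HasDerivAt (fun s => WF t x s)
        (0 - (1/(4*Q2*H)) * DB * (2*y') + dXiR What (H*x - G*y') t * (-G)) y' := by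
      intro y'
      have t2 : HasDerivAt (fun s : ℝ => (1/(4*Q2*H)) * DB * s^2)
          ((1/(4*Q2*H)) * DB * (2*y')) y' := by
        refine ((hasDerivAt_pow 2 y').const_mul ((1/(4*Q2*H)) * DB)).congr_deriv (Eq.symm ?_)
        push_cast; ring
      have t4 : HasDerivAt (fun s : ℝ => What (H*x - G*s) t)
          (dXiR What (H*x - G*y') t * (-G)) y' :=
        ((hW1 (H*x - G*y') t).comp y' (haffy y') :)
      exact (((hasDerivAt_const y' (-(1/(4*Q2*G)) * DA * x^2)).sub t2).add_const
        (dM/(Q2*G)*x)).add t4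
    have he4 : (fun s => ry3 WF t x s)
        = fun s => 0 - (1/(4*Q2*H)) * DB * (2*s) + dXiR What (H*x - G*s) t * (-G) :=
      funext fun y' => (hwy y').deriv
    have h4 : HasDerivAt (fun s => 0 - (1/(4*Q2*H)) * DB * (2*s)
        + dXiR What (H*x - G*s) t * (-G))
        (0 - (1/(4*Q2*H)) * DB * 2 + dXiR (dXiR What) XI t * (-G) * (-G)) y := by
      have t2 : HasDerivAt (fun s : ℝ => (1/(4*Q2*H)) * DB * (2*s))
          ((1/(4*Q2*H)) * DB * 2) y := by
        refine (((hasDerivAt_id y).const_mul 2).const_mul ((1/(4*Q2*H)) * DB)).congr_deriv (Eq.symm ?_)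
        ring
      have t4 : HasDerivAt (fun s : ℝ => dXiR What (H*x - G*s) t * (-G))
          (dXiR (dXiR What) XI t * (-G) * (-G)) y :=
        ((hW2 (H*x - G*y) t).comp y (haffy y)).mul_const (-G)
      exact ((hasDerivAt_const y (0:ℝ)).sub t2).add t4
    have hwyy : ry3 (ry3 WF) t x y
        = 0 - (1/(4*Q2*H)) * DB * 2 + dXiR (dXiR What) XI t * (-G) * (-G) := by
      show deriv (fun s => ry3 WF t x s) y = _
      rw [he4]; exact h4.deriv
    have hP2N : ∀ y' : ℝ, (‖PSI t x y'‖)^2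
        = (fun s t => (‖Ψ s t‖)^2) (H*x - G*y') t := by
      intro y'
      rw [show PSI t x y' = Complex.exp (Complex.I
          * ((A * x^2 + B * y'^2 - C * x : ℝ) : ℂ)) * Ψ (H*x - G*y') t from rfl,
        norm_mul, habsE, one_mul]
    have hN1' : ∀ y' : ℝ, HasDerivAt (fun s => (‖PSI t x s‖)^2)
        (dXiR (fun s t => (‖Ψ s t‖)^2) (H*x - G*y') t * (-G)) y' := by
      intro y'
      have hcomp := (hN1 (H*x - G*y') t).comp y' (haffy y')
      exact hcomp.congr_of_eventuallyEq (Filter.Eventually.of_forall fun s => hP2N s)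
    have he5 : (fun s => ry3 (fun t x y => (‖PSI t x y‖)^2) t x s)
        = fun s => dXiR (fun s t => (‖Ψ s t‖)^2) (H*x - G*s) t * (-G) :=
      funext fun y' => (hN1' y').deriv
    have h6 : HasDerivAt
        (fun s => dXiR (fun s t => (‖Ψ s t‖)^2) (H*x - G*s) t * (-G))
        (dXiR (dXiR (fun s t => (‖Ψ s t‖)^2)) XI t * (-G) * (-G)) y :=
      ((hN2 (H*x - G*y) t).comp y (haffy y)).mul_const (-G)
    have hNyy : ry3 (ry3 (fun t x y => (‖PSI t x y‖)^2)) t x y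
        = dXiR (dXiR (fun s t => (‖Ψ s t‖)^2)) XI t * (-G) * (-G) := by
      show deriv (fun s => ry3 (fun t x y => (‖PSI t x y‖)^2) t x s) y = _
      rw [he5]; exact h6.deriv
    have hkey : -(1/(4*Q2*G)) * DA * 2 + r1 t * (0 - (1/(4*Q2*H)) * DB * 2) + ν t = 0 := by
      rw [hνt, haval, hbval]
      field_simp
      ring
    rw [hwxx, hwyy, hNyy]
    linear_combination H2 + hkey
end
end

section
/- Let α1, α2, β2 be nonzero real constants. For a smooth function τ : ℝ → ℝ define the vector field X(τ) on ℝ⁶ with coordinates (t,x,y,u,v,w) by X(τ) = τ ∂t + (τ'/2)(x ∂x + y ∂y − u ∂u − v ∂v − 2w ∂w) + Φ(v ∂u − u ∂v) + (Φ_t/β2) ∂w, where Φ(t,x,y) = −(x²/(8α1) + y²/(8α2)) τ''(t) and Φ_t = −(x²/(8α1) + y²/(8α2)) τ'''(t). Then for all smooth τ1, τ2 : ℝ → ℝ, the Lie bracket of vector fields satisfies [X(τ1), X(τ2)] = X(τ1 τ2' − τ2 τ1'). -/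
noncomputable section

/-- ℝ⁶ with coordinates (t,x,y,u,v,w). -/
abbrev E6 : Type := ℝ × ℝ × ℝ × ℝ × ℝ × ℝ

/-- The Lie bracket of two smooth vector fields on ℝ⁶:
[V,W](p) = DW(p)·V(p) − DV(p)·W(p). -/
def lieBracket (V W : E6 → E6) : E6 → E6 :=
  fun p => fderiv ℝ W p (V p) - fderiv ℝ V p (W p)

/-- The time-reparametrization symmetry generator X(τ) of the constant-coefficient
Davey–Stewartson system (coefficients p₁ = α₁, p₂ = α₂, q₂ = β₂, real form ψ = u+iv):
X(τ) = τ∂t + (τ'/2)(x∂x + y∂y − u∂u − v∂v − 2w∂w) + Φ(v∂u − u∂v) + (Φ_t/β₂)∂w,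
where Φ = −(x²/(8α₁) + y²/(8α₂))τ''. -/
def Xgen (α1 α2 β2 : ℝ) (τ : ℝ → ℝ) : E6 → E6 := fun p =>
  ( τ p.1,
    (deriv τ p.1 / 2) * p.2.1,
    (deriv τ p.1 / 2) * p.2.2.1,
    -(deriv τ p.1 / 2) * p.2.2.2.1
      + (-(p.2.1^2 / (8*α1) + p.2.2.1^2 / (8*α2)) * deriv (deriv τ) p.1) * p.2.2.2.2.1,
    -(-(p.2.1^2 / (8*α1) + p.2.2.1^2 / (8*α2)) * deriv (deriv τ) p.1) * p.2.2.2.1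
      - (deriv τ p.1 / 2) * p.2.2.2.2.1,
    -(deriv τ p.1) * p.2.2.2.2.2
      + (-(p.2.1^2 / (8*α1) + p.2.2.1^2 / (8*α2)) * deriv (deriv (deriv τ)) p.1) / β2 )

/-- The symmetry generator
Y(g) = g∂x − (xg'/(2α₁))(v∂u − u∂v) − (xg''/(2β₂α₁))∂w. -/
def Ygen (α1 β2 : ℝ) (g : ℝ → ℝ) : E6 → E6 := fun p =>
  ( 0,
    g p.1,
    0,
    -(p.2.1 * deriv g p.1 / (2*α1)) * p.2.2.2.2.1,
    (p.2.1 * deriv g p.1 / (2*α1)) * p.2.2.2.1,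
    -(p.2.1 * deriv (deriv g) p.1 / (2*β2*α1)) )

/-- The symmetry generator W(m) = m(v∂u − u∂v) + (m'/β₂)∂w. -/
def Wgen (β2 : ℝ) (m : ℝ → ℝ) : E6 → E6 := fun p =>
  ( 0, 0, 0,
    m p.1 * p.2.2.2.2.1,
    -(m p.1) * p.2.2.2.1,
    deriv m p.1 / β2 )

/-! ### Auxiliary material -/

open ContinuousLinearMap in
def Lt : E6 →L[ℝ] ℝ := fst ℝ ℝ _
open ContinuousLinearMap in
def Lx : E6 →L[ℝ] ℝ := (fst ℝ ℝ _).comp (snd ℝ ℝ _)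
open ContinuousLinearMap in
def Ly : E6 →L[ℝ] ℝ := (fst ℝ ℝ _).comp ((snd ℝ ℝ _).comp (snd ℝ ℝ _))
open ContinuousLinearMap in
def Lu : E6 →L[ℝ] ℝ := (fst ℝ ℝ _).comp ((snd ℝ ℝ _).comp ((snd ℝ ℝ _).comp (snd ℝ ℝ _)))
open ContinuousLinearMap in
def Lv : E6 →L[ℝ] ℝ :=
  (fst ℝ ℝ _).comp ((snd ℝ ℝ _).comp ((snd ℝ ℝ _).comp ((snd ℝ ℝ _).comp (snd ℝ ℝ _))))
open ContinuousLinearMap in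
def Lw : E6 →L[ℝ] ℝ :=
  (snd ℝ ℝ _).comp ((snd ℝ ℝ _).comp ((snd ℝ ℝ _).comp ((snd ℝ ℝ _).comp (snd ℝ ℝ _))))

@[simp] lemma Lt_apply (q : E6) : Lt q = q.1 := rfl
@[simp] lemma Lx_apply (q : E6) : Lx q = q.2.1 := rfl
@[simp] lemma Ly_apply (q : E6) : Ly q = q.2.2.1 := rfl
@[simp] lemma Lu_apply (q : E6) : Lu q = q.2.2.2.1 := rfl
@[simp] lemma Lv_apply (q : E6) : Lv q = q.2.2.2.2.1 := rfl
@[simp] lemma Lw_apply (q : E6) : Lw q = q.2.2.2.2.2 := rfl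

lemma smooth_deriv {τ : ℝ → ℝ} (hτ : ContDiff ℝ (⊤ : ℕ∞) τ) : ContDiff ℝ (⊤ : ℕ∞) (deriv τ) :=
  hτ.iterate_deriv 1

lemma diff_of_smooth {τ : ℝ → ℝ} (hτ : ContDiff ℝ (⊤ : ℕ∞) τ) : Differentiable ℝ τ :=
  hτ.differentiable (by norm_num)

set_option maxHeartbeats 4000000

lemma Xgen_fderiv_apply (α1 α2 β2 : ℝ) (τ : ℝ → ℝ) (hτ : ContDiff ℝ (⊤ : ℕ∞) τ)
    (p q : E6) :
    fderiv ℝ (Xgen α1 α2 β2 τ) p q =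
    ( deriv τ p.1 * q.1,
      deriv (deriv τ) p.1 / 2 * p.2.1 * q.1 + deriv τ p.1 / 2 * q.2.1,
      deriv (deriv τ) p.1 / 2 * p.2.2.1 * q.1 + deriv τ p.1 / 2 * q.2.2.1,
      (-(deriv (deriv τ) p.1 / 2) * p.2.2.2.1
        + (-(p.2.1^2 / (8*α1) + p.2.2.1^2 / (8*α2)) * deriv (deriv (deriv τ)) p.1)
            * p.2.2.2.2.1) * q.1
        + (-(p.2.1 / (4*α1)) * deriv (deriv τ) p.1 * p.2.2.2.2.1) * q.2.1
        + (-(p.2.2.1 / (4*α2)) * deriv (deriv τ) p.1 * p.2.2.2.2.1) * q.2.2.1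
        + (-(deriv τ p.1 / 2)) * q.2.2.2.1
        + (-(p.2.1^2 / (8*α1) + p.2.2.1^2 / (8*α2)) * deriv (deriv τ) p.1) * q.2.2.2.2.1,
      ((p.2.1^2 / (8*α1) + p.2.2.1^2 / (8*α2)) * deriv (deriv (deriv τ)) p.1 * p.2.2.2.1
        - deriv (deriv τ) p.1 / 2 * p.2.2.2.2.1) * q.1
        + (p.2.1 / (4*α1) * deriv (deriv τ) p.1 * p.2.2.2.1) * q.2.1
        + (p.2.2.1 / (4*α2) * deriv (deriv τ) p.1 * p.2.2.2.1) * q.2.2.1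
        + ((p.2.1^2 / (8*α1) + p.2.2.1^2 / (8*α2)) * deriv (deriv τ) p.1) * q.2.2.2.1
        + (-(deriv τ p.1 / 2)) * q.2.2.2.2.1,
      (-(deriv (deriv τ) p.1) * p.2.2.2.2.2
        + (-(p.2.1^2 / (8*α1) + p.2.2.1^2 / (8*α2))
            * deriv (deriv (deriv (deriv τ))) p.1) / β2) * q.1
        + (-(p.2.1 / (4*α1)) * deriv (deriv (deriv τ)) p.1 / β2) * q.2.1
        + (-(p.2.2.1 / (4*α2)) * deriv (deriv (deriv τ)) p.1 / β2) * q.2.2.1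
        + (-(deriv τ p.1)) * q.2.2.2.2.2 ) := by
  have hτ1 := smooth_deriv hτ
  have hτ2 := smooth_deriv hτ1
  have hτ3 := smooth_deriv hτ2
  have hd0 : HasDerivAt τ (deriv τ p.1) p.1 := (diff_of_smooth hτ p.1).hasDerivAt
  have hd1 : HasDerivAt (deriv τ) (deriv (deriv τ) p.1) p.1 := (diff_of_smooth hτ1 p.1).hasDerivAt
  have hd2 : HasDerivAt (deriv (deriv τ)) (deriv (deriv (deriv τ)) p.1) p.1 :=
    (diff_of_smooth hτ2 p.1).hasDerivAt
  have hd3 : HasDerivAt (deriv (deriv (deriv τ))) (deriv (deriv (deriv (deriv τ))) p.1) p.1 :=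
    (diff_of_smooth hτ3 p.1).hasDerivAt
  have hFt : HasFDerivAt (fun q : E6 => q.1) (Lt : E6 →L[ℝ] ℝ) p := hasFDerivAt_fst
  have hFx : HasFDerivAt (fun q : E6 => q.2.1) (Lx : E6 →L[ℝ] ℝ) p := Lx.hasFDerivAt
  have hFy : HasFDerivAt (fun q : E6 => q.2.2.1) (Ly : E6 →L[ℝ] ℝ) p := Ly.hasFDerivAt
  have hFu : HasFDerivAt (fun q : E6 => q.2.2.2.1) (Lu : E6 →L[ℝ] ℝ) p := Lu.hasFDerivAt
  have hFv : HasFDerivAt (fun q : E6 => q.2.2.2.2.1) (Lv : E6 →L[ℝ] ℝ) p := Lv.hasFDerivAt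
  have hFw : HasFDerivAt (fun q : E6 => q.2.2.2.2.2) (Lw : E6 →L[ℝ] ℝ) p := Lw.hasFDerivAt
  have hft0 : HasFDerivAt (fun q : E6 => τ q.1) (deriv τ p.1 • Lt) p :=
    hd0.comp_hasFDerivAt p hFt
  have hft1 : HasFDerivAt (fun q : E6 => deriv τ q.1) (deriv (deriv τ) p.1 • Lt) p :=
    hd1.comp_hasFDerivAt p hFt
  have hft2 : HasFDerivAt (fun q : E6 => deriv (deriv τ) q.1)
      (deriv (deriv (deriv τ)) p.1 • Lt) p := hd2.comp_hasFDerivAt p hFt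
  have hft3 : HasFDerivAt (fun q : E6 => deriv (deriv (deriv τ)) q.1)
      (deriv (deriv (deriv (deriv τ))) p.1 • Lt) p := hd3.comp_hasFDerivAt p hFt
  have eX : Xgen α1 α2 β2 τ = fun q : E6 =>
      ( τ q.1,
        (2:ℝ)⁻¹ * deriv τ q.1 * q.2.1,
        (2:ℝ)⁻¹ * deriv τ q.1 * q.2.2.1,
        -((2:ℝ)⁻¹ * deriv τ q.1) * q.2.2.2.1
          + -((8*α1)⁻¹ * (q.2.1 * q.2.1) + (8*α2)⁻¹ * (q.2.2.1 * q.2.2.1))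
              * deriv (deriv τ) q.1 * q.2.2.2.2.1,
        -(-((8*α1)⁻¹ * (q.2.1 * q.2.1) + (8*α2)⁻¹ * (q.2.2.1 * q.2.2.1))
              * deriv (deriv τ) q.1) * q.2.2.2.1
          - (2:ℝ)⁻¹ * deriv τ q.1 * q.2.2.2.2.1,
        -(deriv τ q.1) * q.2.2.2.2.2
          + β2⁻¹ * (-((8*α1)⁻¹ * (q.2.1 * q.2.1) + (8*α2)⁻¹ * (q.2.2.1 * q.2.2.1))
              * deriv (deriv (deriv τ)) q.1) ) := by
    funext q
    simp only [Xgen, Prod.mk.injEq]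
    and_intros <;> first | trivial | ring
  have hA : HasFDerivAt
      (fun q : E6 => -((8*α1)⁻¹ * (q.2.1 * q.2.1) + (8*α2)⁻¹ * (q.2.2.1 * q.2.2.1))) _ p :=
    (((hFx.mul hFx).const_mul ((8*α1)⁻¹)).add ((hFy.mul hFy).const_mul ((8*α2)⁻¹))).neg
  have hPhi : HasFDerivAt
      (fun q : E6 => -((8*α1)⁻¹ * (q.2.1 * q.2.1) + (8*α2)⁻¹ * (q.2.2.1 * q.2.2.1))
        * deriv (deriv τ) q.1) _ p := hA.mul hft2
  have h2 : HasFDerivAt (fun q : E6 => (2:ℝ)⁻¹ * deriv τ q.1 * q.2.1) _ p :=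
    (hft1.const_mul ((2:ℝ)⁻¹)).mul hFx
  have h3 : HasFDerivAt (fun q : E6 => (2:ℝ)⁻¹ * deriv τ q.1 * q.2.2.1) _ p :=
    (hft1.const_mul ((2:ℝ)⁻¹)).mul hFy
  have h4 : HasFDerivAt (fun q : E6 => -((2:ℝ)⁻¹ * deriv τ q.1) * q.2.2.2.1
      + -((8*α1)⁻¹ * (q.2.1 * q.2.1) + (8*α2)⁻¹ * (q.2.2.1 * q.2.2.1))
          * deriv (deriv τ) q.1 * q.2.2.2.2.1) _ p :=
    (((hft1.const_mul ((2:ℝ)⁻¹)).neg).mul hFu).add (hPhi.mul hFv)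
  have h5 : HasFDerivAt (fun q : E6 =>
      -(-((8*α1)⁻¹ * (q.2.1 * q.2.1) + (8*α2)⁻¹ * (q.2.2.1 * q.2.2.1))
          * deriv (deriv τ) q.1) * q.2.2.2.1
      - (2:ℝ)⁻¹ * deriv τ q.1 * q.2.2.2.2.1) _ p :=
    ((hPhi.neg).mul hFu).sub ((hft1.const_mul ((2:ℝ)⁻¹)).mul hFv)
  have h6 : HasFDerivAt (fun q : E6 => -(deriv τ q.1) * q.2.2.2.2.2
      + β2⁻¹ * (-((8*α1)⁻¹ * (q.2.1 * q.2.1) + (8*α2)⁻¹ * (q.2.2.1 * q.2.2.1))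
          * deriv (deriv (deriv τ)) q.1)) _ p :=
    ((hft1.neg).mul hFw).add ((hA.mul hft3).const_mul (β2⁻¹))
  rw [eX]
  have H : HasFDerivAt (fun q : E6 =>
      ( τ q.1,
        (2:ℝ)⁻¹ * deriv τ q.1 * q.2.1,
        (2:ℝ)⁻¹ * deriv τ q.1 * q.2.2.1,
        -((2:ℝ)⁻¹ * deriv τ q.1) * q.2.2.2.1
          + -((8*α1)⁻¹ * (q.2.1 * q.2.1) + (8*α2)⁻¹ * (q.2.2.1 * q.2.2.1))
              * deriv (deriv τ) q.1 * q.2.2.2.2.1,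
        -(-((8*α1)⁻¹ * (q.2.1 * q.2.1) + (8*α2)⁻¹ * (q.2.2.1 * q.2.2.1))
              * deriv (deriv τ) q.1) * q.2.2.2.1
          - (2:ℝ)⁻¹ * deriv τ q.1 * q.2.2.2.2.1,
        -(deriv τ q.1) * q.2.2.2.2.2
          + β2⁻¹ * (-((8*α1)⁻¹ * (q.2.1 * q.2.1) + (8*α2)⁻¹ * (q.2.2.1 * q.2.2.1))
              * deriv (deriv (deriv τ)) q.1) )) _ p :=
    hft0.prodMk (h2.prodMk (h3.prodMk (h4.prodMk (h5.prodMk h6))))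
  rw [H.fderiv]
  simp only [ContinuousLinearMap.prod_apply, ContinuousLinearMap.add_apply,
    ContinuousLinearMap.sub_apply, ContinuousLinearMap.smul_apply, ContinuousLinearMap.neg_apply,
    ContinuousLinearMap.coe_smul', Pi.smul_apply,
    Lt_apply, Lx_apply, Ly_apply, Lu_apply, Lv_apply, Lw_apply, smul_eq_mul,
    Prod.mk.injEq, Pi.neg_apply]
  refine ⟨trivial, by field_simp; ring, by field_simp; ring, by field_simp; ring,
    by field_simp; ring, by field_simp; ring⟩

/-- the Virasoro commutation relation [X(τ₁), X(τ₂)] = X(τ₁τ₂' − τ₂τ₁'). -/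
theorem virasoro_commutation
    (α1 α2 β2 : ℝ) (hα1 : α1 ≠ 0) (hα2 : α2 ≠ 0) (hβ2 : β2 ≠ 0)
    (τ1 τ2 : ℝ → ℝ)
    (hτ1 : ContDiff ℝ (⊤ : ℕ∞) τ1) (hτ2 : ContDiff ℝ (⊤ : ℕ∞) τ2) :
    lieBracket (Xgen α1 α2 β2 τ1) (Xgen α1 α2 β2 τ2)
      = Xgen α1 α2 β2 (fun t => τ1 t * deriv τ2 t - τ2 t * deriv τ1 t) := by
  have hτ1' := smooth_deriv hτ1
  have hτ1'' := smooth_deriv hτ1'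
  have hτ1''' := smooth_deriv hτ1''
  have hτ2' := smooth_deriv hτ2
  have hτ2'' := smooth_deriv hτ2'
  have hτ2''' := smooth_deriv hτ2''
  have D1 := diff_of_smooth hτ1
  have D1' := diff_of_smooth hτ1'
  have D1'' := diff_of_smooth hτ1''
  have D1''' := diff_of_smooth hτ1'''
  have D2 := diff_of_smooth hτ2
  have D2' := diff_of_smooth hτ2'
  have D2'' := diff_of_smooth hτ2''
  have D2''' := diff_of_smooth hτ2'''
  have Hd1 : deriv (fun t => τ1 t * deriv τ2 t - τ2 t * deriv τ1 t)
      = fun t => τ1 t * deriv (deriv τ2) t - τ2 t * deriv (deriv τ1) t := by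
    funext t
    rw [deriv_fun_sub ((D1 t).fun_mul (D2' t)) ((D2 t).fun_mul (D1' t)),
      deriv_fun_mul (D1 t) (D2' t), deriv_fun_mul (D2 t) (D1' t)]
    ring
  have Hd2 : deriv (fun t => τ1 t * deriv (deriv τ2) t - τ2 t * deriv (deriv τ1) t)
      = fun t => τ1 t * deriv (deriv (deriv τ2)) t + deriv τ1 t * deriv (deriv τ2) t
        - τ2 t * deriv (deriv (deriv τ1)) t - deriv τ2 t * deriv (deriv τ1) t := by
    funext t
    rw [deriv_fun_sub ((D1 t).fun_mul (D2'' t)) ((D2 t).fun_mul (D1'' t)),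
      deriv_fun_mul (D1 t) (D2'' t), deriv_fun_mul (D2 t) (D1'' t)]
    ring
  have Hd3 : deriv (fun t => τ1 t * deriv (deriv (deriv τ2)) t
        + deriv τ1 t * deriv (deriv τ2) t
        - τ2 t * deriv (deriv (deriv τ1)) t - deriv τ2 t * deriv (deriv τ1) t)
      = fun t => τ1 t * deriv (deriv (deriv (deriv τ2))) t
        + 2 * deriv τ1 t * deriv (deriv (deriv τ2)) t
        - τ2 t * deriv (deriv (deriv (deriv τ1))) t
        - 2 * deriv τ2 t * deriv (deriv (deriv τ1)) t := by
    funext t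
    rw [deriv_fun_sub (((((D1 t).fun_mul (D2''' t))).fun_add ((D1' t).fun_mul (D2'' t))).fun_sub
        ((D2 t).fun_mul (D1''' t))) ((D2' t).fun_mul (D1'' t)),
      deriv_fun_sub ((((D1 t).fun_mul (D2''' t))).fun_add ((D1' t).fun_mul (D2'' t))) ((D2 t).fun_mul (D1''' t)),
      deriv_fun_add ((D1 t).fun_mul (D2''' t)) ((D1' t).fun_mul (D2'' t)),
      deriv_fun_mul (D1 t) (D2''' t), deriv_fun_mul (D1' t) (D2'' t),
      deriv_fun_mul (D2 t) (D1''' t), deriv_fun_mul (D2' t) (D1'' t)]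
    ring
  funext p
  simp only [lieBracket]
  rw [Xgen_fderiv_apply α1 α2 β2 τ2 hτ2 p _, Xgen_fderiv_apply α1 α2 β2 τ1 hτ1 p _]
  simp only [Xgen]
  rw [Hd1, Hd2, Hd3]
  simp only [Prod.mk_sub_mk, Prod.mk.injEq]
  refine ⟨by ring, by field_simp; ring, by field_simp; ring, ?_, ?_, ?_⟩ <;>
    · field_simp
      ring
end
end

section
/- Let α1, α2, β2 be nonzero real constants. For smooth functions τ, g : ℝ → ℝ define the vector fields on ℝ⁶ with coordinates (t,x,y,u,v,w): X(τ) = τ ∂t + (τ'/2)(x ∂x + y ∂y − u ∂u − v ∂v − 2w ∂w) + Φ(v ∂u − u ∂v) + (Φ_t/β2) ∂w with Φ(t,x,y) = −(x²/(8α1) + y²/(8α2)) τ''(t) and Φ_t = −(x²/(8α1) + y²/(8α2)) τ'''(t), and Y(g) = g ∂x − (x g'/(2α1))(v ∂u − u ∂v) − (x g''/(2β2 α1)) ∂w. Then the Lie bracket satisfies [X(τ), Y(g)] = Y(τ g' − (1/2) g τ'). -/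
noncomputable section

lemma hcf (c : ℝ → ℝ) (p : E6) (hc : DifferentiableAt ℝ c p.1) :
    HasFDerivAt (fun q : E6 => c q.1)
      ((ContinuousLinearMap.smulRight (1 : ℝ →L[ℝ] ℝ) (deriv c p.1)).comp
        (ContinuousLinearMap.fst ℝ ℝ (ℝ×ℝ×ℝ×ℝ×ℝ))) p :=
  (hc.hasDerivAt.hasFDerivAt).comp p hasFDerivAt_fst

lemma HasFDerivAt.divc {f : E6 → ℝ} {f' : E6 →L[ℝ] ℝ} {p : E6}
    (h : HasFDerivAt f f' p) (c : ℝ) : HasFDerivAt (fun q => f q / c) (c⁻¹ • f') p := by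
  simpa [div_eq_mul_inv, smul_smul, mul_comm] using h.mul_const c⁻¹

/-- the Kac–Moody–Virasoro commutation relation
[X(τ), Y(g)] = Y(τg' − (1/2)gτ'). -/
theorem X_Y_commutation
    (α1 α2 β2 : ℝ) (hα1 : α1 ≠ 0) (hα2 : α2 ≠ 0) (hβ2 : β2 ≠ 0)
    (τ g : ℝ → ℝ)
    (hτ : ContDiff ℝ (⊤ : ℕ∞) τ) (hg : ContDiff ℝ (⊤ : ℕ∞) g) :
    lieBracket (Xgen α1 α2 β2 τ) (Ygen α1 β2 g)
      = Ygen α1 β2 (fun t => τ t * deriv g t - (1/2) * g t * deriv τ t) := by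
  have hτ1C : ContDiff ℝ (⊤:ℕ∞) (deriv τ) := (contDiff_infty_iff_deriv.mp hτ).2
  have hτ2C : ContDiff ℝ (⊤:ℕ∞) (deriv (deriv τ)) := (contDiff_infty_iff_deriv.mp hτ1C).2
  have hτ3C : ContDiff ℝ (⊤:ℕ∞) (deriv (deriv (deriv τ))) := (contDiff_infty_iff_deriv.mp hτ2C).2
  have hg1C : ContDiff ℝ (⊤:ℕ∞) (deriv g) := (contDiff_infty_iff_deriv.mp hg).2
  have hg2C : ContDiff ℝ (⊤:ℕ∞) (deriv (deriv g)) := (contDiff_infty_iff_deriv.mp hg1C).2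
  have hg3C : ContDiff ℝ (⊤:ℕ∞) (deriv (deriv (deriv g))) := (contDiff_infty_iff_deriv.mp hg2C).2
  have dτ : ∀ s, HasDerivAt τ (deriv τ s) s := fun s => (hτ.differentiable (by simp) s).hasDerivAt
  have dτ1 : ∀ s, HasDerivAt (deriv τ) (deriv (deriv τ) s) s :=
    fun s => (hτ1C.differentiable (by simp) s).hasDerivAt
  have dτ2 : ∀ s, HasDerivAt (deriv (deriv τ)) (deriv (deriv (deriv τ)) s) s :=
    fun s => (hτ2C.differentiable (by simp) s).hasDerivAt
  have dg : ∀ s, HasDerivAt g (deriv g s) s := fun s => (hg.differentiable (by simp) s).hasDerivAt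
  have dg1 : ∀ s, HasDerivAt (deriv g) (deriv (deriv g) s) s :=
    fun s => (hg1C.differentiable (by simp) s).hasDerivAt
  have dg2 : ∀ s, HasDerivAt (deriv (deriv g)) (deriv (deriv (deriv g)) s) s :=
    fun s => (hg2C.differentiable (by simp) s).hasDerivAt
  -- derivative of the new coefficient function
  have hd1 : deriv (fun t => τ t * deriv g t - 1/2 * g t * deriv τ t)
      = fun s => (deriv τ s * deriv g s + τ s * deriv (deriv g) s)
          - ((1/2 * deriv g s) * deriv τ s + (1/2 * g s) * deriv (deriv τ) s) := by
    funext s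
    exact (((dτ s).mul (dg1 s)).sub (((dg s).const_mul (1/2)).mul (dτ1 s))).deriv
  have hd2 : deriv (deriv (fun t => τ t * deriv g t - 1/2 * g t * deriv τ t))
      = fun s => ((deriv (deriv τ) s * deriv g s + deriv τ s * deriv (deriv g) s)
            + (deriv τ s * deriv (deriv g) s + τ s * deriv (deriv (deriv g)) s))
          - (((1/2 * deriv (deriv g) s) * deriv τ s + (1/2 * deriv g s) * deriv (deriv τ) s)
            + ((1/2 * deriv g s) * deriv (deriv τ) s + (1/2 * g s) * deriv (deriv (deriv τ)) s)) := by
    rw [hd1]; funext s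
    exact ((((dτ1 s).mul (dg1 s)).add (((dτ s)).mul (dg2 s))).sub
      ((((dg1 s).const_mul (1/2)).mul (dτ1 s)).add (((dg s).const_mul (1/2)).mul (dτ2 s)))).deriv
  funext p
  have hPx : HasFDerivAt (fun q : E6 => q.2.1)
      ((ContinuousLinearMap.fst ℝ ℝ (ℝ×ℝ×ℝ×ℝ)).comp (ContinuousLinearMap.snd ℝ ℝ (ℝ×ℝ×ℝ×ℝ×ℝ))) p :=
    hasFDerivAt_fst.comp p hasFDerivAt_snd
  have hPy : HasFDerivAt (fun q : E6 => q.2.2.1)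
      ((ContinuousLinearMap.fst ℝ ℝ (ℝ×ℝ×ℝ)).comp ((ContinuousLinearMap.snd ℝ ℝ (ℝ×ℝ×ℝ×ℝ)).comp
        (ContinuousLinearMap.snd ℝ ℝ (ℝ×ℝ×ℝ×ℝ×ℝ)))) p :=
    hasFDerivAt_fst.comp p (hasFDerivAt_snd.comp p hasFDerivAt_snd)
  have hPu : HasFDerivAt (fun q : E6 => q.2.2.2.1)
      ((ContinuousLinearMap.fst ℝ ℝ (ℝ×ℝ)).comp ((ContinuousLinearMap.snd ℝ ℝ (ℝ×ℝ×ℝ)).comp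
        ((ContinuousLinearMap.snd ℝ ℝ (ℝ×ℝ×ℝ×ℝ)).comp (ContinuousLinearMap.snd ℝ ℝ (ℝ×ℝ×ℝ×ℝ×ℝ))))) p :=
    hasFDerivAt_fst.comp p (hasFDerivAt_snd.comp p (hasFDerivAt_snd.comp p hasFDerivAt_snd))
  have hPv : HasFDerivAt (fun q : E6 => q.2.2.2.2.1)
      ((ContinuousLinearMap.fst ℝ ℝ ℝ).comp ((ContinuousLinearMap.snd ℝ ℝ (ℝ×ℝ)).comp
        ((ContinuousLinearMap.snd ℝ ℝ (ℝ×ℝ×ℝ)).comp ((ContinuousLinearMap.snd ℝ ℝ (ℝ×ℝ×ℝ×ℝ)).comp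
          (ContinuousLinearMap.snd ℝ ℝ (ℝ×ℝ×ℝ×ℝ×ℝ)))))) p :=
    hasFDerivAt_fst.comp p (hasFDerivAt_snd.comp p (hasFDerivAt_snd.comp p
      (hasFDerivAt_snd.comp p hasFDerivAt_snd)))
  have hPw : HasFDerivAt (fun q : E6 => q.2.2.2.2.2)
      ((ContinuousLinearMap.snd ℝ ℝ ℝ).comp ((ContinuousLinearMap.snd ℝ ℝ (ℝ×ℝ)).comp
        ((ContinuousLinearMap.snd ℝ ℝ (ℝ×ℝ×ℝ)).comp ((ContinuousLinearMap.snd ℝ ℝ (ℝ×ℝ×ℝ×ℝ)).comp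
          (ContinuousLinearMap.snd ℝ ℝ (ℝ×ℝ×ℝ×ℝ×ℝ)))))) p :=
    hasFDerivAt_snd.comp p (hasFDerivAt_snd.comp p (hasFDerivAt_snd.comp p
      (hasFDerivAt_snd.comp p hasFDerivAt_snd)))
  have hτf := hcf τ p (hτ.differentiable (by simp)).differentiableAt
  have hτ1f := hcf (deriv τ) p (hτ1C.differentiable (by simp)).differentiableAt
  have hτ2f := hcf (deriv (deriv τ)) p (hτ2C.differentiable (by simp)).differentiableAt
  have hτ3f := hcf (deriv (deriv (deriv τ))) p (hτ3C.differentiable (by simp)).differentiableAt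
  have hgf := hcf g p (hg.differentiable (by simp)).differentiableAt
  have hg1f := hcf (deriv g) p (hg1C.differentiable (by simp)).differentiableAt
  have hg2f := hcf (deriv (deriv g)) p (hg2C.differentiable (by simp)).differentiableAt
  -- the sum-of-squares factor
  have hx2 : HasFDerivAt (fun q : E6 => q.2.1^2) _ p :=
    (hPx.mul hPx).congr_of_eventuallyEq (Filter.Eventually.of_forall fun q => pow_two q.2.1)
  have hy2 : HasFDerivAt (fun q : E6 => q.2.2.1^2) _ p :=
    (hPy.mul hPy).congr_of_eventuallyEq (Filter.Eventually.of_forall fun q => pow_two q.2.2.1)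
  have hS : HasFDerivAt (fun q : E6 => q.2.1^2 / (8*α1) + q.2.2.1^2 / (8*α2)) _ p :=
    (hx2.divc (8*α1)).add (hy2.divc (8*α2))
  have hY : HasFDerivAt (Ygen α1 β2 g) _ p :=
    HasFDerivAt.prodMk (hasFDerivAt_const (0:ℝ) p) (hgf.prodMk (HasFDerivAt.prodMk (hasFDerivAt_const (0:ℝ) p)
      (((((hPx.mul hg1f).divc (2*α1)).neg).mul hPv).prodMk
        ((((hPx.mul hg1f).divc (2*α1)).mul hPu).prodMk
          (((hPx.mul hg2f).divc (2*β2*α1)).neg)))))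
  have hX : HasFDerivAt (Xgen α1 α2 β2 τ) _ p :=
    hτf.prodMk (((hτ1f.divc 2).mul hPx |>.prodMk
      (((hτ1f.divc 2).mul hPy).prodMk
        (((((hτ1f.divc 2).neg).mul hPu).add ((hS.neg.mul hτ2f).mul hPv)).prodMk
          (((((hS.neg.mul hτ2f).neg).mul hPu).sub ((hτ1f.divc 2).mul hPv)).prodMk
            (((hτ1f.neg).mul hPw).add ((hS.neg.mul hτ3f).divc β2)))))))
  show fderiv ℝ (Ygen α1 β2 g) p (Xgen α1 α2 β2 τ p)
      - fderiv ℝ (Xgen α1 α2 β2 τ) p (Ygen α1 β2 g p) = _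
  rw [hY.fderiv, hX.fderiv]
  simp only [Xgen, Ygen, ContinuousLinearMap.prod_apply, ContinuousLinearMap.add_apply,
    ContinuousLinearMap.sub_apply, ContinuousLinearMap.neg_apply, ContinuousLinearMap.smul_apply,
    ContinuousLinearMap.comp_apply, ContinuousLinearMap.smulRight_apply,
    ContinuousLinearMap.one_apply, ContinuousLinearMap.coe_fst', ContinuousLinearMap.coe_snd',
    smul_eq_mul, Pi.mul_apply, Pi.neg_apply, Pi.add_apply, Pi.sub_apply,
    ContinuousLinearMap.zero_apply, Prod.mk_sub_mk, Prod.mk.injEq]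
  rw [hd2, hd1]
  refine ⟨by ring, by ring, by ring, by ring, by ring, by ring⟩
end
end
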